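/- arXiv:2010.07714 — 5 statements merged into one kernel-verified Lean document; each statement's English description precedes it below -/
import Mathlib

section
/- Let (X,T,μ) be a system with exponential decay of correlations for functions of bounded variation against L¹, with constants C, τ > 0. Let (B_m)_{m≥1} be a decreasing (nested) sequence of balls in X with common centre x₀, and suppose there are ε > 0 and m₀ ∈ ℕ such that μ(B_m) ≥ m^{-1}(log m)^{1+ε} for all m ≥ m₀. Then μ(H_ea) = 1, where H_ea is the set of eventually always hitting points for (B_m). -/
open MeasureTheory Filter Set

lemma evar_mono_le {f : ℝ → ℝ} (hf : Monotone f) {a b : ℝ}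
    (h0 : ∀ x, a ≤ f x) (h1 : ∀ x, f x ≤ b) :
    eVariationOn f Set.univ ≤ ENNReal.ofReal (b - a) := by
  refine iSup_le ?_
  rintro ⟨n, u, hu, -⟩
  have key : ∀ i, edist (f (u (i+1))) (f (u i)) = ENNReal.ofReal (f (u (i+1)) - f (u i)) := by
    intro i
    rw [edist_dist, Real.dist_eq, abs_of_nonneg (sub_nonneg.2 (hf (hu (Nat.le_succ i))))]
  simp only [key]
  rw [← ENNReal.ofReal_sum_of_nonneg (fun i _ => sub_nonneg.2 (hf (hu (Nat.le_succ i))))]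
  apply ENNReal.ofReal_le_ofReal
  rw [Finset.sum_range_sub (fun i => f (u i))]
  have := h1 (u n); have := h0 (u 0); linarith

lemma evar_sub_le (p q : ℝ → ℝ) (s : Set ℝ) :
    eVariationOn (fun x => p x - q x) s ≤ eVariationOn p s + eVariationOn q s := by
  refine iSup_le ?_
  rintro ⟨n, u, hu, us⟩
  calc ∑ i ∈ Finset.range n, edist (p (u (i+1)) - q (u (i+1))) (p (u i) - q (u i))
      ≤ ∑ i ∈ Finset.range n, (edist (p (u (i+1))) (p (u i)) + edist (q (u (i+1))) (q (u i))) := by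
        refine Finset.sum_le_sum fun i _ => ?_
        rw [edist_dist, edist_dist, edist_dist, ← ENNReal.ofReal_add dist_nonneg dist_nonneg]
        apply ENNReal.ofReal_le_ofReal
        simp only [Real.dist_eq]
        calc |p (u (i+1)) - q (u (i+1)) - (p (u i) - q (u i))|
            = |(p (u (i+1)) - p (u i)) - (q (u (i+1)) - q (u i))| := by ring_nf
          _ ≤ |p (u (i+1)) - p (u i)| + |q (u (i+1)) - q (u i)| := abs_sub _ _
    _ = (∑ i ∈ Finset.range n, edist (p (u (i+1))) (p (u i)))
        + ∑ i ∈ Finset.range n, edist (q (u (i+1))) (q (u i)) := Finset.sum_add_distrib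
    _ ≤ _ := add_le_add (eVariationOn.sum_le (f := p) (n := n) hu us) (eVariationOn.sum_le (f := q) (n := n) hu us)

lemma indicator_ball_decomp (x₀ : ℝ) {R : ℝ} (hR : 0 < R) (x : ℝ) :
    (Metric.ball x₀ R).indicator (fun _ => (1:ℝ)) x =
      (Set.Ioi (x₀ - R)).indicator (fun _ => (1:ℝ)) x
        - (Set.Ici (x₀ + R)).indicator (fun _ => (1:ℝ)) x := by
  rw [Real.ball_eq_Ioo x₀ R]
  by_cases hIoi : x₀ - R < x
  · by_cases hIci : x₀ + R ≤ x
    · have hno : x ∉ Set.Ioo (x₀ - R) (x₀ + R) := by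
        simp only [Set.mem_Ioo, not_and, not_lt]
        exact fun _ => hIci
      rw [Set.indicator_of_notMem hno, Set.indicator_of_mem (Set.mem_Ioi.mpr hIoi),
        Set.indicator_of_mem (Set.mem_Ici.mpr hIci)]
      ring
    · push_neg at hIci
      rw [Set.indicator_of_mem (Set.mem_Ioo.mpr ⟨hIoi, hIci⟩),
        Set.indicator_of_mem (Set.mem_Ioi.mpr hIoi),
        Set.indicator_of_notMem (by simpa using hIci)]
      ring
  · push_neg at hIoi
    have h1 : x ∉ Set.Ioo (x₀ - R) (x₀ + R) := by
      simp only [Set.mem_Ioo, not_and, not_lt]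
      intro h; linarith
    have h2 : x ∉ Set.Ici (x₀ + R) := by
      simp only [Set.mem_Ici, not_le]; linarith
    have h3 : x ∉ Set.Ioi (x₀ - R) := by simpa using hIoi
    rw [Set.indicator_of_notMem h1, Set.indicator_of_notMem h2,
      Set.indicator_of_notMem h3]
    ring

lemma indicator_upper_monotone {s : Set ℝ} (hs : ∀ x y, x ∈ s → x ≤ y → y ∈ s) :
    Monotone (s.indicator (fun _ => (1:ℝ))) := by
  intro x y hxy
  by_cases hx : x ∈ s
  · rw [Set.indicator_of_mem hx, Set.indicator_of_mem (hs x y hx hxy)]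
  · rw [Set.indicator_of_notMem hx]
    exact Set.indicator_nonneg (fun _ _ => zero_le_one) y

lemma indicator_one_nonneg (s : Set ℝ) (x : ℝ) : 0 ≤ s.indicator (fun _ => (1:ℝ)) x :=
  Set.indicator_nonneg (fun _ _ => zero_le_one) x

lemma indicator_one_le_one (s : Set ℝ) (x : ℝ) : s.indicator (fun _ => (1:ℝ)) x ≤ 1 := by
  by_cases h : x ∈ s
  · rw [Set.indicator_of_mem h]
  · rw [Set.indicator_of_notMem h]; norm_num

lemma bv_indicator_ball (x₀ : ℝ) {R : ℝ} (hR : 0 < R) :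
    eVariationOn ((Metric.ball x₀ R).indicator (fun _ => (1:ℝ))) Set.univ
      ≤ ENNReal.ofReal 2 := by
  have h1 : Monotone ((Set.Ioi (x₀ - R)).indicator (fun _ => (1:ℝ))) :=
    indicator_upper_monotone (fun x y hx hxy => lt_of_lt_of_le hx hxy)
  have h2 : Monotone ((Set.Ici (x₀ + R)).indicator (fun _ => (1:ℝ))) :=
    indicator_upper_monotone (fun x y hx hxy => le_trans hx hxy)
  have heq : (Metric.ball x₀ R).indicator (fun _ => (1:ℝ)) =
      fun x => (Set.Ioi (x₀ - R)).indicator (fun _ => (1:ℝ)) x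
        - (Set.Ici (x₀ + R)).indicator (fun _ => (1:ℝ)) x :=
    funext (indicator_ball_decomp x₀ hR)
  rw [heq]
  calc eVariationOn _ Set.univ ≤ _ + _ := evar_sub_le _ _ Set.univ
    _ ≤ ENNReal.ofReal (1 - 0) + ENNReal.ofReal (1 - 0) :=
      add_le_add
        (evar_mono_le h1 (indicator_one_nonneg _) (indicator_one_le_one _))
        (evar_mono_le h2 (indicator_one_nonneg _) (indicator_one_le_one _))
    _ ≤ ENNReal.ofReal 2 := by
      rw [← ENNReal.ofReal_add (by norm_num) (by norm_num)]; norm_num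

lemma geom_range_le {x : ℝ} (h0 : 0 ≤ x) (h1 : x < 1) (n : ℕ) :
    ∑ k ∈ Finset.range n, x ^ k ≤ (1 - x)⁻¹ := by
  rw [← tsum_geometric_of_lt_one h0 h1]
  exact Summable.sum_le_tsum (Finset.range n) (fun i _ => pow_nonneg h0 i)
    (summable_geometric_of_lt_one h0 h1)

/-- Double-sum geometric bound with nat distance `d i j = (i-j)+(j-i)`. -/
lemma double_geom_le {x : ℝ} (h0 : 0 ≤ x) (h1 : x < 1) (N : ℕ) :
    ∑ i ∈ Finset.range N, ∑ j ∈ Finset.range N, x ^ ((i - j) + (j - i)) ≤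
      N * (2 * (1 - x)⁻¹) := by
  have inner : ∀ i ∈ Finset.range N,
      ∑ j ∈ Finset.range N, x ^ ((i - j) + (j - i)) ≤ 2 * (1 - x)⁻¹ := by
    intro i hi
    rw [Finset.mem_range] at hi
    rw [Finset.range_eq_Ico, ← Finset.sum_Ico_consecutive _ (Nat.zero_le (i+1)) hi,
      ← Finset.range_eq_Ico]
    have part1 : ∑ j ∈ Finset.range (i+1), x ^ ((i - j) + (j - i)) ≤ (1 - x)⁻¹ := by
      have : ∀ j ∈ Finset.range (i+1), x ^ ((i - j) + (j - i)) = x ^ (i - j) := by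
        intro j hj
        rw [Finset.mem_range, Nat.lt_succ_iff] at hj
        rw [Nat.sub_eq_zero_of_le hj, Nat.add_zero]
      rw [Finset.sum_congr rfl this]
      have hrefl := Finset.sum_range_reflect (fun j => x ^ j) (i+1)
      have : ∑ j ∈ Finset.range (i+1), x ^ (i - j)
          = ∑ j ∈ Finset.range (i+1), x ^ j := by
        rw [← hrefl]
        apply Finset.sum_congr rfl
        intro j hj
        congr 1
      rw [this]
      exact geom_range_le h0 h1 _
    have part2 : ∑ j ∈ Finset.Ico (i+1) N, x ^ ((i - j) + (j - i)) ≤ (1 - x)⁻¹ := by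
      rw [Finset.sum_Ico_eq_sum_range]
      have hb : ∀ j ∈ Finset.range (N - (i+1)), x ^ ((i - (i+1+j)) + ((i+1+j) - i)) ≤ x ^ j := by
        intro j hj
        have : (i - (i+1+j)) + ((i+1+j) - i) = j + 1 := by omega
        rw [this, pow_succ]
        calc x ^ j * x ≤ x ^ j * 1 := by
              apply mul_le_mul_of_nonneg_left h1.le (pow_nonneg h0 j)
          _ = x ^ j := mul_one _
      calc ∑ j ∈ Finset.range (N - (i+1)), x ^ ((i - (i+1+j)) + ((i+1+j) - i))
          ≤ ∑ j ∈ Finset.range (N - (i+1)), x ^ j := Finset.sum_le_sum hb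
        _ ≤ (1 - x)⁻¹ := geom_range_le h0 h1 _
    linarith
  calc ∑ i ∈ Finset.range N, ∑ j ∈ Finset.range N, x ^ ((i - j) + (j - i))
      ≤ ∑ _i ∈ Finset.range N, (2 * (1 - x)⁻¹) := Finset.sum_le_sum inner
    _ = N * (2 * (1 - x)⁻¹) := by
      rw [Finset.sum_const, Finset.card_range, nsmul_eq_mul]

lemma integral_comp_iterate {μ : Measure ℝ} {T : ℝ → ℝ} (hT : MeasurePreserving T μ μ)
    (k : ℕ) (φ : ℝ → ℝ) (hφ : Measurable φ) :
    ∫ x, φ (T^[k] x) ∂μ = ∫ x, φ x ∂μ := by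
  conv_rhs => rw [← (hT.iterate k).map_eq]
  rw [integral_map (hT.iterate k).measurable.aemeasurable hφ.aestronglyMeasurable]

lemma key_estimate
    (μ : Measure ℝ) [IsProbabilityMeasure μ] (T : ℝ → ℝ)
    (hT : MeasurePreserving T μ μ)
    (C τ : ℝ) (hC : 0 < C) (hτ : 0 < τ)
    (hdec : ∀ (n : ℕ) (f g : ℝ → ℝ), Integrable f μ → BoundedVariationOn g Set.univ →
      |(∫ x, f (T^[n] x) * g x ∂μ) - (∫ x, f x ∂μ) * ∫ x, g x ∂μ| ≤
        C * Real.exp (-τ * n) * (∫ x, |f x| ∂μ) *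
          ((⨆ x, |g x|) + (eVariationOn g Set.univ).toReal))
    (x₀ : ℝ) {R : ℝ} (hR : 0 < R) (N : ℕ) (hN : 0 < N)
    (hp : 0 < (μ (Metric.ball x₀ R)).toReal) :
    (μ {x | ∀ k < N, T^[k] x ∉ Metric.ball x₀ R}).toReal ≤
      (6 * C * (1 - Real.exp (-τ))⁻¹) / (N * (μ (Metric.ball x₀ R)).toReal) := by
  set B := Metric.ball x₀ R with hBdef
  set ind : ℝ → ℝ := B.indicator (fun _ => (1:ℝ)) with hinddef
  set p : ℝ := (μ B).toReal with hpdef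
  have hBm : MeasurableSet B := Metric.isOpen_ball.measurableSet
  have hind_meas : Measurable ind := measurable_const.indicator hBm
  have hind_nonneg : ∀ x, 0 ≤ ind x := indicator_one_nonneg B
  have hind_le_one : ∀ x, ind x ≤ 1 := indicator_one_le_one B
  have hind_int : Integrable ind μ := by
    refine (integrable_const (1:ℝ)).mono' hind_meas.aestronglyMeasurable ?_
    filter_upwards with x
    rw [Real.norm_eq_abs, abs_of_nonneg (hind_nonneg x)]
    exact hind_le_one x
  have hind_integral : ∫ x, ind x ∂μ = p := by
    rw [hinddef, integral_indicator_const (1:ℝ) hBm, smul_eq_mul, mul_one]; rfl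
  have habs : ∫ x, |ind x| ∂μ = p := by
    rw [← hind_integral]
    congr 1
    funext x
    exact abs_of_nonneg (hind_nonneg x)
  have hbv : BoundedVariationOn ind Set.univ :=
    ne_top_of_le_ne_top ENNReal.ofReal_ne_top (bv_indicator_ball x₀ hR)
  have hQ : (⨆ x, |ind x|) + (eVariationOn ind Set.univ).toReal ≤ 3 := by
    have h1 : (⨆ x, |ind x|) ≤ 1 := by
      refine ciSup_le fun x => ?_
      rw [abs_of_nonneg (hind_nonneg x)]
      exact hind_le_one x
    have h2 : (eVariationOn ind Set.univ).toReal ≤ 2 := by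
      refine ENNReal.toReal_le_of_le_ofReal (by norm_num) ?_
      exact bv_indicator_ball x₀ hR
    linarith
  -- correlation bound
  have hp_nonneg : (0:ℝ) ≤ p := ENNReal.toReal_nonneg
  have hcorr : ∀ d : ℕ, ∫ x, ind (T^[d] x) * ind x ∂μ
      ≤ p * p + 3 * C * Real.exp (-τ * d) * p := by
    intro d
    have h := hdec d ind ind hind_int hbv
    rw [habs, hind_integral] at h
    have hub := (abs_le.mp h).2
    have hfac : C * Real.exp (-τ * d) * p * ((⨆ x, |ind x|) + (eVariationOn ind Set.univ).toReal)
        ≤ C * Real.exp (-τ * d) * p * 3 := by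
      apply mul_le_mul_of_nonneg_left hQ
      positivity
    nlinarith [Real.exp_pos (-τ * (d:ℝ))]
  -- the hit-count function
  set h : ℕ → ℝ → ℝ := fun k x => ind (T^[k] x) with hhdef
  have hmeas : ∀ k, Measurable (h k) := fun k => hind_meas.comp (hT.iterate k).measurable
  have hint : ∀ k, Integrable (h k) μ := by
    intro k
    refine (integrable_const (1:ℝ)).mono' (hmeas k).aestronglyMeasurable ?_
    filter_upwards with x
    rw [Real.norm_eq_abs, abs_of_nonneg (hind_nonneg _)]
    exact hind_le_one _
  have hint2 : ∀ i j, Integrable (fun x => h i x * h j x) μ := by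
    intro i j
    refine (integrable_const (1:ℝ)).mono'
      (((hmeas i).mul (hmeas j)).aestronglyMeasurable) ?_
    filter_upwards with x
    rw [Real.norm_eq_abs, abs_of_nonneg (mul_nonneg (hind_nonneg _) (hind_nonneg _))]
    calc h i x * h j x ≤ 1 * 1 := by
          apply mul_le_mul (hind_le_one _) (hind_le_one _) (hind_nonneg _) zero_le_one
      _ = 1 := mul_one 1
  have hIk : ∀ k, ∫ x, h k x ∂μ = p := by
    intro k
    rw [hhdef]
    rw [integral_comp_iterate hT k ind hind_meas]
    exact hind_integral
  -- pairwise integral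
  have hpair0 : ∀ i j, i ≤ j → ∫ x, h i x * h j x ∂μ = ∫ x, ind (T^[j-i] x) * ind x ∂μ := by
    intro i j hij
    have hfun : (fun x => h i x * h j x)
        = fun x => (fun y => ind (T^[j-i] y) * ind y) (T^[i] x) := by
      funext x
      simp only [hhdef]
      have : T^[j] x = T^[j-i] (T^[i] x) := by
        rw [← Function.iterate_add_apply]
        congr 1
        omega
      rw [this]
      ring
    rw [hfun, integral_comp_iterate hT i (fun y => ind (T^[j-i] y) * ind y)
      ((hind_meas.comp (hT.iterate (j-i)).measurable).mul hind_meas)]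
  have hpair : ∀ i j, ∫ x, h i x * h j x ∂μ
      ≤ p * p + 3 * C * Real.exp (-τ * (((i-j) + (j-i) : ℕ) : ℝ)) * p := by
    intro i j
    rcases le_total i j with hij | hji
    · have hd : (i - j) + (j - i) = j - i := by omega
      rw [hd, hpair0 i j hij]
      exact hcorr (j - i)
    · have hd : (i - j) + (j - i) = i - j := by omega
      have hcomm : (fun x => h i x * h j x) = fun x => h j x * h i x := by
        funext x; ring
      rw [hd, hcomm, hpair0 j i hji]
      exact hcorr (i - j)
  -- the sum function and its moments
  set G : ℝ := (1 - Real.exp (-τ))⁻¹ with hGdef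
  have hx0 : (0:ℝ) ≤ Real.exp (-τ) := (Real.exp_pos _).le
  have hx1 : Real.exp (-τ) < 1 := by
    rw [Real.exp_lt_one_iff]
    linarith
  have hG_pos : 0 < G := by
    rw [hGdef]
    apply inv_pos.mpr
    linarith
  set S : ℝ → ℝ := fun x => ∑ k ∈ Finset.range N, h k x with hSdef
  set E : ℝ := N * p with hEdef
  have hE_pos : 0 < E := by
    apply mul_pos _ hp
    exact_mod_cast hN
  have hS_int : Integrable S μ := integrable_finset_sum _ (fun k _ => hint k)
  have hS_integral : ∫ x, S x ∂μ = E := by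
    rw [hSdef]
    rw [integral_finset_sum _ (fun k _ => hint k)]
    rw [Finset.sum_congr rfl (fun k _ => hIk k), Finset.sum_const, Finset.card_range,
      nsmul_eq_mul]
  have hS2eq : (fun x => S x ^ 2)
      = fun x => ∑ i ∈ Finset.range N, ∑ j ∈ Finset.range N, h i x * h j x := by
    funext x
    rw [sq, Finset.sum_mul_sum]
  have hS2_int : Integrable (fun x => S x ^ 2) μ := by
    rw [hS2eq]
    exact integrable_finset_sum _ (fun i _ => integrable_finset_sum _ (fun j _ => hint2 i j))
  have hS2_integral : ∫ x, S x ^ 2 ∂μ ≤ E ^ 2 + (6 * C * G) * E := by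
    rw [hS2eq]
    rw [integral_finset_sum _ (fun i _ => integrable_finset_sum _ (fun j _ => hint2 i j))]
    have hinner : ∀ i ∈ Finset.range N,
        ∫ x, ∑ j ∈ Finset.range N, h i x * h j x ∂μ
          = ∑ j ∈ Finset.range N, ∫ x, h i x * h j x ∂μ := by
      intro i _
      exact integral_finset_sum _ (fun j _ => hint2 i j)
    rw [Finset.sum_congr rfl hinner]
    have hterm : ∀ i ∈ Finset.range N, ∀ j ∈ Finset.range N,
        ∫ x, h i x * h j x ∂μ
          ≤ p * p + 3 * C * p * Real.exp (-τ) ^ ((i-j) + (j-i)) := by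
      intro i _ j _
      have := hpair i j
      have hexp : Real.exp (-τ * (((i-j) + (j-i) : ℕ) : ℝ))
          = Real.exp (-τ) ^ ((i-j) + (j-i)) := by
        rw [mul_comm, Real.exp_nat_mul]
      rw [hexp] at this
      calc ∫ x, h i x * h j x ∂μ ≤ p * p + 3 * C * Real.exp (-τ) ^ ((i-j)+(j-i)) * p := this
        _ = p * p + 3 * C * p * Real.exp (-τ) ^ ((i-j)+(j-i)) := by ring
    calc ∑ i ∈ Finset.range N, ∑ j ∈ Finset.range N, ∫ x, h i x * h j x ∂μ
        ≤ ∑ i ∈ Finset.range N, ∑ j ∈ Finset.range N,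
            (p * p + 3 * C * p * Real.exp (-τ) ^ ((i-j) + (j-i))) := by
          apply Finset.sum_le_sum
          intro i hi
          apply Finset.sum_le_sum
          intro j hj
          exact hterm i hi j hj
      _ = N^2 * (p * p) + 3 * C * p *
            (∑ i ∈ Finset.range N, ∑ j ∈ Finset.range N, Real.exp (-τ) ^ ((i-j)+(j-i))) := by
          simp only [Finset.sum_add_distrib, Finset.sum_const, Finset.card_range,
            nsmul_eq_mul, ← Finset.mul_sum]
          ring
      _ ≤ N^2 * (p * p) + 3 * C * p * (N * (2 * G)) := by
          have := double_geom_le hx0 hx1 N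
          have h3Cp : (0:ℝ) ≤ 3 * C * p := by positivity
          nlinarith
      _ = E ^ 2 + (6 * C * G) * E := by
          rw [hEdef]; ring
  -- variance bound
  have hSE2_eq : (fun x => (S x - E)^2) = fun x => (S x ^ 2 - (2*E) * S x) + E^2 := by
    funext x; ring
  have hSE2_int : Integrable (fun x => (S x - E)^2) μ := by
    rw [hSE2_eq]
    exact (hS2_int.sub (hS_int.const_mul (2*E))).add (integrable_const _)
  have hVar : ∫ x, (S x - E)^2 ∂μ ≤ (6 * C * G) * E := by
    have h1 : Integrable (fun x => S x ^ 2 - 2*E*S x) μ := hS2_int.sub (hS_int.const_mul (2*E))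
    have h2 : ∫ x, ((S x ^ 2 - 2*E*S x) + E^2) ∂μ
        = (∫ x, (S x ^ 2 - 2*E*S x) ∂μ) + E^2 := by
      rw [integral_add h1 (integrable_const _), integral_const]
      simp
    have h3 : ∫ x, (S x ^ 2 - 2*E*S x) ∂μ = (∫ x, S x^2 ∂μ) - 2*E*E := by
      rw [integral_sub hS2_int (hS_int.const_mul (2*E)), integral_const_mul, hS_integral]
    have this' : ∫ x, (S x - E)^2 ∂μ = ∫ x, S x ^ 2 ∂μ - E^2 := by
      rw [hSE2_eq, h2, h3]
      ring
    rw [this']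
    linarith
  -- Chebyshev
  have hsub : {x | ∀ k < N, T^[k] x ∉ B} ⊆ {x | E^2 ≤ (S x - E)^2} := by
    intro x hx
    have hSx : S x = 0 := by
      rw [hSdef]
      apply Finset.sum_eq_zero
      intro k hk
      rw [Finset.mem_range] at hk
      simp only [hhdef]
      rw [hinddef, Set.indicator_of_notMem (hx k hk)]
    simp only [Set.mem_setOf_eq, hSx]
    rw [zero_sub, neg_pow]
    norm_num
  have hmarkov := mul_meas_ge_le_integral_of_nonneg
    (ae_of_all μ (fun x => sq_nonneg (S x - E))) hSE2_int (E^2)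
  have hmono : (μ {x | ∀ k < N, T^[k] x ∉ B}).toReal
      ≤ (μ {x | E^2 ≤ (S x - E)^2}).toReal :=
    ENNReal.toReal_mono (measure_ne_top μ _) (measure_mono hsub)
  have hchain : E^2 * (μ {x | ∀ k < N, T^[k] x ∉ B}).toReal ≤ (6 * C * G) * E := by
    calc E^2 * (μ {x | ∀ k < N, T^[k] x ∉ B}).toReal
        ≤ E^2 * (μ {x | E^2 ≤ (S x - E)^2}).toReal := by
          apply mul_le_mul_of_nonneg_left hmono (sq_nonneg E)
      _ ≤ ∫ x, (S x - E)^2 ∂μ := hmarkov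
      _ ≤ (6 * C * G) * E := hVar
  rw [div_eq_mul_inv]
  have hE2 : (0:ℝ) < E^2 := by positivity
  have := (le_div_iff₀ hE2).mpr (by linarith [hchain] : (μ {x | ∀ k < N, T^[k] x ∉ B}).toReal * E^2 ≤ (6 * C * G) * E)
  calc (μ {x | ∀ k < N, T^[k] x ∉ B}).toReal ≤ (6 * C * G) * E / E^2 := this
    _ = 6 * C * G * E⁻¹ := by
        rw [sq]
        field_simp

/-- **Theorem 1 (BV1).** If `(X,T,μ)` has exponential decay of correlations for functions of
bounded variation against `L¹`, and `(B_m)` is a decreasing sequence of balls with common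
centre `x₀` satisfying `μ(B_m) ≥ m⁻¹ (log m)^{1+ε}` for all large `m`, then the set of
eventually always hitting points has full measure. -/
theorem stmt0
    (μ : Measure ℝ) [IsProbabilityMeasure μ] (T : ℝ → ℝ)
    (hT : MeasurePreserving T μ μ)
    (C τ : ℝ) (hC : 0 < C) (hτ : 0 < τ)
    (hdec : ∀ (n : ℕ) (f g : ℝ → ℝ), Integrable f μ → BoundedVariationOn g Set.univ →
      |(∫ x, f (T^[n] x) * g x ∂μ) - (∫ x, f x ∂μ) * ∫ x, g x ∂μ| ≤
        C * Real.exp (-τ * n) * (∫ x, |f x| ∂μ) *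
          ((⨆ x, |g x|) + (eVariationOn g Set.univ).toReal))
    (x₀ : ℝ) (r : ℕ → ℝ) (hr : ∀ m, 0 < r m) (hrmono : Antitone r)
    (ε : ℝ) (hε : 0 < ε) (m₀ : ℕ)
    (hB : ∀ m : ℕ, m₀ ≤ m →
      Real.log m ^ (1 + ε) / m ≤ (μ (Metric.ball x₀ (r m))).toReal) :
    μ {x | ∀ᶠ m : ℕ in atTop, ∃ k < m, T^[k] x ∈ Metric.ball x₀ (r m)} = 1 := by
  classical
  set K : ℝ := 6 * C * (1 - Real.exp (-τ))⁻¹ with hKdef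
  have hexp1 : Real.exp (-τ) < 1 := by
    rw [Real.exp_lt_one_iff]; linarith
  have hK_pos : 0 < K := by
    rw [hKdef]
    have : (0:ℝ) < (1 - Real.exp (-τ))⁻¹ := inv_pos.mpr (by linarith)
    positivity
  have hlog2 : (0:ℝ) < Real.log 2 := Real.log_pos one_lt_two
  set J₀ : ℕ := m₀ + 1 with hJ₀def
  set n : ℕ → ℕ := fun j => j + J₀ with hndef
  set s : ℕ → Set ℝ := fun j =>
    {x | ∀ k < 2^(n j), T^[k] x ∉ Metric.ball x₀ (r (2^(n j + 1)))} with hsdef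
  -- lower bound on the measure of balls
  set A : ℕ → ℝ := fun j => (((n j + 1 : ℕ) : ℝ) * Real.log 2) ^ (1 + ε) with hAdef
  have hA_pos : ∀ j, 0 < A j := by
    intro j
    apply Real.rpow_pos_of_pos
    have : (0:ℝ) < ((n j + 1 : ℕ) : ℝ) := by positivity
    positivity
  have hm₀le : ∀ j, m₀ ≤ 2 ^ (n j + 1) := by
    intro j
    calc m₀ ≤ 2 ^ m₀ := (Nat.lt_two_pow_self).le
      _ ≤ 2 ^ (n j + 1) := Nat.pow_le_pow_right (by norm_num) (by simp only [hndef, hJ₀def]; omega)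
  have hpj : ∀ j, A j / (2:ℝ)^(n j + 1) ≤ (μ (Metric.ball x₀ (r (2^(n j + 1))))).toReal := by
    intro j
    have h := hB (2^(n j + 1)) (hm₀le j)
    have hcast : ((2^(n j + 1) : ℕ) : ℝ) = (2:ℝ)^(n j + 1) := by push_cast; ring
    rw [hcast] at h
    have hlog : Real.log ((2:ℝ)^(n j + 1)) = ((n j + 1 : ℕ) : ℝ) * Real.log 2 := by
      rw [Real.log_pow]
    rw [hlog] at h
    exact h
  have hp_pos : ∀ j, 0 < (μ (Metric.ball x₀ (r (2^(n j + 1))))).toReal := by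
    intro j
    refine lt_of_lt_of_le ?_ (hpj j)
    apply div_pos (hA_pos j)
    positivity
  -- the measure bound on s j
  have hμs : ∀ j, (μ (s j)).toReal ≤ 2 * K / A j := by
    intro j
    have hkey := key_estimate μ T hT C τ hC hτ hdec x₀ (hr (2^(n j + 1)))
      (2^(n j)) (by positivity) (hp_pos j)
    refine le_trans hkey ?_
    have hcast : ((2^(n j) : ℕ) : ℝ) = (2:ℝ)^(n j) := by push_cast; ring
    rw [hcast]
    have h2n : (0:ℝ) < (2:ℝ)^(n j) := by positivity
    have hKnonneg : (0:ℝ) ≤ K := hK_pos.le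
    calc K / ((2:ℝ)^(n j) * (μ (Metric.ball x₀ (r (2^(n j + 1))))).toReal)
        ≤ K / ((2:ℝ)^(n j) * (A j / (2:ℝ)^(n j + 1))) := by
          apply div_le_div_of_nonneg_left hKnonneg
          · apply mul_pos h2n
            apply div_pos (hA_pos j)
            positivity
          · exact mul_le_mul_of_nonneg_left (hpj j) h2n.le
      _ = 2 * K / A j := by
          rw [pow_succ]
          field_simp
  -- summability
  have hone : (1:ℝ) < 1 + ε := by linarith
  have hsummable0 : Summable (fun j : ℕ => 1 / ((j:ℝ)+1) ^ (1+ε)) := by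
    have h1 := Real.summable_one_div_nat_rpow.mpr hone
    have h2 := (summable_nat_add_iff 1).mpr h1
    refine h2.congr fun j => ?_
    push_cast
    ring_nf
  set c : ℝ := 2 * K / (Real.log 2) ^ (1+ε) with hcdef
  have hc_pos : 0 < c := by
    apply div_pos (by linarith)
    exact Real.rpow_pos_of_pos hlog2 _
  have hbound : ∀ j, (μ (s j)).toReal ≤ c * (1 / ((j:ℝ)+1) ^ (1+ε)) := by
    intro j
    refine le_trans (hμs j) ?_
    have hAj_ge : ((j:ℝ)+1) ^ (1+ε) * (Real.log 2) ^ (1+ε) ≤ A j := by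
      rw [hAdef, ← Real.mul_rpow (by positivity) hlog2.le]
      apply Real.rpow_le_rpow (by positivity) ?_ (by linarith)
      have hle1 : ((j:ℝ)+1) ≤ ((n j + 1 : ℕ) : ℝ) := by
        simp only [hndef]
        push_cast
        have : (0:ℝ) ≤ (J₀:ℝ) := Nat.cast_nonneg J₀
        linarith
      nlinarith [hlog2]
    have hLX_pos : 0 < ((j:ℝ)+1) ^ (1+ε) * (Real.log 2) ^ (1+ε) :=
      mul_pos (Real.rpow_pos_of_pos (by positivity) _) (Real.rpow_pos_of_pos hlog2 _)
    rw [hcdef, div_mul_eq_mul_div, mul_one_div, div_div]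
    exact div_le_div_of_nonneg_left (by linarith) hLX_pos hAj_ge
  have hsum : ∑' j, μ (s j) ≠ ⊤ := by
    have hle : ∀ j, μ (s j) ≤ ENNReal.ofReal (c * (1 / ((j:ℝ)+1) ^ (1+ε))) := by
      intro j
      rw [← ENNReal.ofReal_toReal (measure_ne_top μ (s j))]
      exact ENNReal.ofReal_le_ofReal (hbound j)
    have hnn : ∀ j : ℕ, 0 ≤ c * (1 / ((j:ℝ)+1) ^ (1+ε)) := by
      intro j
      have : (0:ℝ) < ((j:ℝ)+1) ^ (1+ε) := by positivity
      positivity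
    have hsummable : Summable (fun j : ℕ => c * (1 / ((j:ℝ)+1) ^ (1+ε))) :=
      hsummable0.mul_left c
    refine ne_top_of_le_ne_top ?_ (ENNReal.tsum_le_tsum hle)
    rw [← ENNReal.ofReal_tsum_of_nonneg hnn hsummable]
    exact ENNReal.ofReal_ne_top
  have hae : ∀ᵐ x ∂μ, ∀ᶠ j in atTop, x ∉ s j := ae_eventually_notMem hsum
  -- gluing
  have hglue : ∀ x, (∀ᶠ j in atTop, x ∉ s j) →
      (∀ᶠ m : ℕ in atTop, ∃ k < m, T^[k] x ∈ Metric.ball x₀ (r m)) := by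
    intro x hx
    rw [eventually_atTop] at hx ⊢
    obtain ⟨J₁, hJ₁⟩ := hx
    refine ⟨2^(J₁ + J₀), fun m hm => ?_⟩
    have hm0 : m ≠ 0 :=
      (lt_of_lt_of_le (by positivity : 0 < 2^(J₁ + J₀)) hm).ne'
    have h1 : 2 ^ (Nat.log 2 m) ≤ m := Nat.pow_log_le_self 2 hm0
    have h2 : m < 2 ^ (Nat.log 2 m + 1) := Nat.lt_pow_succ_log_self (by norm_num) m
    have ht : J₁ + J₀ ≤ Nat.log 2 m := (Nat.le_log_iff_pow_le (by norm_num) hm0).2 hm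
    set t := Nat.log 2 m with htdef
    set j := t - J₀ with hjdef
    have hjJ : n j = t := by simp only [hndef, hjdef]; omega
    have hjge : J₁ ≤ j := by simp only [hjdef]; omega
    have hxj := hJ₁ j hjge
    rw [hsdef] at hxj
    simp only [Set.mem_setOf_eq, not_forall, not_not] at hxj
    obtain ⟨k, hk, hmem⟩ := hxj
    rw [hjJ] at hk hmem
    refine ⟨k, lt_of_lt_of_le hk h1, ?_⟩
    have hrle : r (2^(t+1)) ≤ r m := hrmono h2.le
    exact Metric.ball_subset_ball hrle hmem
  -- conclusion
  set tgt : Set ℝ := {x | ∀ᶠ m : ℕ in atTop, ∃ k < m, T^[k] x ∈ Metric.ball x₀ (r m)}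
    with htgtdef
  have hcompl : μ tgtᶜ = 0 := by
    apply measure_mono_null ?_ (ae_iff.mp hae)
    intro x hx
    simp only [Set.mem_compl_iff, htgtdef, Set.mem_setOf_eq] at hx
    simp only [Set.mem_setOf_eq]
    intro hcontra
    exact hx (hglue x hcontra)
  refine le_antisymm prob_le_one ?_
  have : (1:ENNReal) = μ Set.univ := (measure_univ).symm
  rw [this, ← Set.union_compl_self tgt]
  calc μ (tgt ∪ tgtᶜ) ≤ μ tgt + μ tgtᶜ := measure_union_le _ _
    _ = μ tgt := by rw [hcompl, add_zero]
end

section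
/- Let (X,T,μ) be a system with exponential decay of correlations for functions of bounded variation against L¹, with constants C, τ > 0. Let (B_m)_{m≥1} be a decreasing (nested) sequence of balls in X (so B_{m+1} ⊆ B_m for all m), assume the map m ↦ m·μ(B_m) is (weakly) increasing, and assume there are ε > 0 and m₀ ∈ ℕ such that μ(B_m) ≥ m^{-1+ε} for all m ≥ m₀. Then for μ-almost every x ∈ X, lim_{m→∞} #{ 0 ≤ k < m : T^k(x) ∈ B_m } / (m·μ(B_m)) = 1. -/
open MeasureTheory Filter Set

-- combinatorial: indicator of an order-convex predicate has ≤ 2 switches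
lemma switches_le_two (P : ℕ → Prop) [DecidablePred P]
    (hconv : ∀ ⦃i j k : ℕ⦄, i ≤ j → j ≤ k → P i → P k → P j) (n : ℕ) :
    (∑ i ∈ Finset.range n, |(if P (i+1) then (1:ℝ) else 0) - (if P i then (1:ℝ) else 0)|) ≤ 2 := by
  have key : ∀ n : ℕ,
      (∑ i ∈ Finset.range n, |(if P (i+1) then (1:ℝ) else 0) - (if P i then (1:ℝ) else 0)|)
        + (if P n then (1:ℝ) else 0) ≤ (if ∃ t ≤ n, P t then (2:ℝ) else 0) := by
    intro n
    induction n with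
    | zero =>
      simp only [Finset.range_zero, Finset.sum_empty, zero_add]
      by_cases h : P 0
      · have : ∃ t ≤ 0, P t := ⟨0, le_refl _, h⟩
        simp [h, this]
      · have : ¬ ∃ t ≤ 0, P t := by rintro ⟨t, ht, hPt⟩; simp at ht; subst ht; exact h hPt
        simp [h, this]
    | succ n ih =>
      rw [Finset.sum_range_succ]
      by_cases h1 : P n <;> by_cases h2 : P (n+1)
      · have he : ∃ t ≤ n, P t := ⟨n, le_refl _, h1⟩
        have he' : ∃ t ≤ n+1, P t := ⟨n, Nat.le_succ _, h1⟩
        simp only [h1, h2, if_true, if_pos he, if_pos he'] at ih ⊢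
        simp only [sub_self, abs_zero, add_zero]
        linarith
      · have he : ∃ t ≤ n, P t := ⟨n, le_refl _, h1⟩
        have he' : ∃ t ≤ n+1, P t := ⟨n, Nat.le_succ _, h1⟩
        simp only [h1, h2, if_true, if_false, if_pos he, if_pos he'] at ih ⊢
        rw [show |(0:ℝ) - 1| = 1 by norm_num]
        linarith
      · -- ¬P n, P (n+1): then no t ≤ n with P t
        have hno : ¬ ∃ t ≤ n, P t := by
          rintro ⟨t, ht, hPt⟩
          exact h1 (hconv ht (Nat.le_succ n) hPt h2)
        have he' : ∃ t ≤ n+1, P t := ⟨n+1, le_refl _, h2⟩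
        simp only [h1, h2, if_true, if_false, if_neg hno, if_pos he'] at ih ⊢
        rw [show |(1:ℝ) - 0| = 1 by norm_num]
        linarith
      · simp only [h1, h2, if_false, sub_self, abs_zero, add_zero] at ih ⊢
        have : (if ∃ t ≤ n, P t then (2:ℝ) else 0) ≤ (if ∃ t ≤ n+1, P t then (2:ℝ) else 0) := by
          by_cases h : ∃ t ≤ n, P t
          · obtain ⟨t, ht, hPt⟩ := h
            have h' : ∃ t ≤ n+1, P t := ⟨t, ht.trans (Nat.le_succ n), hPt⟩
            have h'' : ∃ t ≤ n, P t := ⟨t, ht, hPt⟩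
            simp [h', h'']
          · simp only [if_neg h]
            by_cases h' : ∃ t ≤ n+1, P t <;> simp [h']
        linarith
  have := key n
  have h0 : (0:ℝ) ≤ if P n then (1:ℝ) else 0 := by positivity
  have h2 : (if ∃ t ≤ n, P t then (2:ℝ) else 0) ≤ 2 := by
    by_cases h : ∃ t ≤ n, P t <;> simp [h]
  linarith

lemma evar_ball_le (c r : ℝ) :
    eVariationOn ((Metric.ball c r).indicator (1 : ℝ → ℝ)) Set.univ ≤ 2 := by
  classical
  apply iSup_le
  rintro ⟨n, u, hu, -⟩
  have hterm : ∀ i : ℕ,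
      edist ((Metric.ball c r).indicator (1:ℝ→ℝ) (u (i+1)))
        ((Metric.ball c r).indicator (1:ℝ→ℝ) (u i)) =
      ENNReal.ofReal (|(if u (i+1) ∈ Metric.ball c r then (1:ℝ) else 0)
        - (if u i ∈ Metric.ball c r then (1:ℝ) else 0)|) := by
    intro i
    rw [edist_dist, Real.dist_eq, Set.indicator_apply, Set.indicator_apply]
    rfl
  calc (∑ i ∈ Finset.range n, edist ((Metric.ball c r).indicator (1:ℝ→ℝ) (u (i+1)))
        ((Metric.ball c r).indicator (1:ℝ→ℝ) (u i)))
      = ENNReal.ofReal (∑ i ∈ Finset.range n,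
          |(if u (i+1) ∈ Metric.ball c r then (1:ℝ) else 0)
            - (if u i ∈ Metric.ball c r then (1:ℝ) else 0)|) := by
        rw [ENNReal.ofReal_sum_of_nonneg (fun i _ => abs_nonneg _)]
        exact Finset.sum_congr rfl fun i _ => hterm i
    _ ≤ ENNReal.ofReal 2 := by
        apply ENNReal.ofReal_le_ofReal
        apply switches_le_two (fun t => u t ∈ Metric.ball c r) ?_ n
        intro i j k hij hjk hi hk
        rw [Real.ball_eq_Ioo] at hi hk ⊢
        exact ⟨lt_of_lt_of_le hi.1 (hu hij), lt_of_le_of_lt (hu hjk) hk.2⟩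
    _ = 2 := by norm_num

lemma bv_ball (c r : ℝ) :
    BoundedVariationOn ((Metric.ball c r).indicator (1 : ℝ → ℝ)) Set.univ :=
  ne_top_of_le_ne_top (by norm_num) (evar_ball_le c r)

lemma sup_abs_indicator_le (B : Set ℝ) : (⨆ x, |B.indicator (1 : ℝ → ℝ) x|) ≤ 1 := by
  apply Real.iSup_le _ zero_le_one
  intro x
  by_cases h : x ∈ B <;> simp [Set.indicator_apply, h]

lemma geom_partial (ρ : ℝ) (h0 : 0 ≤ ρ) (h1 : ρ < 1) (n : ℕ) :
    ∑ i ∈ Finset.range n, ρ ^ i ≤ (1 - ρ)⁻¹ := by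
  have hs : Summable (fun i : ℕ => ρ ^ i) := summable_geometric_of_lt_one h0 h1
  have := Summable.sum_le_tsum (Finset.range n) (fun i _ => pow_nonneg h0 i) hs
  rwa [tsum_geometric_of_lt_one h0 h1] at this

lemma geom_dist_sum (ρ : ℝ) (h0 : 0 ≤ ρ) (h1 : ρ < 1) (k M : ℕ) :
    ∑ l ∈ (Finset.range M).erase k, ρ ^ (Nat.dist k l) ≤ 2 * (1 - ρ)⁻¹ := by
  have hsub : (Finset.range M).erase k ⊆ Finset.range k ∪ Finset.Ico (k+1) M := by
    intro l hl
    simp only [Finset.mem_erase, Finset.mem_range] at hl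
    rcases lt_or_gt_of_ne hl.1 with h | h
    · exact Finset.mem_union_left _ (Finset.mem_range.mpr h)
    · exact Finset.mem_union_right _ (Finset.mem_Ico.mpr ⟨h, hl.2⟩)
  calc ∑ l ∈ (Finset.range M).erase k, ρ ^ (Nat.dist k l)
      ≤ ∑ l ∈ Finset.range k ∪ Finset.Ico (k+1) M, ρ ^ (Nat.dist k l) :=
        Finset.sum_le_sum_of_subset_of_nonneg hsub (fun i _ _ => pow_nonneg h0 _)
    _ = (∑ l ∈ Finset.range k, ρ ^ (Nat.dist k l))
        + ∑ l ∈ Finset.Ico (k+1) M, ρ ^ (Nat.dist k l) := by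
        apply Finset.sum_union
        rw [Finset.disjoint_left]
        intro x hx hx'
        simp only [Finset.mem_range] at hx
        simp only [Finset.mem_Ico] at hx'
        omega
    _ ≤ (1 - ρ)⁻¹ + (1 - ρ)⁻¹ := by
        gcongr
        · -- l < k : dist = k - l
          have : ∑ l ∈ Finset.range k, ρ ^ (Nat.dist k l)
              = ∑ j ∈ Finset.range k, ρ ^ (j+1) := by
            rw [← Finset.sum_range_reflect]
            apply Finset.sum_congr rfl
            intro j hj
            simp only [Finset.mem_range] at hj
            congr 1
            rw [Nat.dist_eq_sub_of_le_right (by omega)]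
            omega
          rw [this]
          calc ∑ j ∈ Finset.range k, ρ ^ (j+1) ≤ ∑ j ∈ Finset.range k, ρ ^ j := by
                apply Finset.sum_le_sum
                intro j _
                exact pow_le_pow_of_le_one h0 h1.le (Nat.le_succ j)
            _ ≤ (1-ρ)⁻¹ := geom_partial ρ h0 h1 k
        · have : ∑ l ∈ Finset.Ico (k+1) M, ρ ^ (Nat.dist k l)
              = ∑ j ∈ Finset.range (M - (k+1)), ρ ^ (j+1) := by
            rw [Finset.sum_Ico_eq_sum_range]
            apply Finset.sum_congr rfl
            intro j _
            congr 1
            rw [Nat.dist_eq_sub_of_le (by omega)]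
            omega
          rw [this]
          calc ∑ j ∈ Finset.range (M-(k+1)), ρ ^ (j+1)
              ≤ ∑ j ∈ Finset.range (M-(k+1)), ρ ^ j := by
                apply Finset.sum_le_sum
                intro j _
                exact pow_le_pow_of_le_one h0 h1.le (Nat.le_succ j)
            _ ≤ (1-ρ)⁻¹ := geom_partial ρ h0 h1 _
    _ = 2 * (1 - ρ)⁻¹ := by ring

lemma integrable_ind (μ : Measure ℝ) [IsProbabilityMeasure μ] (B : Set ℝ) (hB : MeasurableSet B) :
    Integrable (B.indicator (1:ℝ→ℝ)) μ :=
  (integrable_indicator_iff hB).mpr (integrableOn_const (measure_lt_top μ B).ne)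

lemma abs_ind (B : Set ℝ) (x : ℝ) : |B.indicator (1:ℝ→ℝ) x| = B.indicator (1:ℝ→ℝ) x := by
  rw [abs_of_nonneg]; exact Set.indicator_nonneg (fun _ _ => zero_le_one) x

lemma cov_bound (μ : Measure ℝ) [IsProbabilityMeasure μ] (T : ℝ → ℝ)
    (C τ : ℝ) (hC : 0 < C)
    (hdec : ∀ (n : ℕ) (f g : ℝ → ℝ), Integrable f μ → BoundedVariationOn g Set.univ →
      |(∫ x, f (T^[n] x) * g x ∂μ) - (∫ x, f x ∂μ) * ∫ x, g x ∂μ| ≤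
        C * Real.exp (-τ * n) * (∫ x, |f x| ∂μ) *
          ((⨆ x, |g x|) + (eVariationOn g Set.univ).toReal))
    (c r : ℝ) (n : ℕ) :
    |(∫ x, (Metric.ball c r).indicator (1:ℝ→ℝ) (T^[n] x)
        * (Metric.ball c r).indicator (1:ℝ→ℝ) x ∂μ)
      - (μ (Metric.ball c r)).toReal * (μ (Metric.ball c r)).toReal| ≤
      3 * C * Real.exp (-τ * n) * (μ (Metric.ball c r)).toReal := by
  set χ := (Metric.ball c r).indicator (1:ℝ→ℝ) with hχ
  have hint : Integrable χ μ := integrable_ind μ _ measurableSet_ball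
  have h1 : ∫ x, χ x ∂μ = (μ (Metric.ball c r)).toReal :=
    integral_indicator_one measurableSet_ball
  have h2 : ∫ x, |χ x| ∂μ = (μ (Metric.ball c r)).toReal := by
    rw [← h1]; exact integral_congr_ae (Filter.Eventually.of_forall (fun x => abs_ind _ x))
  have := hdec n χ χ hint (bv_ball c r)
  rw [h1, h2] at this
  refine this.trans ?_
  have hvar : (eVariationOn χ Set.univ).toReal ≤ 2 := by
    have h := ENNReal.toReal_mono (by norm_num : (2:ENNReal) ≠ ⊤) (evar_ball_le c r)
    simpa using h
  have hsup := sup_abs_indicator_le (Metric.ball c r)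
  have hnn : (0:ℝ) ≤ C * Real.exp (-τ * n) * (μ (Metric.ball c r)).toReal := by positivity
  calc C * Real.exp (-τ * n) * (μ (Metric.ball c r)).toReal
        * ((⨆ x, |χ x|) + (eVariationOn χ Set.univ).toReal)
      ≤ C * Real.exp (-τ * n) * (μ (Metric.ball c r)).toReal * 3 := by
        apply mul_le_mul_of_nonneg_left _ hnn
        linarith
    _ = 3 * C * Real.exp (-τ * n) * (μ (Metric.ball c r)).toReal := by ring

lemma second_moment (μ : Measure ℝ) [IsProbabilityMeasure μ] (T : ℝ → ℝ)
    (hT : MeasurePreserving T μ μ)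
    (C τ : ℝ) (hC : 0 < C) (hτ : 0 < τ)
    (hdec : ∀ (n : ℕ) (f g : ℝ → ℝ), Integrable f μ → BoundedVariationOn g Set.univ →
      |(∫ x, f (T^[n] x) * g x ∂μ) - (∫ x, f x ∂μ) * ∫ x, g x ∂μ| ≤
        C * Real.exp (-τ * n) * (∫ x, |f x| ∂μ) *
          ((⨆ x, |g x|) + (eVariationOn g Set.univ).toReal))
    (c r : ℝ) (M : ℕ) :
    ∫ x, ((∑ k ∈ Finset.range M, (Metric.ball c r).indicator (1:ℝ→ℝ) (T^[k] x))
        - M * (μ (Metric.ball c r)).toReal)^2 ∂μ ≤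
      (1 + 6 * C * (1 - Real.exp (-τ))⁻¹) * (M * (μ (Metric.ball c r)).toReal) := by
  set χ := (Metric.ball c r).indicator (1:ℝ→ℝ) with hχdef
  set a := (μ (Metric.ball c r)).toReal with hadef
  have ha0 : 0 ≤ a := ENNReal.toReal_nonneg
  have hχmeas : Measurable χ := measurable_one.indicator measurableSet_ball
  have hχ01 : ∀ x, 0 ≤ χ x ∧ χ x ≤ 1 := by
    intro x
    rw [hχdef]
    by_cases h : x ∈ Metric.ball c r <;> simp [Set.indicator_apply, h]
  have hχsq : ∀ x, χ x * χ x = χ x := by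
    intro x
    rw [hχdef]
    by_cases h : x ∈ Metric.ball c r <;> simp [Set.indicator_apply, h]
  set g : ℕ → ℝ → ℝ := fun k x => χ (T^[k] x) with hgdef
  have hmeasg : ∀ k, Measurable (g k) := fun k => hχmeas.comp (hT.measurable.iterate k)
  have hg01 : ∀ k x, 0 ≤ g k x ∧ g k x ≤ 1 := fun k x => hχ01 _
  have hint_prod : ∀ k l, Integrable (fun x => g k x * g l x) μ := by
    intro k l
    apply Integrable.mono' (integrable_const (1:ℝ))
      ((hmeasg k).mul (hmeasg l)).aestronglyMeasurable
    apply Filter.Eventually.of_forall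
    intro x
    rw [Real.norm_eq_abs, Pi.mul_apply, abs_of_nonneg (mul_nonneg (hg01 k x).1 (hg01 l x).1)]
    exact mul_le_one₀ (hg01 k x).2 (hg01 l x).1 (hg01 l x).2
  have hintg : ∀ k, Integrable (g k) μ := by
    intro k
    have := hint_prod k k
    simp only [hgdef] at this ⊢
    simpa only [hχsq] using this
  have hmap : ∀ (k : ℕ) (h : ℝ → ℝ), Measurable h → (∀ x, |h x| ≤ 1) →
      ∫ x, h (T^[k] x) ∂μ = ∫ x, h x ∂μ := by
    intro k h hm _
    rw [← (hT.iterate k).map_eq, integral_map (hT.measurable.iterate k).aemeasurable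
      hm.aestronglyMeasurable, (hT.iterate k).map_eq]
  have hinta : ∀ k, ∫ x, g k x ∂μ = a := by
    intro k
    rw [hgdef]
    simp only
    rw [hmap k χ hχmeas (fun x => abs_le.mpr ⟨by linarith [(hχ01 x).1], (hχ01 x).2⟩)]
    exact integral_indicator_one measurableSet_ball
  -- integral of products
  set I : ℕ → ℝ := fun n => ∫ x, χ (T^[n] x) * χ x ∂μ with hIdef
  have hprod : ∀ k l, k ≤ l → ∫ x, g k x * g l x ∂μ = I (l - k) := by
    intro k l hkl
    have heq : ∀ x, g k x * g l x = (fun y => χ (T^[l-k] y) * χ y) (T^[k] x) := by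
      intro x
      simp only [hgdef]
      rw [← Function.iterate_add_apply, Nat.sub_add_cancel hkl]
      ring
    have h1 : ∫ x, g k x * g l x ∂μ = ∫ x, (fun y => χ (T^[l-k] y) * χ y) (T^[k] x) ∂μ :=
      integral_congr_ae (Filter.Eventually.of_forall heq)
    have hm : Measurable (fun y => χ (T^[l-k] y) * χ y) :=
      (hχmeas.comp (hT.measurable.iterate (l-k))).mul hχmeas
    have hb : ∀ x, |(fun y => χ (T^[l-k] y) * χ y) x| ≤ 1 := by
      intro x
      simp only
      rw [abs_of_nonneg (mul_nonneg (hχ01 _).1 (hχ01 x).1)]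
      exact mul_le_one₀ (hχ01 _).2 (hχ01 x).1 (hχ01 x).2
    have h2 := hmap k (fun y => χ (T^[l-k] y) * χ y) hm hb
    exact h1.trans h2
  have hI0 : I 0 = a := by
    rw [hIdef]
    simp only [Function.iterate_zero, id_eq]
    rw [integral_congr_ae (Filter.Eventually.of_forall (fun x => hχsq x))]
    exact integral_indicator_one measurableSet_ball
  set e : ℝ := Real.exp (-τ) with hedef
  have he0 : 0 ≤ e := Real.exp_nonneg _
  have he1 : e < 1 := Real.exp_lt_one_iff.mpr (by linarith)
  have hcov : ∀ n : ℕ, |I n - a * a| ≤ 3 * C * e ^ n * a := by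
    intro n
    have h := cov_bound μ T C τ hC hdec c r n
    have hexp : Real.exp (-τ * n) = e ^ n := by
      rw [hedef, ← Real.exp_nat_mul]
      ring_nf
    rw [hexp] at h
    exact h
  -- the sum S
  set S : ℝ → ℝ := fun x => ∑ k ∈ Finset.range M, g k x with hSdef
  have hintS : Integrable S μ := integrable_finset_sum _ (fun k _ => hintg k)
  have hintS2 : Integrable (fun x => ∑ k ∈ Finset.range M, ∑ l ∈ Finset.range M,
      g k x * g l x) μ :=
    integrable_finset_sum _ (fun k _ => integrable_finset_sum _ (fun l _ => hint_prod k l))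
  have hSsq : ∀ x, (S x - M * a)^2
      = (∑ k ∈ Finset.range M, ∑ l ∈ Finset.range M, g k x * g l x)
        - 2 * (M * a) * S x + (M * a)^2 := by
    intro x
    have : S x * S x = ∑ k ∈ Finset.range M, ∑ l ∈ Finset.range M, g k x * g l x :=
      Finset.sum_mul_sum _ _ _ _
    nlinarith [this]
  have hSint : ∫ x, S x ∂μ = M * a := by
    rw [hSdef]
    simp only
    rw [integral_finset_sum _ (fun k _ => hintg k)]
    rw [Finset.sum_congr rfl (fun k _ => hinta k)]
    simp [Finset.sum_const, Finset.card_range]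
  have hexpand : ∫ x, (S x - M * a)^2 ∂μ
      = (∑ k ∈ Finset.range M, ∑ l ∈ Finset.range M, ∫ x, g k x * g l x ∂μ) - (M*a)^2 := by
    rw [integral_congr_ae (Filter.Eventually.of_forall hSsq)]
    have hint1 : Integrable (fun x => (∑ k ∈ Finset.range M, ∑ l ∈ Finset.range M,
        g k x * g l x) - 2 * (M * a) * S x) μ := hintS2.sub (hintS.const_mul _)
    have hint2 : Integrable (fun x => 2 * (M * a) * S x) μ := hintS.const_mul _
    rw [integral_add hint1 (integrable_const _)]
    rw [integral_sub hintS2 hint2]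
    rw [integral_finset_sum _ (fun k _ => integrable_finset_sum _ (fun l _ => hint_prod k l))]
    have : ∀ k ∈ Finset.range M, ∫ x, ∑ l ∈ Finset.range M, g k x * g l x ∂μ
        = ∑ l ∈ Finset.range M, ∫ x, g k x * g l x ∂μ :=
      fun k _ => integral_finset_sum _ (fun l _ => hint_prod k l)
    rw [Finset.sum_congr rfl this, integral_const_mul, hSint, integral_const]
    simp only [probReal_univ, measure_univ, ENNReal.toReal_one, smul_eq_mul, one_mul]
    ring
  rw [hexpand]
  -- rewrite (M*a)^2 as double sum of a*a
  have hMa2 : (M*a)^2 = ∑ k ∈ Finset.range M, ∑ l ∈ Finset.range M, a * a := by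
    simp [Finset.sum_const, Finset.card_range]
    ring
  rw [hMa2, ← Finset.sum_sub_distrib]
  have hsplit : ∀ k ∈ Finset.range M,
      ((∑ l ∈ Finset.range M, ∫ x, g k x * g l x ∂μ) - ∑ l ∈ Finset.range M, a * a)
        ≤ a + 3 * C * a * (2 * (1-e)⁻¹) := by
    intro k hk
    rw [← Finset.sum_sub_distrib]
    have hterm : ∀ l ∈ Finset.range M,
        (∫ x, g k x * g l x ∂μ) - a * a
          ≤ if l = k then a else 3 * C * a * e ^ (Nat.dist k l) := by
      intro l _
      by_cases h : l = k
      · subst h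
        rw [hprod l l le_rfl, if_pos (rfl : l = l)]
        simp only [Nat.sub_self, hI0]
        nlinarith
      · rw [if_neg h]
        have hIval : (∫ x, g k x * g l x ∂μ) = I (Nat.dist k l) := by
          rcases le_or_gt k l with hkl | hkl
          · rw [hprod k l hkl, Nat.dist_eq_sub_of_le hkl]
          · rw [integral_congr_ae (Filter.Eventually.of_forall
              (fun x => mul_comm (g k x) (g l x)))]
            rw [hprod l k hkl.le, Nat.dist_eq_sub_of_le_right hkl.le]
        rw [hIval]
        have := hcov (Nat.dist k l)
        have h1 := abs_le.mp this
        calc I (Nat.dist k l) - a * a ≤ 3 * C * e ^ (Nat.dist k l) * a := h1.2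
          _ = 3 * C * a * e ^ (Nat.dist k l) := by ring
    calc ∑ l ∈ Finset.range M, ((∫ x, g k x * g l x ∂μ) - a * a)
        ≤ ∑ l ∈ Finset.range M, (if l = k then a else 3 * C * a * e ^ (Nat.dist k l)) :=
          Finset.sum_le_sum hterm
      _ = a + ∑ l ∈ (Finset.range M).erase k, 3 * C * a * e ^ (Nat.dist k l) := by
          rw [← Finset.add_sum_erase _ _ hk]
          simp only [if_pos rfl]
          congr 1
          apply Finset.sum_congr rfl
          intro l hl
          rw [if_neg (Finset.mem_erase.mp hl).1]
      _ ≤ a + 3 * C * a * (2 * (1-e)⁻¹) := by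
          gcongr
          rw [← Finset.mul_sum]
          apply mul_le_mul_of_nonneg_left (geom_dist_sum e he0 he1 k M)
          positivity
  calc (∑ k ∈ Finset.range M, ((∑ l ∈ Finset.range M, ∫ x, g k x * g l x ∂μ)
          - ∑ l ∈ Finset.range M, a * a))
      ≤ ∑ k ∈ Finset.range M, (a + 3 * C * a * (2 * (1-e)⁻¹)) :=
        Finset.sum_le_sum hsplit
    _ = M * (a + 3 * C * a * (2 * (1-e)⁻¹)) := by
        rw [Finset.sum_const, Finset.card_range]
        ring
    _ = (1 + 6 * C * (1 - e)⁻¹) * (M * a) := by ring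

lemma ae_tendsto_of_summable_sq (μ : Measure ℝ) [IsProbabilityMeasure μ] (G : ℕ → ℝ → ℝ)
    (hmeas : ∀ j, AEMeasurable (G j) μ)
    (δ : ℕ → ℝ) (hδ0 : ∀ j, 0 ≤ δ j) (hδ : Summable δ)
    (hint : ∀ j, Integrable (fun x => (G j x)^2) μ)
    (hbound : ∀ j, ∫ x, (G j x)^2 ∂μ ≤ δ j) :
    ∀ᵐ x ∂μ, Tendsto (fun j => G j x) atTop (nhds 0) := by
  have hmeas2 : ∀ j, AEMeasurable (fun x => ENNReal.ofReal ((G j x)^2)) μ :=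
    fun j => ((hmeas j).pow_const 2).ennreal_ofReal
  have h1 : ∀ j, ∫⁻ x, ENNReal.ofReal ((G j x)^2) ∂μ = ENNReal.ofReal (∫ x, (G j x)^2 ∂μ) :=
    fun j => (ofReal_integral_eq_lintegral_ofReal (hint j)
      (Filter.Eventually.of_forall fun x => sq_nonneg _)).symm
  have h2 : ∑' j, ∫⁻ x, ENNReal.ofReal ((G j x)^2) ∂μ ≤ ∑' j, ENNReal.ofReal (δ j) :=
    ENNReal.tsum_le_tsum fun j => by
      rw [h1 j]; exact ENNReal.ofReal_le_ofReal (hbound j)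
  have h3 : ∑' j, ENNReal.ofReal (δ j) < ⊤ := by
    rw [← ENNReal.ofReal_tsum_of_nonneg hδ0 hδ]
    exact ENNReal.ofReal_lt_top
  have h4 : ∫⁻ x, ∑' j, ENNReal.ofReal ((G j x)^2) ∂μ < ⊤ := by
    rw [lintegral_tsum hmeas2]
    exact lt_of_le_of_lt h2 h3
  have h5 : ∀ᵐ x ∂μ, (∑' j, ENNReal.ofReal ((G j x)^2)) < ⊤ :=
    ae_lt_top' (AEMeasurable.ennreal_tsum hmeas2) h4.ne
  filter_upwards [h5] with x hx
  have h6 : Tendsto (fun j => ENNReal.ofReal ((G j x)^2)) atTop (nhds 0) :=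
    ENNReal.tendsto_atTop_zero_of_tsum_ne_top hx.ne
  have h7 : Tendsto (fun j => (G j x)^2) atTop (nhds 0) := by
    have := (ENNReal.tendsto_toReal (by norm_num : (0:ENNReal) ≠ ⊤)).comp h6
    simp only [Function.comp_def, ENNReal.toReal_zero] at this
    convert this using 2 with j
    rw [ENNReal.toReal_ofReal (sq_nonneg _)]
  rw [tendsto_zero_iff_abs_tendsto_zero]
  have h8 := (Real.continuous_sqrt.tendsto 0).comp h7
  simp only [Function.comp_def, Real.sqrt_zero] at h8
  have : (fun j => |G j x|) = fun j => Real.sqrt ((G j x)^2) := by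
    funext j
    rw [Real.sqrt_sq_eq_abs]
  show Tendsto (fun j => |G j x|) atTop (nhds 0)
  rw [this]
  exact h8

lemma ncard_filter_eq_sum (m : ℕ) (P : ℕ → Prop) [DecidablePred P] :
    ({k : ℕ | k < m ∧ P k}.ncard : ℝ) = ∑ k ∈ Finset.range m, (if P k then (1:ℝ) else 0) := by
  have h : {k : ℕ | k < m ∧ P k} = ↑((Finset.range m).filter P) := by
    ext k; simp [Finset.mem_filter, Finset.mem_range]
  rw [h, Set.ncard_coe_finset, Finset.sum_boole]

set_option maxHeartbeats 2000000 in
/-- **Theorem 2 (BV2).** Under exponential decay of correlations for BV against `L¹`,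
for a nested sequence of balls with `m ↦ m μ(B_m)` increasing and `μ(B_m) ≥ m^{-1+ε}`,
for a.e. `x` the number of `k < m` with `T^k x ∈ B_m` is asymptotic to `m μ(B_m)`. -/
theorem stmt1
    (μ : Measure ℝ) [IsProbabilityMeasure μ] (T : ℝ → ℝ)
    (hT : MeasurePreserving T μ μ)
    (C τ : ℝ) (hC : 0 < C) (hτ : 0 < τ)
    (hdec : ∀ (n : ℕ) (f g : ℝ → ℝ), Integrable f μ → BoundedVariationOn g Set.univ →
      |(∫ x, f (T^[n] x) * g x ∂μ) - (∫ x, f x ∂μ) * ∫ x, g x ∂μ| ≤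
        C * Real.exp (-τ * n) * (∫ x, |f x| ∂μ) *
          ((⨆ x, |g x|) + (eVariationOn g Set.univ).toReal))
    (c r : ℕ → ℝ) (hr : ∀ m, 0 < r m)
    (hnest : ∀ m, Metric.ball (c (m + 1)) (r (m + 1)) ⊆ Metric.ball (c m) (r m))
    (hmono : Monotone fun m : ℕ => (m : ℝ) * (μ (Metric.ball (c m) (r m))).toReal)
    (ε : ℝ) (hε : 0 < ε) (m₀ : ℕ)
    (hB : ∀ m : ℕ, m₀ ≤ m →
      (m : ℝ) ^ (-1 + ε) ≤ (μ (Metric.ball (c m) (r m))).toReal) :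
    ∀ᵐ x ∂μ, Tendsto (fun m : ℕ =>
        ({k : ℕ | k < m ∧ T^[k] x ∈ Metric.ball (c m) (r m)}.ncard : ℝ) /
          ((m : ℝ) * (μ (Metric.ball (c m) (r m))).toReal))
      atTop (nhds 1) := by
  classical
  set B : ℕ → Set ℝ := fun m => Metric.ball (c m) (r m) with hBdef
  set a : ℕ → ℝ := fun m => (μ (B m)).toReal with hadef
  have hBmeas : ∀ m, MeasurableSet (B m) := fun m => measurableSet_ball
  have ha0 : ∀ m, 0 ≤ a m := fun m => ENNReal.toReal_nonneg
  have hanti : ∀ m m', m ≤ m' → B m' ⊆ B m := by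
    intro m m' h
    induction m', h using Nat.le_induction with
    | base => exact subset_rfl
    | succ n hn ih => exact (hnest n).trans ih
  set M₀ : ℕ := max m₀ 1 with hM₀def
  have hM₀1 : 1 ≤ M₀ := le_max_right _ _
  have hapos : ∀ m, M₀ ≤ m → 0 < a m := by
    intro m hm
    have h1 : m₀ ≤ m := le_trans (le_max_left _ _) hm
    have h2 : (0:ℝ) < (m:ℝ) := by
      have : 1 ≤ m := le_trans hM₀1 hm
      exact_mod_cast this
    exact lt_of_lt_of_le (Real.rpow_pos_of_pos h2 _) (hB m h1)
  have hma : ∀ m : ℕ, M₀ ≤ m → (m:ℝ) ^ ε ≤ (m:ℝ) * a m := by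
    intro m hm
    have h1 : m₀ ≤ m := le_trans (le_max_left _ _) hm
    have h2 : (0:ℝ) < (m:ℝ) := by
      have : 1 ≤ m := le_trans hM₀1 hm
      exact_mod_cast this
    calc (m:ℝ) ^ ε = (m:ℝ) ^ ((1:ℝ) + (-1 + ε)) := by norm_num
      _ = (m:ℝ) ^ (1:ℝ) * (m:ℝ) ^ (-1 + ε) := Real.rpow_add h2 _ _
      _ = (m:ℝ) * (m:ℝ) ^ (-1 + ε) := by rw [Real.rpow_one]
      _ ≤ (m:ℝ) * a m := mul_le_mul_of_nonneg_left (hB m h1) (le_of_lt h2)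
  set sN : ℕ := Nat.ceil (1/ε) + 1 with hsNdef
  have hsN0 : sN ≠ 0 := by omega
  have hsε : 1 < (sN:ℝ) * ε := by
    have h1 : (1/ε) ≤ (Nat.ceil (1/ε) : ℝ) := Nat.le_ceil _
    have h2 : (1/ε) < (sN:ℝ) := by
      rw [hsNdef]
      push_cast
      linarith
    calc (1:ℝ) = (1/ε) * ε := by field_simp
      _ < (sN:ℝ) * ε := by exact mul_lt_mul_of_pos_right h2 hε
  set N : ℕ → ℕ := fun j => (j+1)^sN with hNdef
  have hN1 : ∀ j, j + 1 ≤ N j := fun j => Nat.le_self_pow hsN0 _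
  have hNpos : ∀ j, 0 < N j := fun j => lt_of_lt_of_le (Nat.succ_pos j) (hN1 j)
  have hNmono : Monotone N := fun i j h => Nat.pow_le_pow_left (by omega) _
  have hNdouble : ∀ j, N (j+1) ≤ 2^sN * N j := by
    intro j
    rw [hNdef]
    simp only
    rw [← Nat.mul_pow]
    exact Nat.pow_le_pow_left (by omega) sN
  have hNM : ∀ j, M₀ ≤ j → M₀ ≤ N j := fun j h => le_trans (le_trans h (Nat.le_succ j)) (hN1 j)
  set K : ℝ := 1 + 6 * C * (1 - Real.exp (-τ))⁻¹ with hKdef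
  have hexp1 : Real.exp (-τ) < 1 := Real.exp_lt_one_iff.mpr (by linarith)
  have hKpos : 0 < K := by
    have h1 : 0 < (1 - Real.exp (-τ))⁻¹ := inv_pos.mpr (by linarith)
    have h2 : 0 < 6 * C * (1 - Real.exp (-τ))⁻¹ := by positivity
    rw [hKdef]; linarith
  -- the two sequences of sums
  set Y : ℕ → ℝ → ℝ := fun j x =>
    ∑ k ∈ Finset.range (N (j+1)), (B (N j)).indicator (1:ℝ→ℝ) (T^[k] x) with hYdef
  set Z : ℕ → ℝ → ℝ := fun j x =>
    ∑ k ∈ Finset.range (N j), (B (N (j+1))).indicator (1:ℝ→ℝ) (T^[k] x) with hZdef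
  set DD : ℕ → ℝ := fun j => (N (j+1) : ℝ) * a (N j) with hDDdef
  set DE : ℕ → ℝ := fun j => (N j : ℝ) * a (N (j+1)) with hDEdef
  have hYvar : ∀ j, ∫ x, (Y j x - DD j)^2 ∂μ ≤ K * DD j := fun j =>
    second_moment μ T hT C τ hC hτ hdec (c (N j)) (r (N j)) (N (j+1))
  have hZvar : ∀ j, ∫ x, (Z j x - DE j)^2 ∂μ ≤ K * DE j := fun j =>
    second_moment μ T hT C τ hC hτ hdec (c (N (j+1))) (r (N (j+1))) (N j)
  -- indicator bounds
  have hind01 : ∀ (m : ℕ) (y : ℝ), 0 ≤ (B m).indicator (1:ℝ→ℝ) y ∧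
      (B m).indicator (1:ℝ→ℝ) y ≤ 1 := by
    intro m y
    by_cases h : y ∈ B m <;> simp [Set.indicator_apply, h]
  have hY0 : ∀ j x, 0 ≤ Y j x := fun j x =>
    Finset.sum_nonneg fun k _ => (hind01 _ _).1
  have hZ0 : ∀ j x, 0 ≤ Z j x := fun j x =>
    Finset.sum_nonneg fun k _ => (hind01 _ _).1
  have hYle : ∀ j x, Y j x ≤ N (j+1) := by
    intro j x
    calc Y j x ≤ ∑ k ∈ Finset.range (N (j+1)), (1:ℝ) :=
          Finset.sum_le_sum fun k _ => (hind01 _ _).2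
      _ = N (j+1) := by simp
  have hZle : ∀ j x, Z j x ≤ N j := by
    intro j x
    calc Z j x ≤ ∑ k ∈ Finset.range (N j), (1:ℝ) :=
          Finset.sum_le_sum fun k _ => (hind01 _ _).2
      _ = N j := by simp
  have hYmeas : ∀ j, Measurable (Y j) := fun j =>
    Finset.measurable_sum _ fun k _ =>
      (measurable_one.indicator (hBmeas _)).comp (hT.measurable.iterate k)
  have hZmeas : ∀ j, Measurable (Z j) := fun j =>
    Finset.measurable_sum _ fun k _ =>
      (measurable_one.indicator (hBmeas _)).comp (hT.measurable.iterate k)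
  -- lower bounds for the normalizers
  set q : ℝ := (sN:ℝ) * ε with hqdef
  set β : ℕ → ℝ := fun j => ((j:ℝ)+1)^q with hβdef
  have hβpos : ∀ j, 0 < β j := fun j => Real.rpow_pos_of_pos (by positivity) _
  have hNrpow : ∀ j : ℕ, ((j:ℝ)+1)^q ≤ ((N j : ℕ):ℝ)^ε := by
    intro j
    have h1 : ((N j : ℕ):ℝ) = ((j:ℝ)+1)^(sN:ℕ) := by
      rw [hNdef]; push_cast; ring
    rw [h1, ← Real.rpow_natCast ((j:ℝ)+1) sN, ← Real.rpow_mul (by positivity)]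
  have hDD_lb : ∀ j, M₀ ≤ j → β j ≤ DD j := by
    intro j hj
    have h1 : ((N j:ℕ):ℝ)^ε ≤ (N j : ℝ) * a (N j) := hma (N j) (hNM j hj)
    have h2 : (N j : ℝ) * a (N j) ≤ DD j := by
      rw [hDDdef]
      exact mul_le_mul_of_nonneg_right (by exact_mod_cast hNmono (Nat.le_succ j)) (ha0 _)
    exact le_trans (le_trans (hNrpow j) h1) h2
  have hDE_lb : ∀ j, M₀ ≤ j → β j / 2^sN ≤ DE j := by
    intro j hj
    have hj1 : M₀ ≤ N (j+1) := hNM (j+1) (le_trans hj (Nat.le_succ j))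
    have h1 : ((N (j+1):ℕ):ℝ)^ε ≤ (N (j+1) : ℝ) * a (N (j+1)) := hma _ hj1
    have h2 : β j ≤ ((N (j+1):ℕ):ℝ)^ε := by
      refine le_trans (hNrpow j) ?_
      apply Real.rpow_le_rpow (by positivity) ?_ (le_of_lt hε)
      exact_mod_cast hNmono (Nat.le_succ j)
    have h3 : (N (j+1) : ℝ) ≤ 2^sN * (N j : ℝ) := by exact_mod_cast hNdouble j
    have h4 : (N (j+1) : ℝ) * a (N (j+1)) ≤ (2^sN * (N j : ℝ)) * a (N (j+1)) :=
      mul_le_mul_of_nonneg_right h3 (ha0 _)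
    rw [div_le_iff₀ (by positivity : (0:ℝ) < 2^sN)]
    calc β j ≤ (N (j+1) : ℝ) * a (N (j+1)) := le_trans h2 h1
      _ ≤ (2^sN * (N j : ℝ)) * a (N (j+1)) := h4
      _ = DE j * 2^sN := by rw [hDEdef]; ring
  -- summable bound
  set δ : ℕ → ℝ := fun j => (K * 2^sN) / β (j + M₀) with hδdef
  have hδ0 : ∀ j, 0 ≤ δ j := by
    intro j
    rw [hδdef]
    have := hβpos (j + M₀)
    positivity
  have hδs : Summable δ := by
    have hbase : Summable (fun n : ℕ => ((n:ℝ))^(-q)) :=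
      Real.summable_nat_rpow.mpr (by linarith)
    have h1 : Summable (fun n : ℕ => (((n + (M₀+1) :ℕ)):ℝ)^(-q)) :=
      (summable_nat_add_iff (M₀+1)).mpr hbase
    have h2 : Summable (fun n : ℕ => (K * 2^sN) * (((n + (M₀+1) :ℕ)):ℝ)^(-q)) :=
      h1.mul_left _
    apply h2.congr
    intro n
    rw [hδdef, hβdef]
    simp only
    rw [div_eq_mul_inv, Real.rpow_neg (by positivity)]
    congr 3
    push_cast
    ring
  -- apply the convergence lemma to the Y family
  have haeY : ∀ᵐ x ∂μ, Tendsto (fun j => Y (j + M₀) x / DD (j + M₀) - 1) atTop (nhds 0) := by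
    apply ae_tendsto_of_summable_sq μ _ ?_ δ hδ0 hδs ?_ ?_
    · intro j
      exact (((hYmeas (j+M₀)).div_const _).sub_const 1).aemeasurable
    · intro j
      have hDpos : 0 < DD (j+M₀) := lt_of_lt_of_le (hβpos _) (hDD_lb _ (Nat.le_add_left _ _))
      apply Integrable.mono' (integrable_const (((N (j+M₀+1):ℝ) / DD (j+M₀) + 1)^2))
        ((((hYmeas (j+M₀)).div_const _).sub_const 1).pow_const 2).aestronglyMeasurable
      apply Filter.Eventually.of_forall
      intro x
      rw [Real.norm_eq_abs, abs_pow, sq_abs]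
      apply sq_le_sq'
      · have h1 : 0 ≤ Y (j+M₀) x / DD (j+M₀) := div_nonneg (hY0 _ _) hDpos.le
        have h2 : (0:ℝ) ≤ (N (j+M₀+1):ℝ) / DD (j+M₀) := div_nonneg (by positivity) hDpos.le
        nlinarith
      · have h1 : Y (j+M₀) x / DD (j+M₀) ≤ (N (j+M₀+1):ℝ) / DD (j+M₀) :=
          div_le_div_of_nonneg_right (hYle _ _) hDpos.le
        linarith
    · intro j
      have hDpos : 0 < DD (j+M₀) := lt_of_lt_of_le (hβpos _) (hDD_lb _ (Nat.le_add_left _ _))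
      have heq : ∀ x, (Y (j+M₀) x / DD (j+M₀) - 1)^2
          = (Y (j+M₀) x - DD (j+M₀))^2 * ((DD (j+M₀))^2)⁻¹ := by
        intro x
        field_simp
      rw [integral_congr_ae (Filter.Eventually.of_forall heq), integral_mul_const]
      calc (∫ x, (Y (j+M₀) x - DD (j+M₀))^2 ∂μ) * ((DD (j+M₀))^2)⁻¹
          ≤ (K * DD (j+M₀)) * ((DD (j+M₀))^2)⁻¹ := by
            apply mul_le_mul_of_nonneg_right (hYvar _) (by positivity)
        _ = K / DD (j+M₀) := by field_simp
        _ ≤ δ j := by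
            rw [hδdef]
            have hb := hDD_lb (j+M₀) (Nat.le_add_left _ _)
            have hβp := hβpos (j+M₀)
            rw [div_le_div_iff₀ hDpos hβp]
            have h2s : (1:ℝ) ≤ 2^sN := one_le_pow₀ (by norm_num)
            calc K * β (j+M₀) ≤ K * DD (j+M₀) := mul_le_mul_of_nonneg_left hb hKpos.le
              _ ≤ (K * 2^sN) * DD (j+M₀) :=
                mul_le_mul_of_nonneg_right
                  (by nlinarith [mul_nonneg hKpos.le (sub_nonneg.mpr h2s)] : K ≤ K * 2^sN)
                  (le_trans (hβpos _).le hb)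
  -- apply the convergence lemma to the Z family
  have haeZ : ∀ᵐ x ∂μ, Tendsto (fun j => Z (j + M₀) x / DE (j + M₀) - 1) atTop (nhds 0) := by
    apply ae_tendsto_of_summable_sq μ _ ?_ δ hδ0 hδs ?_ ?_
    · intro j
      exact (((hZmeas (j+M₀)).div_const _).sub_const 1).aemeasurable
    · intro j
      have hDpos : 0 < DE (j+M₀) := by
        have := hDE_lb (j+M₀) (Nat.le_add_left _ _)
        have hb := hβpos (j+M₀)
        have : (0:ℝ) < β (j+M₀) / 2^sN := by positivity
        linarith [hDE_lb (j+M₀) (Nat.le_add_left M₀ j)]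
      apply Integrable.mono' (integrable_const (((N (j+M₀):ℝ) / DE (j+M₀) + 1)^2))
        ((((hZmeas (j+M₀)).div_const _).sub_const 1).pow_const 2).aestronglyMeasurable
      apply Filter.Eventually.of_forall
      intro x
      rw [Real.norm_eq_abs, abs_pow, sq_abs]
      apply sq_le_sq'
      · have h1 : 0 ≤ Z (j+M₀) x / DE (j+M₀) := div_nonneg (hZ0 _ _) hDpos.le
        have h2 : (0:ℝ) ≤ (N (j+M₀):ℝ) / DE (j+M₀) := div_nonneg (by positivity) hDpos.le
        nlinarith
      · have h1 : Z (j+M₀) x / DE (j+M₀) ≤ (N (j+M₀):ℝ) / DE (j+M₀) :=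
          div_le_div_of_nonneg_right (hZle _ _) hDpos.le
        linarith
    · intro j
      have hb := hDE_lb (j+M₀) (Nat.le_add_left M₀ j)
      have hβp := hβpos (j+M₀)
      have hDpos : 0 < DE (j+M₀) := by
        have : (0:ℝ) < β (j+M₀) / 2^sN := by positivity
        linarith
      have heq : ∀ x, (Z (j+M₀) x / DE (j+M₀) - 1)^2
          = (Z (j+M₀) x - DE (j+M₀))^2 * ((DE (j+M₀))^2)⁻¹ := by
        intro x
        field_simp
      rw [integral_congr_ae (Filter.Eventually.of_forall heq), integral_mul_const]
      calc (∫ x, (Z (j+M₀) x - DE (j+M₀))^2 ∂μ) * ((DE (j+M₀))^2)⁻¹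
          ≤ (K * DE (j+M₀)) * ((DE (j+M₀))^2)⁻¹ := by
            apply mul_le_mul_of_nonneg_right (hZvar _) (by positivity)
        _ = K / DE (j+M₀) := by field_simp
        _ ≤ δ j := by
            rw [hδdef]
            rw [div_le_div_iff₀ hDpos hβp]
            have h2s : (0:ℝ) < 2^sN := by positivity
            have h3 : β (j+M₀) ≤ DE (j+M₀) * 2^sN := by
              rw [div_le_iff₀ h2s] at hb
              exact hb
            calc K * β (j+M₀) ≤ K * (DE (j+M₀) * 2^sN) := mul_le_mul_of_nonneg_left h3 hKpos.le
              _ = (K * 2^sN) * DE (j+M₀) := by ring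
  -- ratio limits
  have hbase1 : Tendsto (fun j : ℕ => ((j:ℝ)+1)/((j:ℝ)+2)) atTop (nhds 1) := by
    have h0 : Tendsto (fun j : ℕ => 1/((j:ℝ)+2)) atTop (nhds 0) := by
      have h := (tendsto_add_atTop_iff_nat 1).mpr (tendsto_one_div_add_atTop_nhds_zero_nat (𝕜 := ℝ))
      apply h.congr
      intro n
      push_cast
      ring
    have h1 := tendsto_const_nhds (x := (1:ℝ)) (f := atTop (α := ℕ)) |>.sub h0
    rw [sub_zero] at h1
    apply h1.congr
    intro j
    have : ((j:ℝ)+2) ≠ 0 := by positivity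
    field_simp
    ring
  have hbase2 : Tendsto (fun j : ℕ => ((j:ℝ)+2)/((j:ℝ)+1)) atTop (nhds 1) := by
    have h0 : Tendsto (fun j : ℕ => 1/((j:ℝ)+1)) atTop (nhds 0) :=
      tendsto_one_div_add_atTop_nhds_zero_nat
    have h1 := tendsto_const_nhds (x := (1:ℝ)) (f := atTop (α := ℕ)) |>.add h0
    rw [add_zero] at h1
    apply h1.congr
    intro j
    have : ((j:ℝ)+1) ≠ 0 := by positivity
    field_simp
    ring
  have hrat1 : Tendsto (fun j => ((N j:ℝ))/(N (j+1))) atTop (nhds 1) := by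
    have h := hbase1.pow sN
    rw [one_pow] at h
    apply h.congr
    intro j
    rw [hNdef]
    push_cast
    rw [div_pow]
    ring
  have hrat2 : Tendsto (fun j => ((N (j+1):ℝ))/(N j)) atTop (nhds 1) := by
    have h := hbase2.pow sN
    rw [one_pow] at h
    apply h.congr
    intro j
    rw [hNdef]
    push_cast
    rw [div_pow]
    ring
  -- main a.e. statement
  filter_upwards [haeY, haeZ] with x hxY hxZ
  have hYx : Tendsto (fun j => Y j x / DD j) atTop (nhds 1) := by
    have h1 : Tendsto (fun j => Y (j+M₀) x / DD (j+M₀)) atTop (nhds 1) := by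
      have h := hxY.add_const 1
      rw [zero_add] at h
      apply h.congr
      intro j
      ring
    exact (tendsto_add_atTop_iff_nat M₀).mp h1
  have hZx : Tendsto (fun j => Z j x / DE j) atTop (nhds 1) := by
    have h1 : Tendsto (fun j => Z (j+M₀) x / DE (j+M₀)) atTop (nhds 1) := by
      have h := hxZ.add_const 1
      rw [zero_add] at h
      apply h.congr
      intro j
      ring
    exact (tendsto_add_atTop_iff_nat M₀).mp h1
  set LB : ℕ → ℝ := fun j => (Z j x / DE j) * ((N j:ℝ)/(N (j+1))) with hLBdef
  set UB : ℕ → ℝ := fun j => (Y j x / DD j) * ((N (j+1):ℝ)/(N j)) with hUBdef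
  have hLBlim : Tendsto LB atTop (nhds 1) := by
    have := hZx.mul hrat1
    rw [mul_one] at this
    exact this
  have hUBlim : Tendsto UB atTop (nhds 1) := by
    have := hYx.mul hrat2
    rw [mul_one] at this
    exact this
  -- the index function
  set ι : ℕ → ℕ := fun m => Nat.findGreatest (fun j => N j ≤ m) m with hιdef
  have hN0 : N 0 = 1 := by rw [hNdef]; simp
  have hι_le : ∀ m, 1 ≤ m → N (ι m) ≤ m := by
    intro m hm
    exact Nat.findGreatest_spec (P := fun j => N j ≤ m) (Nat.zero_le m) (by show N 0 ≤ m; rw [hN0]; exact hm)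
  have hι_lt : ∀ m, 1 ≤ m → m < N (ι m + 1) := by
    intro m hm
    by_contra h
    push_neg at h
    have hk : ι m + 1 ≤ m := le_trans (le_trans (by omega) (hN1 (ι m + 1))) h
    exact Nat.findGreatest_is_greatest (P := fun j => N j ≤ m) (Nat.lt_succ_self _) hk h
  have hι_tend : Tendsto ι atTop atTop := by
    apply tendsto_atTop_atTop.mpr
    intro J
    refine ⟨N J, fun m hm => ?_⟩
    exact Nat.le_findGreatest (P := fun j => N j ≤ m) (le_trans (le_trans (Nat.le_succ J) (hN1 J)) hm) hm
  have hι_geM₀ : ∀ m, N M₀ ≤ m → M₀ ≤ ι m :=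
    fun m h => Nat.le_findGreatest (P := fun j => N j ≤ m) (le_trans (le_trans (Nat.le_succ M₀) (hN1 M₀)) h) h
  -- final squeeze
  apply tendsto_of_tendsto_of_tendsto_of_le_of_le' (hLBlim.comp hι_tend) (hUBlim.comp hι_tend)
  · -- lower bound eventually
    filter_upwards [eventually_ge_atTop (max (N M₀) M₀)] with m hm
    have hmM₀ : M₀ ≤ m := le_trans (le_max_right _ _) hm
    have hm1 : 1 ≤ m := le_trans hM₀1 hmM₀
    have hjM₀ : M₀ ≤ ι m := hι_geM₀ m (le_trans (le_max_left _ _) hm)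
    set j := ι m with hjdef
    have hNjm : N j ≤ m := hι_le m hm1
    have hmNj1 : m < N (j+1) := hι_lt m hm1
    have hdm : 0 < (m:ℝ) * a m := mul_pos (by exact_mod_cast hm1) (hapos m hmM₀)
    have haj1 : 0 < a (N (j+1)) := hapos _ (hNM (j+1) (le_trans hjM₀ (Nat.le_succ j)))
    have hD2pos : 0 < (N (j+1):ℝ) * a (N (j+1)) :=
      mul_pos (by exact_mod_cast hNpos (j+1)) haj1
    have hle2 : (m:ℝ) * a m ≤ (N (j+1):ℝ) * a (N (j+1)) := hmono (le_of_lt hmNj1)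
    -- counting
    have hcount : ({k : ℕ | k < m ∧ T^[k] x ∈ B m}.ncard : ℝ)
        = ∑ k ∈ Finset.range m, (B m).indicator (1:ℝ→ℝ) (T^[k] x) := by
      rw [ncard_filter_eq_sum m (fun k => T^[k] x ∈ B m)]
      apply Finset.sum_congr rfl
      intro k _
      rw [Set.indicator_apply]
      simp
    have hZleS : Z j x ≤ ∑ k ∈ Finset.range m, (B m).indicator (1:ℝ→ℝ) (T^[k] x) := by
      calc Z j x ≤ ∑ k ∈ Finset.range (N j), (B m).indicator (1:ℝ→ℝ) (T^[k] x) := by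
            apply Finset.sum_le_sum
            intro k _
            exact Set.indicator_le_indicator_of_subset (hanti m (N (j+1)) (le_of_lt hmNj1))
              (fun _ => zero_le_one) _
        _ ≤ ∑ k ∈ Finset.range m, (B m).indicator (1:ℝ→ℝ) (T^[k] x) :=
            Finset.sum_le_sum_of_subset_of_nonneg (Finset.range_subset_range.mpr hNjm)
              (fun k _ _ => (hind01 _ _).1)
    have hLBeq : LB j = Z j x / ((N (j+1):ℝ) * a (N (j+1))) := by
      rw [hLBdef, hDEdef]
      simp only
      have h1 : (N j : ℝ) ≠ 0 := by
        have := hNpos j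
        positivity
      have h2 : (N (j+1) : ℝ) ≠ 0 := by
        have := hNpos (j+1)
        positivity
      have h3 : a (N (j+1)) ≠ 0 := ne_of_gt haj1
      field_simp
    show LB j ≤ _
    rw [hLBeq, hcount]
    calc Z j x / ((N (j+1):ℝ) * a (N (j+1)))
        = Z j x * (1/((N (j+1):ℝ) * a (N (j+1)))) := by rw [mul_one_div]
      _ ≤ Z j x * (1/((m:ℝ) * a m)) :=
          mul_le_mul_of_nonneg_left (one_div_le_one_div_of_le hdm hle2) (hZ0 j x)
      _ = Z j x / ((m:ℝ) * a m) := by rw [mul_one_div]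
      _ ≤ (∑ k ∈ Finset.range m, (B m).indicator (1:ℝ→ℝ) (T^[k] x)) / ((m:ℝ) * a m) :=
          div_le_div_of_nonneg_right hZleS hdm.le
  · -- upper bound eventually
    filter_upwards [eventually_ge_atTop (max (N M₀) M₀)] with m hm
    have hmM₀ : M₀ ≤ m := le_trans (le_max_right _ _) hm
    have hm1 : 1 ≤ m := le_trans hM₀1 hmM₀
    have hjM₀ : M₀ ≤ ι m := hι_geM₀ m (le_trans (le_max_left _ _) hm)
    set j := ι m with hjdef
    have hNjm : N j ≤ m := hι_le m hm1
    have hmNj1 : m < N (j+1) := hι_lt m hm1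
    have hdm : 0 < (m:ℝ) * a m := mul_pos (by exact_mod_cast hm1) (hapos m hmM₀)
    have haj : 0 < a (N j) := hapos _ (hNM j hjM₀)
    have hD1pos : 0 < (N j:ℝ) * a (N j) := mul_pos (by exact_mod_cast hNpos j) haj
    have hle1 : (N j:ℝ) * a (N j) ≤ (m:ℝ) * a m := hmono hNjm
    have hcount : ({k : ℕ | k < m ∧ T^[k] x ∈ B m}.ncard : ℝ)
        = ∑ k ∈ Finset.range m, (B m).indicator (1:ℝ→ℝ) (T^[k] x) := by
      rw [ncard_filter_eq_sum m (fun k => T^[k] x ∈ B m)]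
      apply Finset.sum_congr rfl
      intro k _
      rw [Set.indicator_apply]
      simp
    have hSleY : (∑ k ∈ Finset.range m, (B m).indicator (1:ℝ→ℝ) (T^[k] x)) ≤ Y j x := by
      calc (∑ k ∈ Finset.range m, (B m).indicator (1:ℝ→ℝ) (T^[k] x))
          ≤ ∑ k ∈ Finset.range m, (B (N j)).indicator (1:ℝ→ℝ) (T^[k] x) := by
            apply Finset.sum_le_sum
            intro k _
            exact Set.indicator_le_indicator_of_subset (hanti (N j) m hNjm)
              (fun _ => zero_le_one) _
        _ ≤ Y j x :=
            Finset.sum_le_sum_of_subset_of_nonneg (Finset.range_subset_range.mpr (le_of_lt hmNj1))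
              (fun k _ _ => (hind01 _ _).1)
    have hUBeq : UB j = Y j x / ((N j:ℝ) * a (N j)) := by
      rw [hUBdef, hDDdef]
      simp only
      have h1 : (N j : ℝ) ≠ 0 := by
        have := hNpos j
        positivity
      have h2 : (N (j+1) : ℝ) ≠ 0 := by
        have := hNpos (j+1)
        positivity
      have h3 : a (N j) ≠ 0 := ne_of_gt haj
      field_simp
    show _ ≤ UB j
    rw [hUBeq, hcount]
    calc (∑ k ∈ Finset.range m, (B m).indicator (1:ℝ→ℝ) (T^[k] x)) / ((m:ℝ) * a m)
        ≤ Y j x / ((m:ℝ) * a m) := div_le_div_of_nonneg_right hSleY hdm.le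
      _ = Y j x * (1/((m:ℝ) * a m)) := by rw [mul_one_div]
      _ ≤ Y j x * (1/((N j:ℝ) * a (N j))) :=
          mul_le_mul_of_nonneg_left (one_div_le_one_div_of_le hD1pos hle1) (hY0 j x)
      _ = Y j x / ((N j:ℝ) * a (N j)) := by rw [mul_one_div]
end

section
/- Let (X,T,μ) be a system with exponential decay of correlations for α-Hölder continuous functions, with constants C, τ > 0. Suppose there are constants C', β > 0 and a point x₀ ∈ X such that μ(B(x₀, r+ρ) \ B(x₀, r)) ≤ C' ρ^β for all ρ ≥ 0 and all 0 < r < 1. Let (B_m)_{m≥1} be a decreasing (nested) sequence of balls with common centre x₀ and radii r_m < 1, and suppose there are ε > 0 and m₀ ∈ ℕ such that μ(B_m) ≥ m^{-1}(log m)^{2+ε} for all m ≥ m₀. Then μ(H_ea) = 1, where H_ea is the set of eventually always hitting points for (B_m). -/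
set_option maxHeartbeats 1000000

open MeasureTheory Filter

/-- The `α`-Hölder norm: `sup|f| + inf{K ≥ 0 : |f(x) - f(y)| ≤ K d(x,y)^α}`. -/
noncomputable def holderNorm {X : Type*} [MetricSpace X] (α : ℝ) (f : X → ℝ) : ℝ :=
  (⨆ x, |f x|) + sInf {K : ℝ | 0 ≤ K ∧ ∀ x y, |f x - f y| ≤ K * dist x y ^ α}

noncomputable def cutoff {X : Type*} [MetricSpace X] (x₀ : X) (s ρ : ℝ) (x : X) : ℝ :=
  min 1 (max 0 ((s + ρ - dist x x₀) / ρ))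

section cutoff
variable {X : Type*} [MetricSpace X] (x₀ : X) (s ρ : ℝ)

lemma cutoff_nonneg (x : X) : 0 ≤ cutoff x₀ s ρ x := le_min one_pos.le (le_max_left _ _)

lemma cutoff_le_one (x : X) : cutoff x₀ s ρ x ≤ 1 := min_le_left _ _

lemma cutoff_continuous : Continuous (cutoff x₀ s ρ) := by
  unfold cutoff
  fun_prop

lemma cutoff_eq_one (hρ : 0 < ρ) {x : X} (hx : x ∈ Metric.ball x₀ s) : cutoff x₀ s ρ x = 1 := by
  have hd : dist x x₀ < s := Metric.mem_ball.1 hx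
  have h1 : (1:ℝ) ≤ (s + ρ - dist x x₀) / ρ := by
    rw [le_div_iff₀ hρ]; linarith
  have : (1:ℝ) ≤ max 0 ((s + ρ - dist x x₀) / ρ) := le_trans h1 (le_max_right _ _)
  unfold cutoff
  exact min_eq_left this

lemma cutoff_le_indicator (hρ : 0 < ρ) (x : X) :
    cutoff x₀ s ρ x ≤ (Metric.ball x₀ (s + ρ)).indicator (fun _ => (1:ℝ)) x := by
  by_cases hx : x ∈ Metric.ball x₀ (s + ρ)
  · rw [Set.indicator_of_mem hx]; exact cutoff_le_one _ _ _ _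
  · rw [Set.indicator_of_notMem hx]
    have hd : s + ρ ≤ dist x x₀ := by
      by_contra h; exact hx (Metric.mem_ball.2 (lt_of_not_ge h))
    have : (s + ρ - dist x x₀) / ρ ≤ 0 :=
      div_nonpos_of_nonpos_of_nonneg (by linarith) hρ.le
    unfold cutoff
    have : max 0 ((s + ρ - dist x x₀) / ρ) = 0 := max_eq_left this
    rw [this]
    exact min_le_right _ _

private lemma abs_min_sub_min (c a b : ℝ) : |min c a - min c b| ≤ |a - b| := by
  rcases le_total a b with h | h <;>
    rcases le_total c a with h1 | h1 <;>
      rcases le_total c b with h2 | h2 <;>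
        simp [min_eq_left, min_eq_right, h1, h2, abs_le] <;>
          constructor <;> linarith [le_abs_self (a - b), neg_abs_le (a - b)]

private lemma abs_max_sub_max (c a b : ℝ) : |max c a - max c b| ≤ |a - b| := by
  rcases le_total a b with h | h <;>
    rcases le_total c a with h1 | h1 <;>
      rcases le_total c b with h2 | h2 <;>
        simp [max_eq_left, max_eq_right, h1, h2, abs_le] <;>
          constructor <;> linarith [le_abs_self (a - b), neg_abs_le (a - b)]

lemma cutoff_lip (hρ : 0 < ρ) (x y : X) :
    |cutoff x₀ s ρ x - cutoff x₀ s ρ y| ≤ dist x y / ρ := by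
  unfold cutoff
  refine le_trans (abs_min_sub_min _ _ _) (le_trans (abs_max_sub_max _ _ _) ?_)
  rw [div_sub_div_same, abs_div, abs_of_pos hρ]
  gcongr
  have h1 : s + ρ - dist x x₀ - (s + ρ - dist y x₀) = dist y x₀ - dist x x₀ := by ring
  rw [h1]
  calc |dist y x₀ - dist x x₀| ≤ dist y x := abs_dist_sub_le y x x₀
    _ = dist x y := dist_comm y x

lemma cutoff_holder {α : ℝ} (hα : 0 < α) (hα1 : α ≤ 1) (hρ : 0 < ρ) (hρ1 : ρ ≤ 1) (x y : X) :
    |cutoff x₀ s ρ x - cutoff x₀ s ρ y| ≤ ρ ^ (-α) * dist x y ^ α := by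
  rcases eq_or_lt_of_le (dist_nonneg (x := x) (y := y)) with hd0 | hd
  · have hxy : x = y := eq_of_dist_eq_zero hd0.symm
    subst hxy
    simp
    positivity
  · have key : ρ ^ (-α) * dist x y ^ α = (dist x y / ρ) ^ α := by
      rw [Real.div_rpow dist_nonneg hρ.le, Real.rpow_neg hρ.le]
      ring
    rw [key]
    rcases le_total (dist x y) ρ with h | h
    · refine le_trans (cutoff_lip x₀ s ρ hρ x y) ?_
      have h1 : dist x y / ρ ≤ 1 := (div_le_one hρ).2 h
      have h0 : 0 < dist x y / ρ := div_pos hd hρ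
      calc dist x y / ρ = (dist x y / ρ) ^ (1:ℝ) := (Real.rpow_one _).symm
        _ ≤ (dist x y / ρ) ^ α := Real.rpow_le_rpow_of_exponent_ge h0 h1 hα1
    · have h1 : (1:ℝ) ≤ dist x y / ρ := (one_le_div hρ).2 h
      have hb : |cutoff x₀ s ρ x - cutoff x₀ s ρ y| ≤ 1 := by
        rw [abs_le]
        constructor <;>
          nlinarith [cutoff_nonneg x₀ s ρ x, cutoff_nonneg x₀ s ρ y,
            cutoff_le_one x₀ s ρ x, cutoff_le_one x₀ s ρ y]
      exact hb.trans (Real.one_le_rpow h1 hα.le)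

end cutoff

section norm
variable {X : Type*} [MetricSpace X] (x₀ : X) {s ρ α : ℝ}

lemma holderNorm_cutoff_le (hα : 0 < α) (hα1 : α ≤ 1) (hρ : 0 < ρ) (hρ1 : ρ ≤ 1) :
    holderNorm α (cutoff x₀ s ρ) ≤ 1 + ρ ^ (-α) := by
  have : Nonempty X := ⟨x₀⟩
  unfold holderNorm
  have h1 : (⨆ x, |cutoff x₀ s ρ x|) ≤ 1 :=
    ciSup_le fun x => abs_le.2 ⟨by linarith [cutoff_nonneg x₀ s ρ x], cutoff_le_one x₀ s ρ x⟩
  have h2 : sInf {K : ℝ | 0 ≤ K ∧ ∀ x y, |cutoff x₀ s ρ x - cutoff x₀ s ρ y| ≤ K * dist x y ^ α}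
      ≤ ρ ^ (-α) := by
    apply csInf_le ⟨0, fun K hK => hK.1⟩
    exact ⟨Real.rpow_nonneg hρ.le _, cutoff_holder x₀ s ρ hα hα1 hρ hρ1⟩
  linarith

lemma holderNorm_cutoff_nonneg (hα : 0 < α) (hα1 : α ≤ 1) (hρ : 0 < ρ) (hρ1 : ρ ≤ 1) :
    0 ≤ holderNorm α (cutoff x₀ s ρ) := by
  have : Nonempty X := ⟨x₀⟩
  unfold holderNorm
  have h1 : (0:ℝ) ≤ ⨆ x, |cutoff x₀ s ρ x| := by
    refine le_trans (abs_nonneg (cutoff x₀ s ρ x₀))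
      (le_ciSup (f := fun x => |cutoff x₀ s ρ x|) ⟨1, ?_⟩ x₀)
    rintro y ⟨x, rfl⟩
    exact abs_le.2 ⟨by linarith [cutoff_nonneg x₀ s ρ x], cutoff_le_one x₀ s ρ x⟩
  have h2 : (0:ℝ) ≤ sInf {K : ℝ | 0 ≤ K ∧ ∀ x y,
      |cutoff x₀ s ρ x - cutoff x₀ s ρ y| ≤ K * dist x y ^ α} := by
    refine le_csInf ⟨ρ ^ (-α), ?_⟩ fun K hK => hK.1
    exact ⟨Real.rpow_nonneg hρ.le _, cutoff_holder x₀ s ρ hα hα1 hρ hρ1⟩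
  linarith

end norm

section corr
variable {X : Type*} [MetricSpace X] [MeasurableSpace X] [BorelSpace X]

lemma corr_bound (μ : Measure X) [IsProbabilityMeasure μ] (T : X → X)
    (hT : MeasurePreserving T μ μ)
    {α : ℝ} (hα : 0 < α) (hα1 : α ≤ 1) {C τ : ℝ} (hC : 0 < C)
    (hdec : ∀ (n : ℕ) (f g : X → ℝ),
      (∃ M, ∀ x, |f x| ≤ M) → (∃ K ≥ 0, ∀ x y, |f x - f y| ≤ K * dist x y ^ α) →
      (∃ M, ∀ x, |g x| ≤ M) → (∃ K ≥ 0, ∀ x y, |g x - g y| ≤ K * dist x y ^ α) →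
      |(∫ x, f (T^[n] x) * g x ∂μ) - (∫ x, f x ∂μ) * ∫ x, g x ∂μ| ≤
        C * Real.exp (-τ * n) * holderNorm α f * holderNorm α g)
    {C' β : ℝ} (hC' : 0 < C') (hβ : 0 < β) (x₀ : X)
    (hann : ∀ ρ : ℝ, 0 ≤ ρ → ∀ s : ℝ, 0 < s → s < 1 →
      (μ (Metric.ball x₀ (s + ρ) \ Metric.ball x₀ s)).toReal ≤ C' * ρ ^ β)
    {s ρ : ℝ} (hs : 0 < s) (hs1 : s < 1) (hρ : 0 < ρ) (hρ1 : ρ ≤ 1) (n : ℕ) :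
    (μ (Metric.ball x₀ s ∩ (T^[n]) ⁻¹' (Metric.ball x₀ s))).toReal ≤
      ((μ (Metric.ball x₀ s)).toReal + C' * ρ ^ β) ^ 2
        + C * Real.exp (-τ * n) * (1 + ρ ^ (-α)) ^ 2 := by
  set φ := cutoff x₀ s ρ with hφdef
  set B := Metric.ball x₀ s with hBdef
  have hmφ : Measurable φ := (cutoff_continuous x₀ s ρ).measurable
  have hφ01 : ∀ x, 0 ≤ φ x ∧ φ x ≤ 1 := fun x => ⟨cutoff_nonneg x₀ s ρ x, cutoff_le_one x₀ s ρ x⟩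
  have hmT : Measurable (T^[n]) := hT.measurable.iterate n
  -- integrability
  have hintφ : Integrable φ μ := by
    refine Integrable.mono' (integrable_const 1) hmφ.aestronglyMeasurable ?_
    filter_upwards with x
    rw [Real.norm_eq_abs, abs_le]
    exact ⟨by linarith [(hφ01 x).1], (hφ01 x).2⟩
  have hintp : Integrable (fun x => φ (T^[n] x) * φ x) μ := by
    refine Integrable.mono' (integrable_const 1) ((hmφ.comp hmT).mul hmφ).aestronglyMeasurable ?_
    filter_upwards with x
    rw [Real.norm_eq_abs, abs_le]
    constructor <;> nlinarith [(hφ01 x).1, (hφ01 x).2, (hφ01 (T^[n] x)).1, (hφ01 (T^[n] x)).2]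
  -- step 1 : measure of intersection ≤ ∫ φ∘Tⁿ ⬝ φ
  have hmB : MeasurableSet B := Metric.isOpen_ball.measurableSet
  have hmS : MeasurableSet (B ∩ (T^[n]) ⁻¹' B) := hmB.inter (hmT hmB)
  have step1 : (μ (B ∩ (T^[n]) ⁻¹' B)).toReal ≤ ∫ x, φ (T^[n] x) * φ x ∂μ := by
    have heq : (μ (B ∩ (T^[n]) ⁻¹' B)).toReal
        = ∫ x, (B ∩ (T^[n]) ⁻¹' B).indicator (fun _ => (1:ℝ)) x ∂μ := by
      rw [integral_indicator_const (1:ℝ) hmS, smul_eq_mul, mul_one]; rfl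
    rw [heq]
    refine integral_mono ((integrable_const (1:ℝ)).indicator hmS) hintp ?_
    intro x
    by_cases hx : x ∈ B ∩ (T^[n]) ⁻¹' B
    · rw [Set.indicator_of_mem hx]
      have h1 : φ x = 1 := cutoff_eq_one x₀ s ρ hρ hx.1
      have h2 : φ (T^[n] x) = 1 := cutoff_eq_one x₀ s ρ hρ hx.2
      show (1:ℝ) ≤ φ (T^[n] x) * φ x
      rw [h1, h2]; norm_num
    · rw [Set.indicator_of_notMem hx]
      show (0:ℝ) ≤ φ (T^[n] x) * φ x
      exact mul_nonneg (hφ01 _).1 (hφ01 _).1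
  -- step 2 : ∫ φ ≤ a + C' ρ ^ β
  have hμfin : μ (Metric.ball x₀ (s + ρ)) ≠ ⊤ := measure_ne_top μ _
  have step2 : ∫ x, φ x ∂μ ≤ (μ B).toReal + C' * ρ ^ β := by
    have h1 : ∫ x, φ x ∂μ ≤ (μ (Metric.ball x₀ (s + ρ))).toReal := by
      have heq : (μ (Metric.ball x₀ (s + ρ))).toReal
          = ∫ x, (Metric.ball x₀ (s + ρ)).indicator (fun _ => (1:ℝ)) x ∂μ := by
        rw [integral_indicator_const (1:ℝ) Metric.isOpen_ball.measurableSet, smul_eq_mul, mul_one]; rfl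
      rw [heq]
      exact integral_mono hintφ ((integrable_const (1:ℝ)).indicator
        Metric.isOpen_ball.measurableSet) (cutoff_le_indicator x₀ s ρ hρ)
    have hsub : B ⊆ Metric.ball x₀ (s + ρ) := Metric.ball_subset_ball (by linarith)
    have h2 : μ (Metric.ball x₀ (s + ρ)) = μ B + μ (Metric.ball x₀ (s + ρ) \ B) := by
      rw [← measure_inter_add_diff (Metric.ball x₀ (s + ρ)) hmB,
        Set.inter_eq_right.2 hsub]
    have h3 : (μ (Metric.ball x₀ (s + ρ))).toReal
        = (μ B).toReal + (μ (Metric.ball x₀ (s + ρ) \ B)).toReal := by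
      rw [h2, ENNReal.toReal_add (measure_ne_top μ _) (measure_ne_top μ _)]
    refine h1.trans ?_
    rw [h3]
    have := hann ρ hρ.le s hs hs1
    linarith
  -- step 3 : decay of correlations
  have hHn : holderNorm α φ ≤ 1 + ρ ^ (-α) := holderNorm_cutoff_le x₀ hα hα1 hρ hρ1
  have hHn0 : 0 ≤ holderNorm α φ := holderNorm_cutoff_nonneg x₀ hα hα1 hρ hρ1
  have hdecφ := hdec n φ φ ⟨1, fun x => abs_le.2 ⟨by linarith [(hφ01 x).1], (hφ01 x).2⟩⟩
    ⟨ρ ^ (-α), Real.rpow_nonneg hρ.le _, cutoff_holder x₀ s ρ hα hα1 hρ hρ1⟩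
    ⟨1, fun x => abs_le.2 ⟨by linarith [(hφ01 x).1], (hφ01 x).2⟩⟩
    ⟨ρ ^ (-α), Real.rpow_nonneg hρ.le _, cutoff_holder x₀ s ρ hα hα1 hρ hρ1⟩
  have hexp : (0:ℝ) < Real.exp (-τ * n) := Real.exp_pos _
  have hIφ : 0 ≤ ∫ x, φ x ∂μ := integral_nonneg fun x => (hφ01 x).1
  have key : ∫ x, φ (T^[n] x) * φ x ∂μ ≤ (∫ x, φ x ∂μ) ^ 2
      + C * Real.exp (-τ * n) * (1 + ρ ^ (-α)) ^ 2 := by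
    have h1 : (∫ x, φ (T^[n] x) * φ x ∂μ) - (∫ x, φ x ∂μ) * ∫ x, φ x ∂μ
        ≤ C * Real.exp (-τ * n) * holderNorm α φ * holderNorm α φ :=
      (le_abs_self _).trans hdecφ
    have h2 : C * Real.exp (-τ * n) * holderNorm α φ * holderNorm α φ
        ≤ C * Real.exp (-τ * n) * (1 + ρ ^ (-α)) ^ 2 := by
      have hm : holderNorm α φ * holderNorm α φ ≤ (1 + ρ ^ (-α)) ^ 2 := by
        rw [sq]; exact mul_le_mul hHn hHn hHn0 (by positivity)
      calc C * Real.exp (-τ * n) * holderNorm α φ * holderNorm α φ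
          = (C * Real.exp (-τ * n)) * (holderNorm α φ * holderNorm α φ) := by ring
        _ ≤ (C * Real.exp (-τ * n)) * (1 + ρ ^ (-α)) ^ 2 :=
            mul_le_mul_of_nonneg_left hm (by positivity)
        _ = C * Real.exp (-τ * n) * (1 + ρ ^ (-α)) ^ 2 := by ring
    nlinarith
  have hfinal : (∫ x, φ x ∂μ) ^ 2 ≤ ((μ B).toReal + C' * ρ ^ β) ^ 2 := by
    nlinarith
  calc (μ (B ∩ (T^[n]) ⁻¹' B)).toReal ≤ ∫ x, φ (T^[n] x) * φ x ∂μ := step1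
    _ ≤ (∫ x, φ x ∂μ) ^ 2 + C * Real.exp (-τ * n) * (1 + ρ ^ (-α)) ^ 2 := key
    _ ≤ ((μ B).toReal + C' * ρ ^ β) ^ 2 + C * Real.exp (-τ * n) * (1 + ρ ^ (-α)) ^ 2 := by
        linarith

end corr

lemma second_moment_s3 {X : Type*} [MeasurableSpace X]
    (μ : Measure X) [IsProbabilityMeasure μ] (T : X → X) (hT : MeasurePreserving T μ μ)
    (B : Set X) (hmB : MeasurableSet B) (N : ℕ) :
    ((N : ℝ) * (μ B).toReal) ^ 2 * (μ {x | ∀ k < N, T^[k] x ∉ B}).toReal ≤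
      (∑ k ∈ Finset.range N, ∑ l ∈ Finset.range N,
        (μ ((T^[k]) ⁻¹' B ∩ (T^[l]) ⁻¹' B)).toReal) - ((N : ℝ) * (μ B).toReal) ^ 2 := by
  set a := (μ B).toReal with ha
  set c := (N : ℝ) * a with hc
  set A : ℕ → Set X := fun k => (T^[k]) ⁻¹' B with hA
  have hmA : ∀ k, MeasurableSet (A k) := fun k => (hT.measurable.iterate k) hmB
  set S : X → ℝ := fun x => ∑ k ∈ Finset.range N, (A k).indicator (fun _ => (1:ℝ)) x with hS
  have hmS : Measurable S := by
    apply Finset.measurable_sum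
    intro k _
    exact (measurable_const.indicator (hmA k))
  have hS01 : ∀ x, 0 ≤ S x ∧ S x ≤ N := by
    intro x
    constructor
    · exact Finset.sum_nonneg fun k _ => Set.indicator_nonneg (fun _ _ => zero_le_one) x
    · calc S x ≤ ∑ k ∈ Finset.range N, (1:ℝ) :=
          Finset.sum_le_sum fun k _ => Set.indicator_le_self' (fun _ _ => zero_le_one) x |>.trans
            (by by_cases h : x ∈ A k <;> simp [Set.indicator_of_mem, Set.indicator_of_notMem, h])
        _ = N := by simp
  have hintS : Integrable S μ := by
    apply integrable_finset_sum
    intro k _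
    exact (integrable_const (1:ℝ)).indicator (hmA k)
  have hintS2 : Integrable (fun x => S x ^ 2) μ := by
    refine Integrable.mono' (integrable_const ((N:ℝ)^2)) (hmS.pow_const 2).aestronglyMeasurable ?_
    filter_upwards with x
    rw [Real.norm_eq_abs, abs_le]
    constructor
    · nlinarith [(hS01 x).1, (hS01 x).2, sq_nonneg (S x)]
    · nlinarith [(hS01 x).1, (hS01 x).2]
  -- mean
  have hmean : ∫ x, S x ∂μ = c := by
    rw [hS, integral_finset_sum _ (fun k _ => (integrable_const (1:ℝ)).indicator (hmA k))]
    have : ∀ k, ∫ x, (A k).indicator (fun _ => (1:ℝ)) x ∂μ = a := by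
      intro k
      rw [integral_indicator_const (1:ℝ) (hmA k), smul_eq_mul, mul_one, hA]
      exact congrArg ENNReal.toReal ((hT.iterate k).measure_preimage hmB.nullMeasurableSet)
    rw [Finset.sum_congr rfl fun k _ => this k]
    simp [hc, mul_comm]
  -- second moment
  have hsq : ∫ x, S x ^ 2 ∂μ = ∑ k ∈ Finset.range N, ∑ l ∈ Finset.range N,
      (μ (A k ∩ A l)).toReal := by
    have hptw : ∀ x, S x ^ 2 = ∑ k ∈ Finset.range N, ∑ l ∈ Finset.range N,
        (A k ∩ A l).indicator (fun _ => (1:ℝ)) x := by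
      intro x
      rw [sq, hS, Finset.sum_mul_sum]
      refine Finset.sum_congr rfl fun k _ => Finset.sum_congr rfl fun l _ => ?_
      rw [← Set.inter_indicator_mul (fun _ => (1:ℝ)) (fun _ => (1:ℝ))]
      simp
    rw [show (fun x => S x ^ 2) = fun x => ∑ k ∈ Finset.range N, ∑ l ∈ Finset.range N,
        (A k ∩ A l).indicator (fun _ => (1:ℝ)) x from funext hptw]
    rw [integral_finset_sum _ (fun k _ => integrable_finset_sum _ (fun l _ =>
      (integrable_const (1:ℝ)).indicator ((hmA k).inter (hmA l))))]
    refine Finset.sum_congr rfl fun k _ => ?_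
    rw [integral_finset_sum _ (fun l _ => (integrable_const (1:ℝ)).indicator ((hmA k).inter (hmA l)))]
    refine Finset.sum_congr rfl fun l _ => ?_
    rw [integral_indicator_const (1:ℝ) ((hmA k).inter (hmA l)), smul_eq_mul, mul_one]; rfl
  -- variance identity
  have hvar : ∫ x, (S x - c) ^ 2 ∂μ = (∫ x, S x ^ 2 ∂μ) - c ^ 2 := by
    have hptw : (fun x => (S x - c) ^ 2) = fun x => S x ^ 2 - (2 * c) * S x + c ^ 2 :=
      funext fun x => by ring
    rw [hptw]
    have h1 : ∫ x, (S x ^ 2 - 2 * c * S x + c ^ 2) ∂μ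
        = (∫ x, (S x ^ 2 - 2 * c * S x) ∂μ) + ∫ _x, (c ^ 2 : ℝ) ∂μ :=
      integral_add (hintS2.sub (hintS.const_mul (2*c))) (integrable_const _)
    have h2 : ∫ x, (S x ^ 2 - 2 * c * S x) ∂μ
        = (∫ x, S x ^ 2 ∂μ) - ∫ x, 2 * c * S x ∂μ :=
      integral_sub hintS2 (hintS.const_mul (2*c))
    have h3 : ∫ x, 2 * c * S x ∂μ = 2 * c * ∫ x, S x ∂μ := MeasureTheory.integral_const_mul (2*c) S
    rw [h1, h2, h3, hmean, integral_const]
    simp [measure_univ]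
    ring
  -- E ⊆ {S = 0}
  set E := {x | ∀ k < N, T^[k] x ∉ B} with hE
  have hmE : MeasurableSet E := by
    have : E = ⋂ k ∈ Finset.range N, (A k)ᶜ := by
      ext x
      simp [hE, hA, Set.mem_iInter]
    rw [this]
    exact MeasurableSet.biInter (Finset.range N).countable_toSet fun k _ => (hmA k).compl
  have hSE : ∀ x ∈ E, S x = 0 := by
    intro x hx
    rw [hS]
    refine Finset.sum_eq_zero fun k hk => ?_
    exact Set.indicator_of_notMem (show x ∉ A k from hx k (Finset.mem_range.1 hk)) _
  have hleft : c ^ 2 * (μ E).toReal ≤ ∫ x, (S x - c) ^ 2 ∂μ := by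
    have heq : c ^ 2 * (μ E).toReal = ∫ x, E.indicator (fun _ => c ^ 2) x ∂μ := by
      rw [integral_indicator_const _ hmE, smul_eq_mul, Measure.real_def]
      ring
    rw [heq]
    refine integral_mono ((integrable_const _).indicator hmE)
      (by
        have hptw : (fun x => (S x - c) ^ 2) = fun x => S x ^ 2 - (2 * c) * S x + c ^ 2 :=
          funext fun x => by ring
        rw [hptw]
        exact (hintS2.sub (hintS.const_mul (2*c))).add (integrable_const _)) ?_
    intro x
    by_cases hx : x ∈ E
    · rw [Set.indicator_of_mem hx]
      show c ^ 2 ≤ (S x - c) ^ 2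
      rw [hSE x hx]
      simp
    · rw [Set.indicator_of_notMem hx]
      exact sq_nonneg _
  calc c ^ 2 * (μ E).toReal ≤ ∫ x, (S x - c) ^ 2 ∂μ := hleft
    _ = (∫ x, S x ^ 2 ∂μ) - c ^ 2 := hvar
    _ = (∑ k ∈ Finset.range N, ∑ l ∈ Finset.range N, (μ (A k ∩ A l)).toReal) - c ^ 2 := by
        rw [hsq]

lemma dist_sum_bound (d : ℕ → ℝ) (hd : ∀ n, 0 ≤ d n) {N k : ℕ} (hk : k < N) :
    ∑ l ∈ Finset.range N, d (Nat.dist k l) ≤ d 0 + 2 * ∑ n ∈ Finset.Ico 1 N, d n := by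
  have hsplit : ∑ l ∈ Finset.range N, d (Nat.dist k l)
      = (∑ l ∈ Finset.Ico 0 k, d (Nat.dist k l)) + (∑ l ∈ Finset.Ico k (k+1), d (Nat.dist k l))
        + ∑ l ∈ Finset.Ico (k+1) N, d (Nat.dist k l) := by
    rw [Finset.range_eq_Ico, ← Finset.sum_Ico_consecutive _ (Nat.zero_le (k+1)) hk,
      ← Finset.sum_Ico_consecutive _ (Nat.zero_le k) (Nat.le_succ k)]
  have hmid : ∑ l ∈ Finset.Ico k (k+1), d (Nat.dist k l) = d 0 := by
    rw [Finset.sum_Ico_eq_sum_range]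
    simp [Nat.dist_self]
  have hlow : ∑ l ∈ Finset.Ico 0 k, d (Nat.dist k l) ≤ ∑ n ∈ Finset.Ico 1 N, d n := by
    have h1 : ∑ l ∈ Finset.Ico 0 k, d (Nat.dist k l) = ∑ j ∈ Finset.range k, d (j + 1) := by
      rw [show Finset.Ico 0 k = Finset.range k by rw [Finset.range_eq_Ico]]
      rw [← Finset.sum_range_reflect (fun j => d (j + 1)) k]
      refine Finset.sum_congr rfl fun l hl => ?_
      have hl' : l < k := Finset.mem_range.1 hl
      congr 1
      rw [Nat.dist_eq_sub_of_le_right (by omega)]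
      omega
    rw [h1, show ∑ j ∈ Finset.range k, d (j + 1) = ∑ n ∈ Finset.Ico 1 (k+1), d n by
      rw [Finset.sum_Ico_eq_sum_range]; simp [add_comm]]
    exact Finset.sum_le_sum_of_subset_of_nonneg
      (Finset.Ico_subset_Ico le_rfl (by omega)) (fun i _ _ => hd i)
  have hhigh : ∑ l ∈ Finset.Ico (k+1) N, d (Nat.dist k l) ≤ ∑ n ∈ Finset.Ico 1 N, d n := by
    have h1 : ∑ l ∈ Finset.Ico (k+1) N, d (Nat.dist k l)
        = ∑ i ∈ Finset.range (N - (k+1)), d (i + 1) := by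
      rw [Finset.sum_Ico_eq_sum_range]
      refine Finset.sum_congr rfl fun i _ => ?_
      congr 1
      rw [Nat.dist_eq_sub_of_le (by omega)]
      omega
    rw [h1, show ∑ i ∈ Finset.range (N - (k+1)), d (i + 1)
        = ∑ n ∈ Finset.Ico 1 (N - (k+1) + 1), d n by
      rw [Finset.sum_Ico_eq_sum_range]; simp [add_comm]]
    exact Finset.sum_le_sum_of_subset_of_nonneg
      (Finset.Ico_subset_Ico le_rfl (by omega)) (fun i _ _ => hd i)
  linarith

lemma tail_sum_bound {τ aa e1 C2 : ℝ} (hτ : 0 < τ) (haa : 0 ≤ aa) (he1 : 0 ≤ e1) (hC2 : 0 ≤ C2)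
    (M N : ℕ) :
    ∑ n ∈ Finset.Ico 1 N, (if n ≤ M then aa else e1 + C2 * Real.exp (-τ * n))
      ≤ M * aa + N * e1 + C2 * Real.exp (-τ * M) / (1 - Real.exp (-τ)) := by
  set q := Real.exp (-τ) with hqdef
  have hq0 : 0 < q := Real.exp_pos _
  have hq1 : q < 1 := Real.exp_lt_one_iff.2 (by linarith)
  have h1q : 0 < 1 - q := by linarith
  have hqM : Real.exp (-τ * (M:ℕ)) = q ^ M := by
    rw [hqdef, ← Real.exp_nat_mul]; ring_nf
  have hlast : 0 ≤ C2 * Real.exp (-τ * M) / (1 - q) :=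
    div_nonneg (mul_nonneg hC2 (Real.exp_pos _).le) h1q.le
  rcases le_or_gt N (M + 1) with hNM | hNM
  · have hterm : ∀ n ∈ Finset.Ico 1 N,
        (if n ≤ M then aa else e1 + C2 * Real.exp (-τ * n)) = aa := by
      intro n hn
      have := Finset.mem_Ico.1 hn
      exact if_pos (by omega)
    rw [Finset.sum_congr rfl hterm, Finset.sum_const, Nat.card_Ico, nsmul_eq_mul]
    have h1 : ((N - 1 : ℕ) : ℝ) ≤ (M : ℝ) := by
      have : N - 1 ≤ M := by omega
      exact_mod_cast this
    nlinarith [mul_le_mul_of_nonneg_right h1 haa, mul_nonneg (Nat.cast_nonneg N) he1]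
  · have hsplit : ∑ n ∈ Finset.Ico 1 N, (if n ≤ M then aa else e1 + C2 * Real.exp (-τ * n))
        = (∑ n ∈ Finset.Ico 1 (M+1), (if n ≤ M then aa else e1 + C2 * Real.exp (-τ * n)))
          + ∑ n ∈ Finset.Ico (M+1) N, (if n ≤ M then aa else e1 + C2 * Real.exp (-τ * n)) := by
      rw [Finset.sum_Ico_consecutive _ (by omega) (by omega)]
    have hfirst : ∑ n ∈ Finset.Ico 1 (M+1), (if n ≤ M then aa else e1 + C2 * Real.exp (-τ * n))
        = M * aa := by
      have hterm : ∀ n ∈ Finset.Ico 1 (M+1),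
          (if n ≤ M then aa else e1 + C2 * Real.exp (-τ * n)) = aa := by
        intro n hn
        have := Finset.mem_Ico.1 hn
        exact if_pos (by omega)
      rw [Finset.sum_congr rfl hterm, Finset.sum_const, Nat.card_Ico, nsmul_eq_mul]
      norm_num
    have hsecond : ∑ n ∈ Finset.Ico (M+1) N, (if n ≤ M then aa else e1 + C2 * Real.exp (-τ * n))
        ≤ N * e1 + C2 * Real.exp (-τ * M) / (1 - q) := by
      have hterm : ∀ n ∈ Finset.Ico (M+1) N,
          (if n ≤ M then aa else e1 + C2 * Real.exp (-τ * n)) = e1 + C2 * q ^ n := by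
        intro n hn
        have := Finset.mem_Ico.1 hn
        rw [if_neg (by omega)]
        congr 2
        rw [hqdef, ← Real.exp_nat_mul]; ring_nf
      rw [Finset.sum_congr rfl hterm, Finset.sum_add_distrib]
      have h1 : ∑ _n ∈ Finset.Ico (M+1) N, e1 ≤ N * e1 := by
        rw [Finset.sum_const, Nat.card_Ico, nsmul_eq_mul]
        have : ((N - (M+1) : ℕ) : ℝ) ≤ (N : ℝ) := by
          have : N - (M+1) ≤ N := by omega
          exact_mod_cast this
        exact mul_le_mul_of_nonneg_right this he1
      have hgeo : ∑ n ∈ Finset.Ico (M+1) N, q ^ n ≤ q ^ M / (1 - q) := by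
        rw [Finset.sum_Ico_eq_sum_range]
        rw [Finset.sum_congr rfl fun i _ => pow_add q (M+1) i, ← Finset.mul_sum]
        have hsum : ∑ i ∈ Finset.range (N - (M+1)), q ^ i ≤ (1 - q)⁻¹ := by
          refine le_trans (Summable.sum_le_tsum _ (fun i _ => pow_nonneg hq0.le i)
            (summable_geometric_of_lt_one hq0.le hq1)) ?_
          rw [tsum_geometric_of_lt_one hq0.le hq1]
        calc q ^ (M+1) * ∑ i ∈ Finset.range (N - (M+1)), q ^ i
            ≤ q ^ (M+1) * (1 - q)⁻¹ :=
              mul_le_mul_of_nonneg_left hsum (pow_nonneg hq0.le _)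
          _ ≤ q ^ M * (1 - q)⁻¹ := by
              have := pow_le_pow_of_le_one hq0.le hq1.le (Nat.le_succ M)
              exact mul_le_mul_of_nonneg_right this (by positivity)
          _ = q ^ M / (1 - q) := (div_eq_mul_inv _ _).symm
      have h2 : ∑ n ∈ Finset.Ico (M+1) N, C2 * q ^ n ≤ C2 * Real.exp (-τ * M) / (1 - q) := by
        rw [← Finset.mul_sum, hqM]
        calc C2 * ∑ n ∈ Finset.Ico (M+1) N, q ^ n ≤ C2 * (q ^ M / (1 - q)) :=
            mul_le_mul_of_nonneg_left hgeo hC2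
          _ = C2 * q ^ M / (1 - q) := by ring
      linarith
    rw [hsplit, hfirst]
    linarith

section blk
variable {X : Type*} [MetricSpace X] [MeasurableSpace X] [BorelSpace X]

lemma block_bound (μ : Measure X) [IsProbabilityMeasure μ] (T : X → X)
    (hT : MeasurePreserving T μ μ)
    {α : ℝ} (hα : 0 < α) (hα1 : α ≤ 1) {C τ : ℝ} (hC : 0 < C) (hτ : 0 < τ)
    (hdec : ∀ (n : ℕ) (f g : X → ℝ),
      (∃ M, ∀ x, |f x| ≤ M) → (∃ K ≥ 0, ∀ x y, |f x - f y| ≤ K * dist x y ^ α) →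
      (∃ M, ∀ x, |g x| ≤ M) → (∃ K ≥ 0, ∀ x y, |g x - g y| ≤ K * dist x y ^ α) →
      |(∫ x, f (T^[n] x) * g x ∂μ) - (∫ x, f x ∂μ) * ∫ x, g x ∂μ| ≤
        C * Real.exp (-τ * n) * holderNorm α f * holderNorm α g)
    {C' β : ℝ} (hC' : 0 < C') (hβ : 0 < β) (x₀ : X)
    (hann : ∀ ρ : ℝ, 0 ≤ ρ → ∀ s : ℝ, 0 < s → s < 1 →
      (μ (Metric.ball x₀ (s + ρ) \ Metric.ball x₀ s)).toReal ≤ C' * ρ ^ β)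
    {s ρ : ℝ} (hs : 0 < s) (hs1 : s < 1) (hρ : 0 < ρ) (hρ1 : ρ ≤ 1) (M N : ℕ) :
    ((N : ℝ) * (μ (Metric.ball x₀ s)).toReal) ^ 2
        * (μ {x | ∀ k < N, T^[k] x ∉ Metric.ball x₀ s}).toReal ≤
      N * ((μ (Metric.ball x₀ s)).toReal
        + 2 * ((M : ℝ) * (μ (Metric.ball x₀ s)).toReal
          + N * (2 * (μ (Metric.ball x₀ s)).toReal * (C' * ρ ^ β) + (C' * ρ ^ β) ^ 2)
          + C * (1 + ρ ^ (-α)) ^ 2 * Real.exp (-τ * M) / (1 - Real.exp (-τ)))) := by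
  set B := Metric.ball x₀ s with hBdef
  set a := (μ B).toReal with ha
  have ha0 : 0 ≤ a := ENNReal.toReal_nonneg
  have hmB : MeasurableSet B := Metric.isOpen_ball.measurableSet
  set e1 : ℝ := 2 * a * (C' * ρ ^ β) + (C' * ρ ^ β) ^ 2 with he1def
  set C2 : ℝ := C * (1 + ρ ^ (-α)) ^ 2 with hC2def
  have he10 : 0 ≤ e1 := by
    have : 0 ≤ C' * ρ ^ β := by positivity
    nlinarith
  have hC20 : 0 ≤ C2 := by positivity
  set d : ℕ → ℝ := fun n => if n ≤ M then a else e1 + C2 * Real.exp (-τ * n) with hddef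
  have hd0 : ∀ n, 0 ≤ d n := by
    intro n
    rw [hddef]
    dsimp only
    split_ifs
    · exact ha0
    · have : 0 ≤ C2 * Real.exp (-τ * n) := mul_nonneg hC20 (Real.exp_pos _).le
      linarith
  -- per-pair bound
  have hpair : ∀ k l, k ∈ Finset.range N → l ∈ Finset.range N →
      (μ ((T^[k]) ⁻¹' B ∩ (T^[l]) ⁻¹' B)).toReal ≤ a ^ 2 + d (Nat.dist k l) := by
    have key : ∀ k l : ℕ, k ≤ l →
        (μ ((T^[k]) ⁻¹' B ∩ (T^[l]) ⁻¹' B)) = μ (B ∩ (T^[l - k]) ⁻¹' B) := by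
      intro k l hkl
      have hset : (T^[k]) ⁻¹' B ∩ (T^[l]) ⁻¹' B = (T^[k]) ⁻¹' (B ∩ (T^[l - k]) ⁻¹' B) := by
        ext x
        simp only [Set.mem_inter_iff, Set.mem_preimage]
        constructor
        · rintro ⟨h1, h2⟩
          refine ⟨h1, ?_⟩
          rw [← Function.iterate_add_apply]
          rwa [Nat.sub_add_cancel hkl]
        · rintro ⟨h1, h2⟩
          refine ⟨h1, ?_⟩
          rw [← Function.iterate_add_apply, Nat.sub_add_cancel hkl] at h2
          exact h2
      rw [hset, (hT.iterate k).measure_preimage (hmB.inter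
        ((hT.measurable.iterate (l-k)) hmB)).nullMeasurableSet]
    have hsingle : ∀ n : ℕ, (μ (B ∩ (T^[n]) ⁻¹' B)).toReal ≤ a ^ 2 + d n := by
      intro n
      rw [hddef]
      dsimp only
      split_ifs with hn
      · -- crude bound by a
        have h1 : μ (B ∩ (T^[n]) ⁻¹' B) ≤ μ B := measure_mono Set.inter_subset_left
        have h2 : (μ (B ∩ (T^[n]) ⁻¹' B)).toReal ≤ a :=
          ENNReal.toReal_mono (measure_ne_top μ _) h1
        nlinarith
      · have := corr_bound μ T hT hα hα1 hC hdec hC' hβ x₀ hann hs hs1 hρ hρ1 n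
        rw [← hBdef, ← ha] at this
        calc (μ (B ∩ (T^[n]) ⁻¹' B)).toReal
            ≤ (a + C' * ρ ^ β) ^ 2 + C * Real.exp (-τ * n) * (1 + ρ ^ (-α)) ^ 2 := this
          _ = a ^ 2 + (e1 + C2 * Real.exp (-τ * n)) := by rw [he1def, hC2def]; ring
    intro k l _ _
    rcases le_total k l with hkl | hkl
    · rw [key k l hkl]
      have : Nat.dist k l = l - k := Nat.dist_eq_sub_of_le hkl
      rw [this]
      exact hsingle _
    · rw [Set.inter_comm, key l k hkl]
      have : Nat.dist k l = k - l := Nat.dist_eq_sub_of_le_right hkl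
      rw [this]
      exact hsingle _
  -- combine
  have hsum : ∑ k ∈ Finset.range N, ∑ l ∈ Finset.range N,
      (μ ((T^[k]) ⁻¹' B ∩ (T^[l]) ⁻¹' B)).toReal
      ≤ (N:ℝ)^2 * a^2 + N * (a + 2 * ((M:ℝ) * a
          + N * (2 * a * (C' * ρ ^ β) + (C' * ρ ^ β) ^ 2)
          + C * (1 + ρ ^ (-α)) ^ 2 * Real.exp (-τ * M) / (1 - Real.exp (-τ)))) := by
    have h1 : ∑ k ∈ Finset.range N, ∑ l ∈ Finset.range N,
        (μ ((T^[k]) ⁻¹' B ∩ (T^[l]) ⁻¹' B)).toReal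
        ≤ ∑ k ∈ Finset.range N, ∑ l ∈ Finset.range N, (a ^ 2 + d (Nat.dist k l)) :=
      Finset.sum_le_sum fun k hk => Finset.sum_le_sum fun l hl => hpair k l hk hl
    have h2 : ∀ k ∈ Finset.range N, ∑ l ∈ Finset.range N, (a ^ 2 + d (Nat.dist k l))
        ≤ (N:ℝ) * a ^ 2 + (a + 2 * ((M:ℝ) * a
          + N * (2 * a * (C' * ρ ^ β) + (C' * ρ ^ β) ^ 2)
          + C * (1 + ρ ^ (-α)) ^ 2 * Real.exp (-τ * M) / (1 - Real.exp (-τ)))) := by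
      intro k hk
      rw [Finset.sum_add_distrib, Finset.sum_const, Finset.card_range, nsmul_eq_mul]
      have hdb := dist_sum_bound d hd0 (Finset.mem_range.1 hk)
      have hd00 : d 0 = a := by rw [hddef]; simp
      have htail : ∑ n ∈ Finset.Ico 1 N, d n ≤ M * a
          + N * (2 * a * (C' * ρ ^ β) + (C' * ρ ^ β) ^ 2)
          + C * (1 + ρ ^ (-α)) ^ 2 * Real.exp (-τ * M) / (1 - Real.exp (-τ)) := by
        have := tail_sum_bound hτ ha0 he10 hC20 M N
        rw [hddef]
        exact this
      rw [hd00] at hdb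
      linarith
    calc ∑ k ∈ Finset.range N, ∑ l ∈ Finset.range N,
          (μ ((T^[k]) ⁻¹' B ∩ (T^[l]) ⁻¹' B)).toReal
        ≤ ∑ k ∈ Finset.range N, ((N:ℝ) * a ^ 2 + (a + 2 * ((M:ℝ) * a
          + N * (2 * a * (C' * ρ ^ β) + (C' * ρ ^ β) ^ 2)
          + C * (1 + ρ ^ (-α)) ^ 2 * Real.exp (-τ * M) / (1 - Real.exp (-τ))))) :=
          h1.trans (Finset.sum_le_sum h2)
      _ = (N:ℝ) * ((N:ℝ) * a ^ 2 + (a + 2 * ((M:ℝ) * a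
          + N * (2 * a * (C' * ρ ^ β) + (C' * ρ ^ β) ^ 2)
          + C * (1 + ρ ^ (-α)) ^ 2 * Real.exp (-τ * M) / (1 - Real.exp (-τ))))) := by
          rw [Finset.sum_const, Finset.card_range, nsmul_eq_mul]
      _ = (N:ℝ)^2 * a^2 + N * (a + 2 * ((M:ℝ) * a
          + N * (2 * a * (C' * ρ ^ β) + (C' * ρ ^ β) ^ 2)
          + C * (1 + ρ ^ (-α)) ^ 2 * Real.exp (-τ * M) / (1 - Real.exp (-τ)))) := by ring
  have hsm := second_moment_s3 μ T hT B hmB N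
  rw [← ha] at hsm
  have : ((N:ℝ) * a) ^ 2 = (N:ℝ)^2 * a^2 := by ring
  rw [← he1def, ← hC2def] at hsum
  linarith
end blk

/-- **Theorem 3 (Hölder 1).** If `(X,T,μ)` has exponential decay of correlations for
`α`-Hölder functions, `μ` satisfies the annulus condition at `x₀`, and `(B_m)` is a
decreasing sequence of balls centred at `x₀` with `μ(B_m) ≥ m⁻¹ (log m)^{2+ε}` for all
large `m`, then the set of eventually always hitting points has full measure. -/
theorem stmt3 {X : Type*} [MetricSpace X] [MeasurableSpace X] [BorelSpace X]
    (μ : Measure X) [IsProbabilityMeasure μ] (T : X → X)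
    (hT : MeasurePreserving T μ μ)
    (α : ℝ) (hα : α ∈ Set.Ioc (0 : ℝ) 1)
    (C τ : ℝ) (hC : 0 < C) (hτ : 0 < τ)
    (hdec : ∀ (n : ℕ) (f g : X → ℝ),
      (∃ M, ∀ x, |f x| ≤ M) → (∃ K ≥ 0, ∀ x y, |f x - f y| ≤ K * dist x y ^ α) →
      (∃ M, ∀ x, |g x| ≤ M) → (∃ K ≥ 0, ∀ x y, |g x - g y| ≤ K * dist x y ^ α) →
      |(∫ x, f (T^[n] x) * g x ∂μ) - (∫ x, f x ∂μ) * ∫ x, g x ∂μ| ≤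
        C * Real.exp (-τ * n) * holderNorm α f * holderNorm α g)
    (C' β : ℝ) (hC' : 0 < C') (hβ : 0 < β) (x₀ : X)
    (hann : ∀ ρ : ℝ, 0 ≤ ρ → ∀ s : ℝ, 0 < s → s < 1 →
      (μ (Metric.ball x₀ (s + ρ) \ Metric.ball x₀ s)).toReal ≤ C' * ρ ^ β)
    (r : ℕ → ℝ) (hr : ∀ m, 0 < r m) (hr1 : ∀ m, r m < 1) (hrmono : Antitone r)
    (ε : ℝ) (hε : 0 < ε) (m₀ : ℕ)
    (hB : ∀ m : ℕ, m₀ ≤ m →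
      Real.log m ^ (2 + ε) / m ≤ (μ (Metric.ball x₀ (r m))).toReal) :
    μ {x | ∀ᶠ m : ℕ in atTop, ∃ k < m, T^[k] x ∈ Metric.ball x₀ (r m)} = 1 := by
  obtain ⟨hα0, hα1⟩ := hα
  have hq1 : Real.exp (-τ) < 1 := Real.exp_lt_one_iff.2 (by linarith)
  have h1q : 0 < 1 - Real.exp (-τ) := by linarith
  have hlog2 : 0 < Real.log 2 := Real.log_pos (by norm_num)
  have hlog2' : Real.log 2 ≤ 1 := by
    calc Real.log 2 ≤ 0.6931471808 := Real.log_two_lt_d9.le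
      _ ≤ 1 := by norm_num
  set A := Real.log 4 with hAdef
  have hA : A = 2 * Real.log 2 := by
    rw [hAdef, show (4:ℝ) = 2^2 by norm_num, Real.log_pow]; push_cast; ring
  have hA1 : (1:ℝ) ≤ A := by
    rw [hAdef, Real.le_log_iff_exp_le (by norm_num)]
    calc Real.exp 1 ≤ 2.7182818286 := Real.exp_one_lt_d9.le
      _ ≤ 4 := by norm_num
  have hA0 : (0:ℝ) < A := by linarith
  set γ := 2 * A * α / β with hγdef
  have hγ0 : 0 ≤ γ := by positivity
  set c₃ := (2*γ + 3*Real.log 2 + 1)/τ with hc₃def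
  have hc₃0 : 0 ≤ c₃ := by positivity
  set K₁ := (3 + 2*c₃) * 2 / (Real.log 2) ^ (2+ε) with hK₁def
  have hK₁0 : 0 ≤ K₁ := by positivity
  set K₂ := (4*C' + 2*C'^2) + 8*C/(1 - Real.exp (-τ)) with hK₂def
  have hK₂0 : 0 ≤ K₂ := by positivity
  set j₀ := max m₀ 1 with hj₀def
  set E : ℕ → Set X := fun j => {x | ∀ k < 2^j, T^[k] x ∉ Metric.ball x₀ (r (2^(j+1)))}
    with hEdef
  have hkey : ∀ j, j₀ ≤ j →
      (μ (E j)).toReal ≤ K₁ * ((j:ℝ)+1)^(-(1+ε)) + K₂ * (1/2:ℝ)^j := by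
    intro j hj
    have hj1 : 1 ≤ j := le_trans (le_max_right m₀ 1) hj
    have hjm₀ : m₀ ≤ j := le_trans (le_max_left m₀ 1) hj
    have hjR : (1:ℝ) ≤ (j:ℝ) := by exact_mod_cast hj1
    have hjR0 : (0:ℝ) ≤ (j:ℝ) := by linarith
    have hs : 0 < r (2^(j+1)) := hr _
    have hs1 : r (2^(j+1)) < 1 := hr1 _
    set a := (μ (Metric.ball x₀ (r (2^(j+1))))).toReal with hadef
    have ha0 : 0 ≤ a := ENNReal.toReal_nonneg
    have ha1 : a ≤ 1 := by
      rw [hadef]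
      have := ENNReal.toReal_mono (measure_ne_top μ Set.univ) (measure_mono (Set.subset_univ (Metric.ball x₀ (r (2^(j+1))))))
      simpa [measure_univ] using this
    -- exp helpers
    have hexp_pow : ∀ n : ℕ, ((2:ℝ))^n = Real.exp ((n:ℝ) * Real.log 2) := by
      intro n
      rw [Real.exp_nat_mul, Real.exp_log (by norm_num : (0:ℝ) < 2)]
    have hwexp : (1/2:ℝ)^j = Real.exp (-((j:ℝ) * Real.log 2)) := by
      rw [one_div, inv_pow, hexp_pow j, ← Real.exp_neg]
    -- lower bound for a
    have hm2 : m₀ ≤ 2^(j+1) :=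
      le_trans hjm₀ (le_of_lt (lt_of_lt_of_le (j.lt_two_pow_self)
        (Nat.pow_le_pow_right (by norm_num) (Nat.le_succ j))))
    have hBj := hB (2^(j+1)) hm2
    have hcast : ((2^(j+1) : ℕ) : ℝ) = (2:ℝ)^(j+1) := by push_cast; ring
    have hlogc : Real.log (((2^(j+1) : ℕ) : ℝ)) = ((j:ℝ)+1) * Real.log 2 := by
      rw [hcast, Real.log_pow]; push_cast; ring
    set L := ((j:ℝ)+1) * Real.log 2 with hLdef
    have hL4 : A ≤ L := by
      rw [hA, hLdef]
      linarith [mul_nonneg (show (0:ℝ) ≤ (j:ℝ)-1 by linarith) hlog2.le]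
    have hL1 : (1:ℝ) ≤ L ^ (2+ε) := Real.one_le_rpow (by linarith) (by linarith)
    rw [hlogc, hcast] at hBj
    rw [← hadef] at hBj
    -- hBj : L ^ (2+ε) / 2^(j+1) ≤ a
    set w' := Real.exp (-(A * j)) with hw'def
    have hw'0 : 0 < w' := Real.exp_pos _
    have hw'1 : w' ≤ 1 := Real.exp_le_one_iff.2 (neg_nonpos.2 (mul_nonneg hA0.le hjR0))
    have haLB : w' ≤ a := by
      have h1 : w' ≤ 1 / (2:ℝ)^(j+1) := by
        rw [hexp_pow (j+1), one_div, ← Real.exp_neg]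
        apply Real.exp_le_exp.2
        push_cast
        rw [hA]
        linarith [mul_nonneg (show (0:ℝ) ≤ (j:ℝ)-1 by linarith) hlog2.le]
      have h2 : 1 / (2:ℝ)^(j+1) ≤ L^(2+ε) / (2:ℝ)^(j+1) := by gcongr
      linarith
    have ha0' : 0 < a := lt_of_lt_of_le hw'0 haLB
    -- N * a lower bound
    have hcastj : ((2^j : ℕ) : ℝ) = (2:ℝ)^j := by push_cast; ring
    have hNa : Real.log 2 ^ (2+ε) * ((j:ℝ)+1)^(2+ε) / 2 ≤ ((2^j:ℕ):ℝ) * a := by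
      have h1 : (2:ℝ)^j * (L^(2+ε) / (2:ℝ)^(j+1)) = L^(2+ε)/2 := by
        rw [pow_succ]
        field_simp
      have h2 : (2:ℝ)^j * (L^(2+ε) / (2:ℝ)^(j+1)) ≤ (2:ℝ)^j * a :=
        mul_le_mul_of_nonneg_left hBj (by positivity)
      have h3 : L^(2+ε) = ((j:ℝ)+1)^(2+ε) * Real.log 2 ^(2+ε) := by
        rw [hLdef, Real.mul_rpow (by positivity) hlog2.le]
      rw [hcastj]
      calc Real.log 2 ^ (2+ε) * ((j:ℝ)+1)^(2+ε) / 2 = L^(2+ε)/2 := by rw [h3]; ring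
        _ = (2:ℝ)^j * (L^(2+ε) / (2:ℝ)^(j+1)) := h1.symm
        _ ≤ (2:ℝ)^j * a := h2
    -- choice of ρ and M
    set ρ := Real.exp (-(2*A/β) * j) with hρdef
    have hρ0 : 0 < ρ := Real.exp_pos _
    have hρ1 : ρ ≤ 1 := Real.exp_le_one_iff.2 (by
      have : 0 ≤ (2*A/β) * j := by positivity
      linarith)
    have hρβ : ρ ^ β = w' * w' := by
      have hβ0 : β ≠ 0 := ne_of_gt hβ
      rw [hρdef, ← Real.exp_mul, hw'def, ← Real.exp_add]
      congr 1
      field_simp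
      ring
    have hρα : ρ ^ (-α) = Real.exp (γ * j) := by
      have hβ0 : β ≠ 0 := ne_of_gt hβ
      rw [hρdef, ← Real.exp_mul, hγdef]
      congr 1
      field_simp
    set M := ⌈c₃ * (j:ℝ)⌉₊ with hMdef
    have hM : c₃ * (j:ℝ) ≤ M := Nat.le_ceil _
    have hM1 : (M:ℝ) ≤ c₃ * j + 1 := (Nat.ceil_lt_add_one (by positivity)).le
    -- block bound
    have hbb := block_bound μ T hT hα0 hα1 hC hτ hdec hC' hβ x₀ hann hs hs1 hρ0 hρ1 M (2^j)
    rw [← hadef] at hbb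
    set NN := ((2^j : ℕ) : ℝ) with hNNdef
    have hNN : NN = Real.exp ((j:ℝ) * Real.log 2) := by rw [hcastj]; exact hexp_pow j
    have hNN0 : (0:ℝ) < NN := by rw [hNN]; positivity
    have hNa0 : (0:ℝ) < NN * a := mul_pos hNN0 ha0'
    set w := (1/2:ℝ)^j with hwdef
    have hw0 : (0:ℝ) < w := by rw [hwdef]; positivity
    have hw1 : w ≤ 1 := by
      rw [hwexp]
      exact Real.exp_le_one_iff.2 (neg_nonpos.2 (mul_nonneg hjR0 hlog2.le))
    have hw'w : w' ≤ w := by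
      rw [hwexp, hw'def]
      apply Real.exp_le_exp.2
      linarith [mul_nonneg (show (0:ℝ) ≤ A - Real.log 2 by linarith) hjR0]
    -- Piece 1
    have hpow1 : ((j:ℝ)+1)^(2+ε) * ((j:ℝ)+1)^(-(1+ε)) = (j:ℝ)+1 := by
      rw [← Real.rpow_add (by positivity), show (2+ε) + -(1+ε) = (1:ℝ) by ring, Real.rpow_one]
    have hKL : K₁ * Real.log 2 ^ (2+ε) = (3 + 2*c₃) * 2 := by
      rw [hK₁def]
      field_simp
    have hP1 : NN * a * (1 + 2*(M:ℝ)) ≤ (NN*a)^2 * (K₁ * ((j:ℝ)+1)^(-(1+ε))) := by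
      have h1 : (1 + 2*(M:ℝ)) ≤ (3 + 2*c₃) * ((j:ℝ)+1) := by
        linarith [hM1, hjR0, hc₃0, mul_nonneg hc₃0 hjR0]
      have h2 : (3 + 2*c₃) * ((j:ℝ)+1) ≤ NN * a * (K₁ * ((j:ℝ)+1)^(-(1+ε))) := by
        have h3 : Real.log 2 ^ (2+ε) * ((j:ℝ)+1)^(2+ε) / 2 * (K₁ * ((j:ℝ)+1)^(-(1+ε)))
            = (3 + 2*c₃) * ((j:ℝ)+1) := by
          calc Real.log 2 ^ (2+ε) * ((j:ℝ)+1)^(2+ε) / 2 * (K₁ * ((j:ℝ)+1)^(-(1+ε)))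
              = (K₁ * Real.log 2 ^ (2+ε)) * (((j:ℝ)+1)^(2+ε) * ((j:ℝ)+1)^(-(1+ε))) / 2 := by
                ring
            _ = (3 + 2*c₃) * 2 * ((j:ℝ)+1) / 2 := by rw [hKL, hpow1]
            _ = (3 + 2*c₃) * ((j:ℝ)+1) := by ring
        rw [← h3]
        exact mul_le_mul_of_nonneg_right hNa (by positivity)
      calc NN * a * (1 + 2*(M:ℝ)) ≤ NN * a * ((3 + 2*c₃) * ((j:ℝ)+1)) :=
          mul_le_mul_of_nonneg_left h1 hNa0.le
        _ ≤ NN * a * (NN * a * (K₁ * ((j:ℝ)+1)^(-(1+ε)))) :=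
          mul_le_mul_of_nonneg_left h2 hNa0.le
        _ = (NN*a)^2 * (K₁ * ((j:ℝ)+1)^(-(1+ε))) := by ring
    -- Piece 2
    have hww : w * w ≤ w := by
      have := mul_le_mul_of_nonneg_left hw1 hw0.le
      linarith [this]
    have hw'w' : w' * w' ≤ a * w := mul_le_mul haLB hw'w hw'0.le ha0
    have hE1 : 2*a*(C'*ρ^β) + (C'*ρ^β)^2 ≤ a^2 * ((2*C' + C'^2) * w) := by
      have h1 : C' * ρ^β ≤ C' * (a*w) := by
        rw [hρβ]
        exact mul_le_mul_of_nonneg_left hw'w' hC'.le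
      have h2 : 0 ≤ C' * ρ^β := by positivity
      have h3 : (C'*(a*w))^2 = (C'^2 * a^2) * (w*w) := by ring
      have h4 : 2*a*(C'*ρ^β) ≤ 2*a*(C'*(a*w)) :=
        mul_le_mul_of_nonneg_left h1 (by positivity)
      have h5 : (C'*ρ^β)^2 ≤ (C'*(a*w))^2 := pow_le_pow_left₀ h2 h1 2
      have h6 : (C'*(a*w))^2 ≤ C'^2 * a^2 * w := by
        rw [h3]
        calc (C'^2 * a^2) * (w*w) ≤ (C'^2 * a^2) * w :=
            mul_le_mul_of_nonneg_left hww (by positivity)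
          _ = C'^2 * a^2 * w := by ring
      have h7 : 2*a*(C'*(a*w)) = 2*C' * a^2 * w := by ring
      have h8 : a^2*((2*C'+C'^2)*w) = 2*C'*a^2*w + C'^2*a^2*w := by ring
      linarith [h5.trans h6]
    have hP2 : 2*NN^2*(2*a*(C'*ρ^β) + (C'*ρ^β)^2) ≤ (NN*a)^2 * ((4*C'+2*C'^2) * w) := by
      calc 2*NN^2*(2*a*(C'*ρ^β) + (C'*ρ^β)^2) ≤ 2*NN^2*(a^2 * ((2*C' + C'^2) * w)) :=
          mul_le_mul_of_nonneg_left hE1 (by positivity)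
        _ = (NN*a)^2 * ((4*C'+2*C'^2) * w) := by ring
    -- Piece 3
    have hQ : Real.exp (-τ*(M:ℝ)) ≤ Real.exp (-((2*γ + 3*Real.log 2 + 1) * j)) := by
      apply Real.exp_le_exp.2
      have h1 : (2*γ + 3*Real.log 2 + 1) * (j:ℝ) = τ * (c₃ * j) := by
        rw [hc₃def]
        field_simp
      have h2 : τ * (c₃ * (j:ℝ)) ≤ τ * M := mul_le_mul_of_nonneg_left hM hτ.le
      rw [h1]
      linarith
    have hρα1 : (1:ℝ) ≤ ρ^(-α) := by
      rw [hρα]; exact Real.one_le_exp (by positivity)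
    have hC2b : C*(1+ρ^(-α))^2 ≤ 4*C*Real.exp (2*γ*(j:ℝ)) := by
      have h1 : 1 + ρ^(-α) ≤ 2*Real.exp (γ*(j:ℝ)) := by
        rw [hρα]
        have := Real.one_le_exp (show (0:ℝ) ≤ γ*(j:ℝ) by positivity)
        linarith
      have h2 : Real.exp (γ*(j:ℝ)) * Real.exp (γ*(j:ℝ)) = Real.exp (2*γ*(j:ℝ)) := by
        rw [← Real.exp_add]; congr 1; ring
      have h3 : (1+ρ^(-α))^2 ≤ 4 * Real.exp (2*γ*(j:ℝ)) := by
        calc (1+ρ^(-α))^2 ≤ (2*Real.exp (γ*(j:ℝ)))^2 :=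
            pow_le_pow_left₀ (by linarith) h1 2
          _ = 4 * (Real.exp (γ*(j:ℝ)) * Real.exp (γ*(j:ℝ))) := by ring
          _ = 4 * Real.exp (2*γ*(j:ℝ)) := by rw [h2]
      calc C*(1+ρ^(-α))^2 ≤ C*(4 * Real.exp (2*γ*(j:ℝ))) :=
          mul_le_mul_of_nonneg_left h3 hC.le
        _ = 4*C*Real.exp (2*γ*(j:ℝ)) := by ring
    have hNa2 : Real.exp (-(3*Real.log 2)*(j:ℝ)) ≤ NN * a^2 := by
      have h1 : Real.exp (-(3*Real.log 2)*(j:ℝ)) = NN * (w'*w') := by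
        rw [hNN, hw'def, ← Real.exp_add, ← Real.exp_add]
        congr 1
        rw [hA]
        ring
      rw [h1]
      have h2 : w'*w' ≤ a^2 := by
        have := mul_le_mul haLB haLB hw'0.le ha0
        have ha2 : a^2 = a*a := sq a
        linarith [this]
      exact mul_le_mul_of_nonneg_left h2 hNN0.le
    have hexpj : Real.exp (-(j:ℝ)) ≤ w := by
      rw [hwexp]
      exact Real.exp_le_exp.2 (by
        linarith [mul_nonneg (show (0:ℝ) ≤ 1 - Real.log 2 by linarith) hjR0])
    have hQ2 : Real.exp (2*γ*(j:ℝ)) * Real.exp (-((2*γ + 3*Real.log 2 + 1) * j))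
        = Real.exp (-(3*Real.log 2)*(j:ℝ)) * Real.exp (-(j:ℝ)) := by
      rw [← Real.exp_add, ← Real.exp_add]; congr 1; ring
    have hP3 : 2*NN*(C*(1+ρ^(-α))^2 * Real.exp (-τ*(M:ℝ)) / (1-Real.exp (-τ)))
        ≤ (NN*a)^2 * ((8*C/(1-Real.exp (-τ))) * w) := by
      have hnum : 2*NN*(C*(1+ρ^(-α))^2 * Real.exp (-τ*(M:ℝ)))
          ≤ (NN*a)^2 * (8*C*w) := by
        calc 2*NN*(C*(1+ρ^(-α))^2 * Real.exp (-τ*(M:ℝ)))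
            ≤ 2*NN*((4*C*Real.exp (2*γ*(j:ℝ))) * Real.exp (-((2*γ + 3*Real.log 2 + 1) * j))) := by
              apply mul_le_mul_of_nonneg_left ?_ (by positivity : (0:ℝ) ≤ 2*NN)
              exact mul_le_mul hC2b hQ (Real.exp_pos _).le (by positivity)
          _ = 8*C*NN*(Real.exp (2*γ*(j:ℝ)) * Real.exp (-((2*γ + 3*Real.log 2 + 1) * j))) := by
              ring
          _ = 8*C*NN*(Real.exp (-(3*Real.log 2)*(j:ℝ)) * Real.exp (-(j:ℝ))) := by rw [hQ2]
          _ ≤ 8*C*NN*((NN*a^2) * w) := by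
              apply mul_le_mul_of_nonneg_left ?_ (by positivity : (0:ℝ) ≤ 8*C*NN)
              exact mul_le_mul hNa2 hexpj (Real.exp_pos _).le (by positivity)
          _ = (NN*a)^2 * (8*C*w) := by ring
      calc 2*NN*(C*(1+ρ^(-α))^2 * Real.exp (-τ*(M:ℝ)) / (1-Real.exp (-τ)))
          = (2*NN*(C*(1+ρ^(-α))^2 * Real.exp (-τ*(M:ℝ)))) * (1-Real.exp (-τ))⁻¹ := by
            ring
        _ ≤ ((NN*a)^2 * (8*C*w)) * (1-Real.exp (-τ))⁻¹ :=
            mul_le_mul_of_nonneg_right hnum (by positivity)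
        _ = (NN*a)^2 * ((8*C/(1-Real.exp (-τ))) * w) := by ring
    -- Combine
    have hfin : NN * (a + 2*((M:ℝ)*a + NN*(2*a*(C'*ρ^β) + (C'*ρ^β)^2)
          + C*(1+ρ^(-α))^2*Real.exp (-τ*(M:ℝ))/(1-Real.exp (-τ))))
        ≤ (NN*a)^2 * (K₁*((j:ℝ)+1)^(-(1+ε)) + K₂*w) := by
      have hexpand : NN * (a + 2*((M:ℝ)*a + NN*(2*a*(C'*ρ^β) + (C'*ρ^β)^2)
            + C*(1+ρ^(-α))^2*Real.exp (-τ*(M:ℝ))/(1-Real.exp (-τ))))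
          = NN*a*(1+2*(M:ℝ)) + 2*NN^2*(2*a*(C'*ρ^β) + (C'*ρ^β)^2)
            + 2*NN*(C*(1+ρ^(-α))^2*Real.exp (-τ*(M:ℝ))/(1-Real.exp (-τ))) := by ring
      have hsplit : (NN*a)^2 * (K₁*((j:ℝ)+1)^(-(1+ε)) + K₂*w)
          = ((NN*a)^2 * (K₁ * ((j:ℝ)+1)^(-(1+ε))) + (NN*a)^2 * ((4*C'+2*C'^2) * w))
            + (NN*a)^2 * ((8*C/(1-Real.exp (-τ))) * w) := by
        rw [hK₂def]; ring
      rw [hexpand, hsplit]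
      exact add_le_add (add_le_add hP1 hP2) hP3
    have hEj : (μ (E j)).toReal
        = (μ {x | ∀ k < 2^j, T^[k] x ∉ Metric.ball x₀ (r (2^(j+1)))}).toReal := rfl
    rw [hEj]
    have hchain : (NN*a)^2 * (μ {x | ∀ k < 2^j, T^[k] x ∉ Metric.ball x₀ (r (2^(j+1)))}).toReal
        ≤ (NN*a)^2 * (K₁*((j:ℝ)+1)^(-(1+ε)) + K₂*w) := le_trans hbb hfin
    exact le_of_mul_le_mul_left hchain (pow_pos hNa0 2)

  -- Summability
  set F : ℕ → ℝ := fun j => (if j < j₀ then 1 else 0)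
      + (K₁ * ((j:ℝ)+1)^(-(1+ε)) + K₂ * (1/2:ℝ)^j) with hFdef
  have hFnn : ∀ j, 0 ≤ F j := by
    intro j
    rw [hFdef]
    dsimp only
    have h1 : (0:ℝ) ≤ K₁ * ((j:ℝ)+1)^(-(1+ε)) := by positivity
    have h2 : (0:ℝ) ≤ K₂ * (1/2:ℝ)^j := by positivity
    split_ifs <;> linarith
  have hFsum : Summable F := by
    apply Summable.add
    · exact summable_of_ne_finset_zero (s := Finset.range j₀)
        (fun b hb => if_neg (by simpa using hb))
    · apply Summable.add
      · apply Summable.mul_left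
        have h1 : Summable (fun n : ℕ => 1/(n:ℝ)^(1+ε)) :=
          Real.summable_one_div_nat_rpow.2 (by linarith)
        have h2 := (summable_nat_add_iff 1).2 h1
        refine h2.congr fun j => ?_
        push_cast
        rw [one_div, ← Real.rpow_neg (by positivity)]
      · exact (summable_geometric_of_lt_one (by norm_num) (by norm_num)).mul_left _
  have hμE : ∀ j, μ (E j) ≤ ENNReal.ofReal (F j) := by
    intro j
    by_cases hj : j < j₀
    · refine le_trans prob_le_one ?_
      rw [ENNReal.one_le_ofReal]
      have h1 : (0:ℝ) ≤ K₁ * ((j:ℝ)+1)^(-(1+ε)) := by positivity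
      have h2 : (0:ℝ) ≤ K₂ * (1/2:ℝ)^j := by positivity
      rw [hFdef]
      dsimp only
      rw [if_pos hj]
      linarith
    · push_neg at hj
      have h1 := hkey j hj
      calc μ (E j) = ENNReal.ofReal ((μ (E j)).toReal) :=
            (ENNReal.ofReal_toReal (measure_ne_top μ _)).symm
        _ ≤ ENNReal.ofReal (F j) := by
            apply ENNReal.ofReal_le_ofReal
            rw [hFdef]
            dsimp only
            rw [if_neg (not_lt.2 hj)]
            linarith
  have htsum : ∑' j, μ (E j) ≠ ⊤ := by
    have h1 : ∑' j, μ (E j) ≤ ∑' j, ENNReal.ofReal (F j) := ENNReal.tsum_le_tsum hμE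
    have h2 : ∑' j, ENNReal.ofReal (F j) = ENNReal.ofReal (∑' j, F j) :=
      (ENNReal.ofReal_tsum_of_nonneg hFnn hFsum).symm
    rw [h2] at h1
    exact ne_top_of_le_ne_top ENNReal.ofReal_ne_top h1
  have hlim0 : μ (limsup E atTop) = 0 := measure_limsup_atTop_eq_zero htsum
  -- inclusion of the complement in the limsup
  have hsub : {x | ∀ᶠ m : ℕ in atTop, ∃ k < m, T^[k] x ∈ Metric.ball x₀ (r m)}ᶜ
      ⊆ limsup E atTop := by
    intro x hx
    rw [Set.mem_compl_iff, Set.mem_setOf_eq, Filter.not_eventually] at hx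
    rw [mem_limsup_iff_frequently_mem]
    rw [Filter.frequently_atTop] at hx ⊢
    intro J
    obtain ⟨m, hm, hmprop⟩ := hx (2^(J+1))
    push_neg at hmprop
    have hm0 : m ≠ 0 := by
      have : 0 < 2^(J+1) := Nat.pow_pos (by norm_num)
      omega
    refine ⟨Nat.log 2 m, ?_, ?_⟩
    · have h1 : m < 2^(Nat.log 2 m + 1) := Nat.lt_pow_succ_log_self (by norm_num) m
      have h2 : (2:ℕ)^(J+1) < 2^(Nat.log 2 m + 1) := lt_of_le_of_lt hm h1
      have h3 : J + 1 < Nat.log 2 m + 1 + 1 := by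
        by_contra hcon
        push_neg at hcon
        have := Nat.pow_le_pow_right (show 1 ≤ 2 by norm_num) hcon
        omega
      omega
    · intro k hk
      have hkm : k < m := lt_of_lt_of_le hk (Nat.pow_log_le_self 2 hm0)
      have hrle : r (2^(Nat.log 2 m + 1)) ≤ r m :=
        hrmono (Nat.lt_pow_succ_log_self (by norm_num) m).le
      intro hball
      exact hmprop k hkm (Metric.ball_subset_ball hrle hball)
  have hc0 : μ ({x | ∀ᶠ m : ℕ in atTop, ∃ k < m, T^[k] x ∈ Metric.ball x₀ (r m)}ᶜ) = 0 :=
    measure_mono_null hsub hlim0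
  set S := {x | ∀ᶠ m : ℕ in atTop, ∃ k < m, T^[k] x ∈ Metric.ball x₀ (r m)} with hSdef
  have h1 : (1:ENNReal) ≤ μ S := by
    have h2 := measure_union_le (μ := μ) S Sᶜ
    rw [Set.union_compl_self, measure_univ, hc0, add_zero] at h2
    exact h2
  exact le_antisymm prob_le_one h1
end

section
/- Let (X,T,μ) be a system with exponential decay of correlations for functions of bounded variation against L¹, with constants C, τ > 0, and set C₁ = 6C/(1 − e^{−τ}). Then for every interval B ⊆ X and every m ≥ 1, the Birkhoff-type sum Z_m = Σ_{k=0}^{m−1} 1_B ∘ T^k satisfies ∫ Z_m² dμ − (∫ Z_m dμ)² ≤ C₁ m μ(B); consequently, if μ(B) > 0, then ∫ (Z_m/(m μ(B)) − 1)² dμ ≤ C₁/(m μ(B)). -/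
open MeasureTheory Filter
open scoped ENNReal

section Aux
open Classical

lemma mygeom {r : ℝ} (h0 : 0 ≤ r) (h1 : r < 1) (n : ℕ) :
    ∑ i ∈ Finset.range n, r ^ i ≤ (1 - r)⁻¹ := by
  have h : (0:ℝ) < 1 - r := by linarith
  have hrn : 0 ≤ r ^ n := pow_nonneg h0 n
  rw [geom_sum_eq (by linarith : r ≠ 1)]
  rw [div_le_iff_of_neg (by linarith : r - 1 < 0)]
  have h2 : (1-r)⁻¹ * (1-r) = 1 := inv_mul_cancel₀ h.ne'
  nlinarith

lemma inner_geom {r : ℝ} (h0 : 0 ≤ r) (h1 : r < 1) (m j : ℕ) :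
    ∑ k ∈ Finset.range m, r ^ (Nat.dist j k) ≤ 2 * (1 - r)⁻¹ := by
  rw [← Finset.sum_filter_add_sum_filter_not (Finset.range m) (fun k => k ≤ j)]
  have hA : ∑ k ∈ (Finset.range m).filter (fun k => k ≤ j), r ^ (Nat.dist j k)
      ≤ (1 - r)⁻¹ := by
    calc ∑ k ∈ (Finset.range m).filter (fun k => k ≤ j), r ^ (Nat.dist j k)
        ≤ ∑ k ∈ Finset.range (j+1), r ^ (Nat.dist j k) := by
          apply Finset.sum_le_sum_of_subset_of_nonneg
          · intro k hk
            simp only [Finset.mem_filter, Finset.mem_range] at *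
            omega
          · intro k _ _; positivity
      _ = ∑ k ∈ Finset.range (j+1), r ^ k := by
          have := Finset.sum_range_reflect (fun i => r ^ i) (j+1)
          rw [← this]
          apply Finset.sum_congr rfl
          intro k hk
          simp only [Finset.mem_range] at hk
          congr 1
          rw [Nat.dist_eq_sub_of_le_right (by omega : k ≤ j)]
          omega
      _ ≤ (1 - r)⁻¹ := mygeom h0 h1 _
  have hBsub : (Finset.range m).filter (fun k => ¬ k ≤ j) ⊆ Finset.Ico (j+1) m := by
    intro k hk
    simp only [Finset.mem_filter, Finset.mem_range, Finset.mem_Ico] at *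
    omega
  have hB : ∑ k ∈ (Finset.range m).filter (fun k => ¬ k ≤ j), r ^ (Nat.dist j k)
      ≤ (1 - r)⁻¹ := by
    calc ∑ k ∈ (Finset.range m).filter (fun k => ¬ k ≤ j), r ^ (Nat.dist j k)
        ≤ ∑ k ∈ Finset.Ico (j+1) m, r ^ (Nat.dist j k) := by
          apply Finset.sum_le_sum_of_subset_of_nonneg hBsub
          intro k _ _; positivity
      _ = ∑ i ∈ Finset.range (m - (j+1)), r ^ (Nat.dist j (j+1+i)) :=
          Finset.sum_Ico_eq_sum_range _ _ _
      _ ≤ ∑ i ∈ Finset.range (m - (j+1)), r ^ i := by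
          apply Finset.sum_le_sum
          intro i _
          have : Nat.dist j (j+1+i) = i + 1 := by
            rw [Nat.dist_eq_sub_of_le (by omega : j ≤ j+1+i)]; omega
          rw [this]
          exact pow_le_pow_of_le_one h0 h1.le (Nat.le_succ i)
      _ ≤ (1 - r)⁻¹ := mygeom h0 h1 _
  linarith


lemma changes_card_le {p : ℕ → Prop} (hconv : ∀ a b c, a ≤ b → b ≤ c → p a → p c → p b)
    (n : ℕ) : ((Finset.range n).filter (fun i => ¬ (p i ↔ p (i+1)))).card ≤ 2 := by
  classical
  set F := (Finset.range n).filter (fun i => ¬ (p i ↔ p (i+1))) with hF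
  have hsplit : F = F.filter (fun i => p (i+1)) ∪ F.filter (fun i => ¬ p (i+1)) := by
    rw [Finset.filter_union_filter_not_eq]
  have h1 : (F.filter (fun i => p (i+1))).card ≤ 1 := by
    rw [Finset.card_le_one]
    intro a ha b hb
    simp only [Finset.mem_filter, hF, Finset.mem_range] at ha hb
    by_contra hne
    rcases Nat.lt_or_ge a b with h | h
    · exact absurd (hconv (a+1) b (b+1) (by omega) (by omega) ha.2 hb.2)
        (fun h' => hb.1.2 (iff_of_true h' hb.2))
    · have h' : b < a := by omega
      exact absurd (hconv (b+1) a (a+1) (by omega) (by omega) hb.2 ha.2)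
        (fun h'' => ha.1.2 (iff_of_true h'' ha.2))
  have h2 : (F.filter (fun i => ¬ p (i+1))).card ≤ 1 := by
    rw [Finset.card_le_one]
    intro a ha b hb
    simp only [Finset.mem_filter, hF, Finset.mem_range] at ha hb
    -- here change with ¬ p(i+1) means p i holds
    have hpa : p a := by by_contra h; exact ha.1.2 (iff_of_false h ha.2)
    have hpb : p b := by by_contra h; exact hb.1.2 (iff_of_false h hb.2)
    by_contra hne
    rcases Nat.lt_or_ge a b with h | h
    · exact ha.2 (hconv a (a+1) b (by omega) (by omega) hpa hpb)
    · have h' : b < a := by omega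
      exact hb.2 (hconv b (b+1) a (by omega) (by omega) hpb hpa)
  calc F.card ≤ (F.filter (fun i => p (i+1)) ∪ F.filter (fun i => ¬ p (i+1))).card := by
        rw [← hsplit]
    _ ≤ (F.filter (fun i => p (i+1))).card + (F.filter (fun i => ¬ p (i+1))).card :=
        Finset.card_union_le _ _
    _ ≤ 2 := by omega

lemma indicator_eVariationOn_le (B : Set ℝ) (hB : B.OrdConnected) :
    eVariationOn (B.indicator (fun _ => (1:ℝ))) Set.univ ≤ 2 := by
  classical
  apply iSup_le
  rintro ⟨n, u, hu, -⟩
  set φ := B.indicator (fun _ => (1:ℝ)) with hφ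
  have hconv : ∀ a b c : ℕ, a ≤ b → b ≤ c → (u a ∈ B) → (u c ∈ B) → u b ∈ B := by
    intro a b c hab hbc ha hc
    exact hB.out ha hc ⟨hu hab, hu hbc⟩
  calc ∑ i ∈ Finset.range n, edist (φ (u (i+1))) (φ (u i))
      ≤ ∑ i ∈ Finset.range n, (if ¬ ((u i ∈ B) ↔ (u (i+1) ∈ B)) then 1 else 0) := by
        apply Finset.sum_le_sum
        intro i _
        by_cases h : (u i ∈ B) ↔ (u (i+1) ∈ B)
        · simp only [h, if_neg (not_not_intro h)]
          by_cases h2 : u (i+1) ∈ B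
          · simp [hφ, Set.indicator_of_mem h2, Set.indicator_of_mem (h.mpr h2)]
          · simp [hφ, Set.indicator_of_notMem h2, Set.indicator_of_notMem (fun hh => h2 (h.mp hh))]
        · rw [if_pos h]
          have : ∀ x, φ x = 0 ∨ φ x = 1 := by
            intro x; by_cases hx : x ∈ B
            · right; simp [hφ, Set.indicator_of_mem hx]
            · left; simp [hφ, Set.indicator_of_notMem hx]
          rcases this (u (i+1)) with h1 | h1 <;> rcases this (u i) with h2 | h2 <;>
            rw [h1, h2] <;> simp [edist_dist, Real.dist_eq] <;> norm_num
    _ = (((Finset.range n).filter (fun i => ¬ ((u i ∈ B) ↔ (u (i+1) ∈ B)))).card : ℝ≥0∞) := by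
        rw [Finset.sum_ite, Finset.sum_const, Finset.sum_const]
        simp
    _ ≤ 2 := by
        have := changes_card_le (p := fun i => u i ∈ B) hconv n
        exact_mod_cast Nat.cast_le.mpr this

end Aux

/-- The basic variance estimate: for an interval `B` and `Z_m = ∑_{k<m} 1_B ∘ T^k`,
`∫ Z_m² dμ - (∫ Z_m dμ)² ≤ C₁ m μ(B)` with `C₁ = 6C/(1 - e^{-τ})`; consequently, if
`μ(B) > 0`, then `∫ (Z_m/(m μ(B)) - 1)² dμ ≤ C₁/(m μ(B))`. -/
theorem stmt6
    (μ : Measure ℝ) [IsProbabilityMeasure μ] (T : ℝ → ℝ)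
    (hT : MeasurePreserving T μ μ)
    (C τ : ℝ) (hC : 0 < C) (hτ : 0 < τ)
    (hdec : ∀ (n : ℕ) (f g : ℝ → ℝ), Integrable f μ → BoundedVariationOn g Set.univ →
      |(∫ x, f (T^[n] x) * g x ∂μ) - (∫ x, f x ∂μ) * ∫ x, g x ∂μ| ≤
        C * Real.exp (-τ * n) * (∫ x, |f x| ∂μ) *
          ((⨆ x, |g x|) + (eVariationOn g Set.univ).toReal))
    (C₁ : ℝ) (hC₁ : C₁ = 6 * C / (1 - Real.exp (-τ)))
    (B : Set ℝ) (hB : B.OrdConnected) (m : ℕ) (hm : 1 ≤ m) :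
    (∫ x, (∑ k ∈ Finset.range m, B.indicator (fun _ => (1 : ℝ)) (T^[k] x)) ^ 2 ∂μ -
        (∫ x, ∑ k ∈ Finset.range m, B.indicator (fun _ => (1 : ℝ)) (T^[k] x) ∂μ) ^ 2 ≤
      C₁ * m * (μ B).toReal) ∧
    (0 < (μ B).toReal →
      ∫ x, ((∑ k ∈ Finset.range m, B.indicator (fun _ => (1 : ℝ)) (T^[k] x)) /
          ((m : ℝ) * (μ B).toReal) - 1) ^ 2 ∂μ ≤
        C₁ / ((m : ℝ) * (μ B).toReal)) := by
  classical
  set φ : ℝ → ℝ := B.indicator (fun _ => (1 : ℝ)) with hφdef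
  set r : ℝ := Real.exp (-τ) with hrdef
  have hr0 : 0 ≤ r := Real.exp_nonneg _
  have hr1 : r < 1 := Real.exp_lt_one_iff.mpr (by linarith)
  have hrgap : 0 < 1 - r := by linarith
  have hBmeas : MeasurableSet B := hB.measurableSet
  have hφm : Measurable φ := measurable_const.indicator hBmeas
  have hφnonneg : ∀ x, 0 ≤ φ x := fun x => Set.indicator_nonneg (fun _ _ => zero_le_one) x
  have hφle1 : ∀ x, φ x ≤ 1 := by
    intro x
    by_cases h : x ∈ B
    · simp [hφdef, Set.indicator_of_mem h]
    · simp [hφdef, Set.indicator_of_notMem h]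
  have hφabs : ∀ x, |φ x| ≤ 1 := fun x => abs_le.mpr ⟨by linarith [hφnonneg x], hφle1 x⟩
  have hTk : ∀ k : ℕ, MeasurePreserving (T^[k]) μ μ := fun k => hT.iterate k
  have hint_of_bdd : ∀ (g : ℝ → ℝ), Measurable g → (∀ x, |g x| ≤ 1) → Integrable g μ := by
    intro g hg hb
    exact (integrable_const (1 : ℝ)).mono' hg.aestronglyMeasurable (ae_of_all _ hb)
  have hφint : Integrable φ μ := hint_of_bdd φ hφm hφabs
  have hcomp : ∀ (k : ℕ) (g : ℝ → ℝ), AEStronglyMeasurable g μ →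
      ∫ x, g (T^[k] x) ∂μ = ∫ x, g x ∂μ := by
    intro k g hg
    conv_rhs => rw [← (hTk k).map_eq]
    rw [integral_map (hTk k).measurable.aemeasurable]
    rwa [(hTk k).map_eq]
  set b : ℝ := (μ B).toReal with hbdef
  have hb0 : 0 ≤ b := ENNReal.toReal_nonneg
  have hφI : ∫ x, φ x ∂μ = b := by
    rw [hφdef, hbdef]
    rw [integral_indicator_const (1 : ℝ) hBmeas]
    simp
    rfl
  have hφabsI : ∫ x, |φ x| ∂μ = b := by
    rw [← hφI]
    congr 1
    funext x
    exact abs_of_nonneg (hφnonneg x)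
  have hvar : eVariationOn φ Set.univ ≤ 2 := indicator_eVariationOn_le B hB
  have hBV : BoundedVariationOn φ Set.univ :=
    (lt_of_le_of_lt hvar (by norm_num : (2:ℝ≥0∞) < ⊤)).ne
  have hvarR : (eVariationOn φ Set.univ).toReal ≤ 2 := by
    have := ENNReal.toReal_mono (by norm_num) hvar
    simpa using this
  have hsup : (⨆ x, |φ x|) ≤ 1 := ciSup_le hφabs
  have hsupvar : (⨆ x, |φ x|) + (eVariationOn φ Set.univ).toReal ≤ 3 := by
    have h0 : 0 ≤ (eVariationOn φ Set.univ).toReal := ENNReal.toReal_nonneg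
    linarith
  -- the key decay estimate
  have hkey : ∀ n : ℕ, ∫ x, φ (T^[n] x) * φ x ∂μ ≤ b ^ 2 + 3 * C * b * r ^ n := by
    intro n
    have h := hdec n φ φ hφint hBV
    rw [hφI, hφabsI] at h
    have hexp : Real.exp (-τ * n) = r ^ n := by
      rw [hrdef, ← Real.exp_nat_mul]
      ring_nf
    rw [hexp] at h
    have h1 := (abs_le.mp h).2
    have hfac : 0 ≤ C * r ^ n * b := by positivity
    have h2 : C * r ^ n * b * ((⨆ x, |φ x|) + (eVariationOn φ Set.univ).toReal)
        ≤ C * r ^ n * b * 3 := mul_le_mul_of_nonneg_left hsupvar hfac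
    nlinarith [pow_nonneg hr0 n]
  -- products are integrable
  have hprodint : ∀ j k : ℕ, Integrable (fun x => φ (T^[j] x) * φ (T^[k] x)) μ := by
    intro j k
    apply hint_of_bdd
    · exact (hφm.comp (hTk j).measurable).mul (hφm.comp (hTk k).measurable)
    · intro x
      rw [abs_mul]
      calc |φ (T^[j] x)| * |φ (T^[k] x)| ≤ 1 * 1 :=
        mul_le_mul (hφabs _) (hφabs _) (abs_nonneg _) zero_le_one
      _ = 1 := by ring
  -- pairwise correlation bound
  have hpair : ∀ j k : ℕ, ∫ x, φ (T^[j] x) * φ (T^[k] x) ∂μ ≤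
      b ^ 2 + 3 * C * b * r ^ (Nat.dist j k) := by
    have haux : ∀ j k : ℕ, j ≤ k → ∫ x, φ (T^[j] x) * φ (T^[k] x) ∂μ ≤
        b ^ 2 + 3 * C * b * r ^ (k - j) := by
      intro j k hjk
      have heq : ∫ x, φ (T^[j] x) * φ (T^[k] x) ∂μ =
          ∫ x, φ (T^[k - j] x) * φ x ∂μ := by
        have hmeas : AEStronglyMeasurable (fun y => φ (T^[k - j] y) * φ y) μ :=
          ((hφm.comp (hTk (k - j)).measurable).mul hφm).aestronglyMeasurable
        rw [← hcomp j (fun y => φ (T^[k - j] y) * φ y) hmeas]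
        congr 1
        funext x
        rw [← Function.iterate_add_apply]
        rw [Nat.sub_add_cancel hjk]
        ring
      rw [heq]
      exact hkey (k - j)
    intro j k
    rcases le_total j k with h | h
    · rw [Nat.dist_eq_sub_of_le h]
      exact haux j k h
    · rw [Nat.dist_eq_sub_of_le_right h]
      have := haux k j h
      calc ∫ x, φ (T^[j] x) * φ (T^[k] x) ∂μ
          = ∫ x, φ (T^[k] x) * φ (T^[j] x) ∂μ := by congr 1; funext x; ring
        _ ≤ b ^ 2 + 3 * C * b * r ^ (j - k) := this
  -- integral of Z
  have hZk : ∀ k : ℕ, ∫ x, φ (T^[k] x) ∂μ = b := by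
    intro k
    rw [hcomp k φ hφm.aestronglyMeasurable, hφI]
  have hφTint : ∀ k : ℕ, Integrable (fun x => φ (T^[k] x)) μ := by
    intro k
    exact hint_of_bdd _ (hφm.comp (hTk k).measurable) (fun x => hφabs _)
  have hZI : ∫ x, (∑ k ∈ Finset.range m, φ (T^[k] x)) ∂μ = m * b := by
    rw [integral_finset_sum _ (fun k _ => hφTint k)]
    simp [hZk, Finset.sum_const]
  -- integral of Z²
  have hZsq_expand : ∀ x : ℝ, (∑ k ∈ Finset.range m, φ (T^[k] x)) ^ 2 =
      ∑ j ∈ Finset.range m, ∑ k ∈ Finset.range m, φ (T^[j] x) * φ (T^[k] x) := by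
    intro x
    rw [sq, Finset.sum_mul_sum]
  have hZsqI : ∫ x, (∑ k ∈ Finset.range m, φ (T^[k] x)) ^ 2 ∂μ =
      ∑ j ∈ Finset.range m, ∑ k ∈ Finset.range m, ∫ x, φ (T^[j] x) * φ (T^[k] x) ∂μ := by
    have : (fun x => (∑ k ∈ Finset.range m, φ (T^[k] x)) ^ 2) =
        fun x => ∑ j ∈ Finset.range m, ∑ k ∈ Finset.range m, φ (T^[j] x) * φ (T^[k] x) := by
      funext x; exact hZsq_expand x
    rw [this]
    rw [integral_finset_sum _ (fun j _ => integrable_finset_sum _ (fun k _ => hprodint j k))]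
    exact Finset.sum_congr rfl fun j _ => integral_finset_sum _ (fun k _ => hprodint j k)
  -- the double-sum bound
  have hdouble : ∑ j ∈ Finset.range m, ∑ k ∈ Finset.range m,
      ∫ x, φ (T^[j] x) * φ (T^[k] x) ∂μ ≤
      m ^ 2 * b ^ 2 + 3 * C * b * (m * (2 * (1 - r)⁻¹)) := by
    calc ∑ j ∈ Finset.range m, ∑ k ∈ Finset.range m, ∫ x, φ (T^[j] x) * φ (T^[k] x) ∂μ
        ≤ ∑ j ∈ Finset.range m, ∑ k ∈ Finset.range m,
            (b ^ 2 + 3 * C * b * r ^ (Nat.dist j k)) :=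
          Finset.sum_le_sum fun j _ => Finset.sum_le_sum fun k _ => hpair j k
      _ = m ^ 2 * b ^ 2 + 3 * C * b *
            (∑ j ∈ Finset.range m, ∑ k ∈ Finset.range m, r ^ (Nat.dist j k)) := by
          simp only [Finset.sum_add_distrib, Finset.sum_const, Finset.card_range,
            ← Finset.mul_sum]
          push_cast
          ring
      _ ≤ m ^ 2 * b ^ 2 + 3 * C * b * (m * (2 * (1 - r)⁻¹)) := by
          have hsum : ∑ j ∈ Finset.range m, ∑ k ∈ Finset.range m, r ^ (Nat.dist j k)
              ≤ m * (2 * (1 - r)⁻¹) := by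
            calc ∑ j ∈ Finset.range m, ∑ k ∈ Finset.range m, r ^ (Nat.dist j k)
                ≤ ∑ _j ∈ Finset.range m, 2 * (1 - r)⁻¹ :=
                  Finset.sum_le_sum fun j _ => inner_geom hr0 hr1 m j
              _ = m * (2 * (1 - r)⁻¹) := by
                  rw [Finset.sum_const, Finset.card_range, nsmul_eq_mul]
            
          have : 0 ≤ 3 * C * b := by positivity
          nlinarith
  -- first conclusion
  have main1 : ∫ x, (∑ k ∈ Finset.range m, φ (T^[k] x)) ^ 2 ∂μ -
      (∫ x, (∑ k ∈ Finset.range m, φ (T^[k] x)) ∂μ) ^ 2 ≤ C₁ * m * b := by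
    rw [hZsqI, hZI]
    have hC₁' : 3 * C * b * (m * (2 * (1 - r)⁻¹)) = C₁ * m * b := by
      rw [hC₁, hrdef]
      field_simp
      ring
    nlinarith [hdouble]
  constructor
  · exact main1
  · intro hbpos
    set a : ℝ := (m : ℝ) * b with hadef
    have ha : 0 < a := by
      have hm' : (0 : ℝ) < m := by exact_mod_cast hm
      positivity
    -- integrability of Z and Z²
    have hZint : Integrable (fun x => ∑ k ∈ Finset.range m, φ (T^[k] x)) μ :=
      integrable_finset_sum _ fun k _ => hφTint k
    have hZsqint : Integrable (fun x => (∑ k ∈ Finset.range m, φ (T^[k] x)) ^ 2) μ := by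
      have : (fun x => (∑ k ∈ Finset.range m, φ (T^[k] x)) ^ 2) =
          fun x => ∑ j ∈ Finset.range m, ∑ k ∈ Finset.range m, φ (T^[j] x) * φ (T^[k] x) := by
        funext x; exact hZsq_expand x
      rw [this]
      exact integrable_finset_sum _ fun j _ => integrable_finset_sum _ fun k _ => hprodint j k
    have hexpand : (fun x => ((∑ k ∈ Finset.range m, φ (T^[k] x)) / a - 1) ^ 2) =
        fun x => (a ^ 2)⁻¹ * (∑ k ∈ Finset.range m, φ (T^[k] x)) ^ 2 -
          (2 / a) * (∑ k ∈ Finset.range m, φ (T^[k] x)) + 1 := by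
      funext x
      field_simp
      ring
    have hIeq : ∫ x, ((∑ k ∈ Finset.range m, φ (T^[k] x)) / a - 1) ^ 2 ∂μ =
        (a ^ 2)⁻¹ * (∫ x, (∑ k ∈ Finset.range m, φ (T^[k] x)) ^ 2 ∂μ) -
          (2 / a) * (m * b) + 1 := by
      rw [hexpand]
      have hf1 : Integrable (fun x => (a ^ 2)⁻¹ * (∑ k ∈ Finset.range m, φ (T^[k] x)) ^ 2 -
          (2 / a) * (∑ k ∈ Finset.range m, φ (T^[k] x))) μ :=
        (hZsqint.const_mul _).sub (hZint.const_mul _)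
      have hf2 : Integrable (fun x => (a ^ 2)⁻¹ * (∑ k ∈ Finset.range m, φ (T^[k] x)) ^ 2) μ :=
        hZsqint.const_mul _
      have hf3 : Integrable (fun x => (2 / a) * (∑ k ∈ Finset.range m, φ (T^[k] x))) μ :=
        hZint.const_mul _
      rw [integral_add hf1 (integrable_const 1)]
      rw [integral_sub hf2 hf3]
      rw [integral_const_mul, integral_const_mul, hZI]
      simp
      exact Or.inl hadef
    rw [hIeq]
    have hZ2bound : ∫ x, (∑ k ∈ Finset.range m, φ (T^[k] x)) ^ 2 ∂μ ≤ C₁ * a + a ^ 2 := by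
      have h := main1
      rw [hZI] at h
      have h2 : C₁ * m * b = C₁ * a := by rw [hadef]; ring
      linarith
    have ha2 : (0:ℝ) < a ^ 2 := by positivity
    calc (a ^ 2)⁻¹ * (∫ x, (∑ k ∈ Finset.range m, φ (T^[k] x)) ^ 2 ∂μ) - (2 / a) * (m * b) + 1
        ≤ (a ^ 2)⁻¹ * (C₁ * a + a ^ 2) - (2 / a) * (m * b) + 1 := by
          have := mul_le_mul_of_nonneg_left hZ2bound (le_of_lt (inv_pos.mpr ha2))
          linarith
      _ = C₁ / a := by
          rw [← hadef]
          field_simp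
          ring
end

section
/- Let (X,T,μ) be a system with exponential decay of correlations for functions of bounded variation against L¹, with constants C, τ > 0. Let (B_m)_{m≥2} be a sequence of intervals in X and suppose there are constants c > 0 and ε > 0 such that μ(B_m) ≥ c m^{-1}(log m)^{1+ε} for all m ≥ 2. Then for μ-almost every x ∈ X, lim_{n→∞} Z_{2ⁿ}(x)/(2ⁿ μ(B_{2ⁿ})) = 1, where Z_m(x) = Σ_{k=0}^{m−1} 1_{B_m}(T^k x). In particular, for μ-almost every x, for all sufficiently large n there exists 0 ≤ k < 2ⁿ with T^k(x) ∈ B_{2ⁿ}. -/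
open MeasureTheory Filter
open scoped ENNReal NNReal ProbabilityTheory

/-- The indicator of an order-connected subset of `ℝ` has variation at most 2. -/
lemma aux_evar {s : Set ℝ} (hs : s.OrdConnected) :
    eVariationOn (s.indicator (1 : ℝ → ℝ)) Set.univ ≤ 2 := by
  classical
  apply iSup_le
  rintro ⟨n, u, hu, -⟩
  simp only
  set g := s.indicator (1 : ℝ → ℝ) with hg
  have hval : ∀ i : ℕ, edist (g (u (i + 1))) (g (u i)) ≤
      (if (u i ∈ s ↔ u (i + 1) ∈ s) then 0 else 1 : ℝ≥0∞) := by
    intro i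
    by_cases h : u i ∈ s ↔ u (i + 1) ∈ s
    · have hgg : g (u (i + 1)) = g (u i) := by
        by_cases hm : u i ∈ s
        · have hm1 : u (i + 1) ∈ s := h.mp hm
          simp [hg, hm, hm1]
        · have hm1 : u (i + 1) ∉ s := fun hh => hm (h.mpr hh)
          simp [hg, hm, hm1]
      simp [hgg, h]
    · have hv : ∀ y : ℝ, g y = 0 ∨ g y = 1 := fun y => by
        by_cases hm : y ∈ s <;> simp [hg, hm]
      have h1 : edist (g (u (i + 1))) (g (u i)) ≤ 1 := by
        rcases hv (u (i + 1)) with h1 | h1 <;> rcases hv (u i) with h2 | h2 <;>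
          simp [h1, h2, edist_dist, Real.dist_eq] <;> norm_num
      simpa [h] using h1
  set J := (Finset.range n).filter (fun i => ¬(u i ∈ s ↔ u (i + 1) ∈ s)) with hJ
  have hcard : J.card ≤ 2 := by
    have hsub : J ⊆ (J.filter (fun i => u i ∈ s)) ∪ (J.filter (fun i => u i ∉ s)) := by
      intro a ha
      by_cases h : u a ∈ s <;> simp [Finset.mem_union, Finset.mem_filter, ha, h]
    have hmemJ : ∀ a ∈ J, ¬(u a ∈ s ↔ u (a + 1) ∈ s) := by
      intro a ha
      exact (Finset.mem_filter.mp ha).2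
    have hX : (J.filter (fun i => u i ∈ s)).card ≤ 1 := by
      rw [Finset.card_le_one]
      intro a ha b hb
      rw [Finset.mem_filter] at ha hb
      have ha2 : u (a + 1) ∉ s := fun hh => hmemJ a ha.1 ⟨fun _ => hh, fun _ => ha.2⟩
      have hb2 : u (b + 1) ∉ s := fun hh => hmemJ b hb.1 ⟨fun _ => hh, fun _ => hb.2⟩
      by_contra hne
      rcases Nat.lt_or_ge a b with hab | hab
      · exact ha2 (hs.out ha.2 hb.2 ⟨hu (Nat.le_succ a), hu hab⟩)
      · have hba : b < a := lt_of_le_of_ne hab (fun h => hne h.symm)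
        exact hb2 (hs.out hb.2 ha.2 ⟨hu (Nat.le_succ b), hu hba⟩)
    have hE : (J.filter (fun i => u i ∉ s)).card ≤ 1 := by
      rw [Finset.card_le_one]
      intro a ha b hb
      rw [Finset.mem_filter] at ha hb
      have ha2 : u (a + 1) ∈ s := by
        by_contra hh; exact hmemJ a ha.1 ⟨fun h => absurd h ha.2, fun h => absurd h hh⟩
      have hb2 : u (b + 1) ∈ s := by
        by_contra hh; exact hmemJ b hb.1 ⟨fun h => absurd h hb.2, fun h => absurd h hh⟩
      by_contra hne
      rcases Nat.lt_or_ge a b with hab | hab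
      · exact hb.2 (hs.out ha2 hb2 ⟨hu hab, hu (Nat.le_succ b)⟩)
      · have hba : b < a := lt_of_le_of_ne hab (fun h => hne h.symm)
        exact ha.2 (hs.out hb2 ha2 ⟨hu hba, hu (Nat.le_succ a)⟩)
    calc J.card ≤ ((J.filter (fun i => u i ∈ s)) ∪ (J.filter (fun i => u i ∉ s))).card :=
          Finset.card_le_card hsub
      _ ≤ (J.filter (fun i => u i ∈ s)).card + (J.filter (fun i => u i ∉ s)).card :=
          Finset.card_union_le _ _
      _ ≤ 2 := by omega
  calc ∑ i ∈ Finset.range n, edist (g (u (i + 1))) (g (u i))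
      ≤ ∑ i ∈ Finset.range n, (if (u i ∈ s ↔ u (i + 1) ∈ s) then 0 else 1 : ℝ≥0∞) :=
        Finset.sum_le_sum fun i _ => hval i
    _ = (J.card : ℝ≥0∞) := by
        rw [Finset.sum_ite, Finset.sum_const_zero, Finset.sum_const, zero_add, nsmul_eq_mul,
          mul_one, hJ]
    _ ≤ 2 := by exact_mod_cast hcard

/-- Geometric-type bound for sums of `r ^ |j - k|`. -/
lemma aux_geom {r : ℝ} (h0 : 0 ≤ r) (h1 : r < 1) (j N : ℕ) :
    ∑ k ∈ Finset.range N, r ^ ((j - k) + (k - j)) ≤ 2 * (1 - r)⁻¹ := by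
  classical
  have hsummable : Summable (fun d : ℕ => r ^ d) := summable_geometric_of_lt_one h0 h1
  have htsum : ∑' d : ℕ, r ^ d = (1 - r)⁻¹ := tsum_geometric_of_lt_one h0 h1
  have key : ∀ (s : Finset ℕ) (φ : ℕ → ℕ),
      (∀ x ∈ s, ∀ y ∈ s, φ x = φ y → x = y) → ∑ k ∈ s, r ^ (φ k) ≤ (1 - r)⁻¹ := by
    intro s φ hφ
    have h1' : ∑ k ∈ s, r ^ (φ k) = ∑ d ∈ s.image φ, r ^ d := (Finset.sum_image hφ).symm
    rw [h1', ← htsum]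
    exact Summable.sum_le_tsum _ (fun i _ => pow_nonneg h0 i) hsummable
  rw [← Finset.sum_filter_add_sum_filter_not (Finset.range N) (fun k => k ≤ j)]
  have b1 : ∑ k ∈ (Finset.range N).filter (fun k => k ≤ j), r ^ ((j - k) + (k - j))
      ≤ (1 - r)⁻¹ := by
    apply key
    intro a ha b hb h
    simp only [Finset.mem_filter, Finset.mem_range] at ha hb
    omega
  have b2 : ∑ k ∈ (Finset.range N).filter (fun k => ¬k ≤ j), r ^ ((j - k) + (k - j))
      ≤ (1 - r)⁻¹ := by
    apply key
    intro a ha b hb h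
    simp only [Finset.mem_filter, Finset.mem_range] at ha hb
    omega
  linarith

/-- Along the subsequence `m_n = 2^n`, if `μ(B_m) ≥ c m⁻¹ (log m)^{1+ε}` then a.e.
`Z_{2^n}(x)/(2^n μ(B_{2^n})) → 1`; in particular, a.e. `x` eventually hits `B_{2^n}`
within time `2^n`. -/
theorem stmt7
    (μ : Measure ℝ) [IsProbabilityMeasure μ] (T : ℝ → ℝ)
    (hT : MeasurePreserving T μ μ)
    (C τ : ℝ) (hC : 0 < C) (hτ : 0 < τ)
    (hdec : ∀ (n : ℕ) (f g : ℝ → ℝ), Integrable f μ → BoundedVariationOn g Set.univ →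
      |(∫ x, f (T^[n] x) * g x ∂μ) - (∫ x, f x ∂μ) * ∫ x, g x ∂μ| ≤
        C * Real.exp (-τ * n) * (∫ x, |f x| ∂μ) *
          ((⨆ x, |g x|) + (eVariationOn g Set.univ).toReal))
    (B : ℕ → Set ℝ) (hBint : ∀ m, (B m).OrdConnected)
    (c ε : ℝ) (hc : 0 < c) (hε : 0 < ε)
    (hB : ∀ m : ℕ, 2 ≤ m → c * Real.log m ^ (1 + ε) / m ≤ (μ (B m)).toReal) :
    ∀ᵐ x ∂μ,
      Tendsto (fun n : ℕ =>
          ({k : ℕ | k < 2 ^ n ∧ T^[k] x ∈ B (2 ^ n)}.ncard : ℝ) /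
            ((2 ^ n : ℕ) * (μ (B (2 ^ n))).toReal))
        atTop (nhds 1) ∧
      ∀ᶠ n : ℕ in atTop, ∃ k < 2 ^ n, T^[k] x ∈ B (2 ^ n) := by
  classical
  set r := Real.exp (-τ) with hrdef
  have hr0 : 0 < r := Real.exp_pos _
  have hr1 : r < 1 := Real.exp_lt_one_iff.mpr (by linarith)
  have hmeas : ∀ m, MeasurableSet (B m) := fun m => (hBint m).measurableSet
  set ind : ℕ → ℝ → ℝ := fun m => (B m).indicator 1 with hinddef
  have hindm : ∀ m, Measurable (ind m) := fun m => measurable_const.indicator (hmeas m)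
  have hind01 : ∀ m x, ind m x = 0 ∨ ind m x = 1 := fun m x => by
    by_cases hm : x ∈ B m <;> simp [hinddef, hm]
  have hindnn : ∀ m x, 0 ≤ ind m x := fun m x => by
    rcases hind01 m x with h | h <;> rw [h] <;> norm_num
  set p : ℕ → ℝ := fun m => (μ (B m)).toReal with hpdef
  have hpnn : ∀ m, 0 ≤ p m := fun m => ENNReal.toReal_nonneg
  have hEind : ∀ m, ∫ x, ind m x ∂μ = p m := fun m => integral_indicator_one (hmeas m)
  have hintind : ∀ m, Integrable (ind m) μ := fun m =>
    (integrable_const (1 : ℝ)).indicator (hmeas m)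
  have hcomp : ∀ (g : ℝ → ℝ), Measurable g → ∀ k : ℕ,
      ∫ x, g (T^[k] x) ∂μ = ∫ x, g x ∂μ := by
    intro g hg k
    have h1 : μ.map (T^[k]) = μ := (hT.iterate k).map_eq
    rw [← integral_map (hT.iterate k).measurable.aemeasurable
      (by rw [h1]; exact hg.aestronglyMeasurable), h1]
  have hintcomp : ∀ m k, Integrable (fun x => ind m (T^[k] x)) μ := fun m k =>
    ((hT.iterate k).integrable_comp (hindm m).aestronglyMeasurable).mpr (hintind m)
  have hEcomp : ∀ m k, ∫ x, ind m (T^[k] x) ∂μ = p m := fun m k => by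
    rw [hcomp (ind m) (hindm m) k, hEind]
  set Z : ℕ → ℝ → ℝ := fun n x => ∑ k ∈ Finset.range (2 ^ n), ind (2 ^ n) (T^[k] x) with hZdef
  have hZmeas : ∀ n, Measurable (Z n) := fun n =>
    Finset.measurable_sum _ (fun k _ => (hindm _).comp (hT.iterate k).measurable)
  have hEZ : ∀ n, ∫ x, Z n x ∂μ = ((2 ^ n : ℕ) : ℝ) * p (2 ^ n) := by
    intro n
    rw [hZdef]
    simp only
    rw [integral_finset_sum _ (fun k _ => hintcomp _ k)]
    simp [hEcomp, Finset.sum_const, Finset.card_range, nsmul_eq_mul]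
  set ρ : ℕ → ℕ → ℝ := fun m d => ∫ x, ind m (T^[d] x) * ind m x ∂μ with hρdef
  -- Decay bound on correlations
  have hρbound : ∀ m d, |ρ m d - p m ^ 2| ≤ 3 * C * r ^ d * p m := by
    intro m d
    have hbv : BoundedVariationOn (ind m) Set.univ :=
      ne_top_of_le_ne_top (by norm_num) (aux_evar (hBint m))
    have h := hdec d (ind m) (ind m) (hintind m) hbv
    have habs : ∫ x, |ind m x| ∂μ = p m := by
      have : ∀ x, |ind m x| = ind m x := fun x => abs_of_nonneg (hindnn m x)
      simp_rw [this]; exact hEind m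
    have hsup : (⨆ x, |ind m x|) ≤ 1 := ciSup_le fun x => by
      rcases hind01 m x with h' | h' <;> rw [h'] <;> norm_num
    have hvar2 : (eVariationOn (ind m) Set.univ).toReal ≤ 2 := by
      have h2 := aux_evar (hBint m)
      calc (eVariationOn (ind m) Set.univ).toReal ≤ (2 : ℝ≥0∞).toReal :=
            ENNReal.toReal_mono (by norm_num) h2
        _ = 2 := by norm_num
    have hrd : Real.exp (-τ * (d : ℕ)) = r ^ d := by
      rw [hrdef, ← Real.exp_nat_mul, mul_comm]
    have hvarnn : 0 ≤ (eVariationOn (ind m) Set.univ).toReal := ENNReal.toReal_nonneg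
    have hsupnn : (0 : ℝ) ≤ ⨆ x, |ind m x| := le_ciSup_of_le ⟨1, by
        rintro y ⟨x, rfl⟩; exact (abs_le.mpr ⟨by linarith [hindnn m x], by
          rcases hind01 m x with h' | h' <;> rw [h'] <;> norm_num⟩).trans le_rfl⟩ 0 (abs_nonneg _)
    calc |ρ m d - p m ^ 2| = |(∫ x, ind m (T^[d] x) * ind m x ∂μ) -
          (∫ x, ind m x ∂μ) * ∫ x, ind m x ∂μ| := by rw [hρdef]; simp only; rw [hEind, sq]
      _ ≤ C * Real.exp (-τ * (d : ℕ)) * (∫ x, |ind m x| ∂μ) *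
          ((⨆ x, |ind m x|) + (eVariationOn (ind m) Set.univ).toReal) := h
      _ ≤ C * Real.exp (-τ * (d : ℕ)) * (∫ x, |ind m x| ∂μ) * 3 := by
          apply mul_le_mul_of_nonneg_left (by linarith)
          rw [habs]
          positivity
      _ = 3 * C * r ^ d * p m := by rw [habs, hrd]; ring
  -- cross terms
  have hcross : ∀ m j k : ℕ, ∫ x, ind m (T^[j] x) * ind m (T^[k] x) ∂μ
      = ρ m ((j - k) + (k - j)) := by
    have key : ∀ m j k : ℕ, k ≤ j → ∫ x, ind m (T^[j] x) * ind m (T^[k] x) ∂μ = ρ m (j - k) := by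
      intro m j k hkj
      have hfun : ∀ x, ind m (T^[j] x) * ind m (T^[k] x)
          = (fun y => ind m (T^[j - k] y) * ind m y) (T^[k] x) := by
        intro x
        simp only
        rw [← Function.iterate_add_apply, Nat.sub_add_cancel hkj]
      simp_rw [hfun]
      exact hcomp _ (((hindm m).comp (hT.iterate (j - k)).measurable).mul (hindm m)) k
    intro m j k
    rcases le_total k j with h | h
    · rw [key m j k h]
      congr 1
      omega
    · have hmc : ∀ x, ind m (T^[j] x) * ind m (T^[k] x) = ind m (T^[k] x) * ind m (T^[j] x) :=
        fun x => mul_comm _ _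
      simp_rw [hmc]
      rw [key m k j h]
      congr 1
      omega
  -- Z is in L²
  have hZ2 : ∀ n, MemLp (Z n) 2 μ := by
    intro n
    apply MemLp.of_bound (hZmeas n).aestronglyMeasurable ((2 ^ n : ℕ) : ℝ)
    apply ae_of_all
    intro x
    rw [hZdef]
    simp only [Real.norm_eq_abs]
    calc |∑ k ∈ Finset.range (2 ^ n), ind (2 ^ n) (T^[k] x)|
        ≤ ∑ k ∈ Finset.range (2 ^ n), |ind (2 ^ n) (T^[k] x)| := Finset.abs_sum_le_sum_abs _ _
      _ ≤ ∑ _k ∈ Finset.range (2 ^ n), (1 : ℝ) := Finset.sum_le_sum fun k _ => by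
          rcases hind01 (2 ^ n) (T^[k] x) with h' | h' <;> rw [h'] <;> norm_num
      _ = ((2 ^ n : ℕ) : ℝ) := by simp
  -- variance bound
  have hvar : ∀ n, ProbabilityTheory.variance (Z n) μ
      ≤ (6 * C / (1 - r)) * (((2 ^ n : ℕ) : ℝ) * p (2 ^ n)) := by
    intro n
    have hintprod : ∀ j k : ℕ, Integrable (fun x =>
        ind (2 ^ n) (T^[j] x) * ind (2 ^ n) (T^[k] x)) μ := by
      intro j k
      apply (hintcomp (2 ^ n) k).bdd_mul
        ((hindm _).comp (hT.iterate j).measurable).aestronglyMeasurable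
      refine ae_of_all _ (fun x => (?_ : ‖ind (2 ^ n) (T^[j] x)‖ ≤ 1))
      simp only [Real.norm_eq_abs]
      rcases hind01 (2 ^ n) (T^[j] x) with h' | h' <;> simp [h']
    have hEZ2 : ∫ x, (Z n x) ^ 2 ∂μ = ∑ j ∈ Finset.range (2 ^ n), ∑ k ∈ Finset.range (2 ^ n),
        ρ (2 ^ n) ((j - k) + (k - j)) := by
      have hZsq : ∀ x, (Z n x) ^ 2 = ∑ j ∈ Finset.range (2 ^ n), ∑ k ∈ Finset.range (2 ^ n),
          ind (2 ^ n) (T^[j] x) * ind (2 ^ n) (T^[k] x) := by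
        intro x
        rw [hZdef]
        simp only
        rw [sq, Finset.sum_mul_sum]
      simp_rw [hZsq]
      rw [integral_finset_sum _ (fun j _ => integrable_finset_sum _ (fun k _ => hintprod j k))]
      refine Finset.sum_congr rfl fun j _ => ?_
      rw [integral_finset_sum _ (fun k _ => hintprod j k)]
      exact Finset.sum_congr rfl fun k _ => hcross (2 ^ n) j k
    have hvardef := ProbabilityTheory.variance_eq_sub (hZ2 n)
    have hμZ2 : μ[(Z n) ^ 2] = ∫ x, (Z n x) ^ 2 ∂μ := by
      apply integral_congr_ae; apply ae_of_all; intro x; simp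
    have h4 : ProbabilityTheory.variance (Z n) μ = ∑ j ∈ Finset.range (2 ^ n),
        ∑ k ∈ Finset.range (2 ^ n), (ρ (2 ^ n) ((j - k) + (k - j)) - p (2 ^ n) ^ 2) := by
      rw [hvardef, hμZ2, hEZ2, hEZ]
      rw [Finset.sum_congr rfl fun j (_ : j ∈ Finset.range (2 ^ n)) => Finset.sum_sub_distrib
        (f := fun k => ρ (2 ^ n) ((j - k) + (k - j))) (g := fun _ => p (2 ^ n) ^ 2)]
      rw [Finset.sum_sub_distrib]
      simp [Finset.sum_const, Finset.card_range, mul_pow]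
      ring
    have h5 : ProbabilityTheory.variance (Z n) μ ≤ ∑ j ∈ Finset.range (2 ^ n),
        ∑ k ∈ Finset.range (2 ^ n), 3 * C * r ^ ((j - k) + (k - j)) * p (2 ^ n) := by
      rw [h4]
      refine Finset.sum_le_sum fun j _ => Finset.sum_le_sum fun k _ => ?_
      exact (le_abs_self _).trans (hρbound (2 ^ n) _)
    refine h5.trans ?_
    have h6 : ∀ j : ℕ, ∑ k ∈ Finset.range (2 ^ n), 3 * C * r ^ ((j - k) + (k - j)) * p (2 ^ n)
        ≤ 3 * C * p (2 ^ n) * (2 * (1 - r)⁻¹) := by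
      intro j
      have : ∑ k ∈ Finset.range (2 ^ n), 3 * C * r ^ ((j - k) + (k - j)) * p (2 ^ n)
          = 3 * C * p (2 ^ n) * ∑ k ∈ Finset.range (2 ^ n), r ^ ((j - k) + (k - j)) := by
        rw [Finset.mul_sum]
        exact Finset.sum_congr rfl fun k _ => by ring
      rw [this]
      apply mul_le_mul_of_nonneg_left (aux_geom hr0.le hr1 j (2 ^ n))
      have := hpnn (2 ^ n)
      positivity
    calc ∑ j ∈ Finset.range (2 ^ n), ∑ k ∈ Finset.range (2 ^ n),
          3 * C * r ^ ((j - k) + (k - j)) * p (2 ^ n)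
        ≤ ∑ _j ∈ Finset.range (2 ^ n), 3 * C * p (2 ^ n) * (2 * (1 - r)⁻¹) :=
          Finset.sum_le_sum fun j _ => h6 j
      _ = ((2 ^ n : ℕ) : ℝ) * (3 * C * p (2 ^ n) * (2 * (1 - r)⁻¹)) := by
          simp [Finset.sum_const, Finset.card_range]
      _ = (6 * C / (1 - r)) * (((2 ^ n : ℕ) : ℝ) * p (2 ^ n)) := by
          rw [div_eq_mul_inv]
          ring
  set K := 6 * C / (1 - r) with hKdef
  have hK0 : 0 < K := by
    rw [hKdef]
    apply div_pos (by linarith) (by linarith)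
  set P : ℕ → ℝ := fun n => ((2 ^ n : ℕ) : ℝ) * p (2 ^ n) with hPdef
  have h2le : ∀ n : ℕ, 1 ≤ n → (2 : ℕ) ≤ 2 ^ n := by
    intro n hn
    calc (2 : ℕ) = 2 ^ 1 := rfl
      _ ≤ 2 ^ n := Nat.pow_le_pow_right (by norm_num) hn
  have hPpos : ∀ n : ℕ, 1 ≤ n → 0 < P n := by
    intro n hn
    have h2n := h2le n hn
    have h1n : (1 : ℕ) < 2 ^ n := lt_of_lt_of_le one_lt_two h2n
    have hlog : 0 < Real.log ((2 ^ n : ℕ) : ℝ) :=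
      Real.log_pos (by exact_mod_cast h1n)
    have hp : 0 < p (2 ^ n) := by
      refine lt_of_lt_of_le ?_ (hB (2 ^ n) h2n)
      apply div_pos (mul_pos hc (Real.rpow_pos_of_pos hlog _)) (by positivity)
    exact mul_pos (by positivity) hp
  have hPlower : ∀ n : ℕ, 1 ≤ n →
      c * Real.log 2 ^ (1 + ε) * (n : ℝ) ^ (1 + ε) ≤ P n := by
    intro n hn
    have h2n := h2le n hn
    have hb := hB (2 ^ n) h2n
    have hcast : ((2 ^ n : ℕ) : ℝ) = (2 : ℝ) ^ n := by push_cast; ring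
    have hlog : Real.log ((2 ^ n : ℕ) : ℝ) = (n : ℝ) * Real.log 2 := by
      rw [hcast, Real.log_pow]
    have hrpow : ((n : ℝ) * Real.log 2) ^ (1 + ε)
        = (n : ℝ) ^ (1 + ε) * Real.log 2 ^ (1 + ε) :=
      Real.mul_rpow (Nat.cast_nonneg n) (Real.log_nonneg one_le_two)
    have h2pos : (0 : ℝ) < ((2 ^ n : ℕ) : ℝ) := by positivity
    calc c * Real.log 2 ^ (1 + ε) * (n : ℝ) ^ (1 + ε)
        = ((2 ^ n : ℕ) : ℝ) * (c * Real.log ((2 ^ n : ℕ) : ℝ) ^ (1 + ε) / ((2 ^ n : ℕ) : ℝ)) := by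
          rw [hlog, hrpow]
          field_simp
      _ ≤ ((2 ^ n : ℕ) : ℝ) * p (2 ^ n) := mul_le_mul_of_nonneg_left hb h2pos.le
  set D : ℕ → ℕ → Set ℝ := fun j n => {x | (1 / ((j : ℝ) + 1)) * P n ≤ |Z n x - P n|} with hDdef
  -- Chebyshev
  have hcheb : ∀ (j n : ℕ), 1 ≤ n →
      μ (D j n) ≤ ENNReal.ofReal (K * ((j : ℝ) + 1) ^ 2 / P n) := by
    intro j n hn
    have hδ : (0 : ℝ) < 1 / ((j : ℝ) + 1) := by positivity
    have hc' : 0 < (1 / ((j : ℝ) + 1)) * P n := mul_pos hδ (hPpos n hn)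
    have h := ProbabilityTheory.meas_ge_le_variance_div_sq (hZ2 n) hc'
    have hμZ : μ[Z n] = P n := hEZ n
    have hset : {ω | (1 / ((j : ℝ) + 1)) * P n ≤ |Z n ω - μ[Z n]|} = D j n := by
      rw [hμZ]
    rw [hset] at h
    refine h.trans (ENNReal.ofReal_le_ofReal ?_)
    have hvarn := hvar n
    have hPn := hPpos n hn
    have step1 : ProbabilityTheory.variance (Z n) μ / ((1 / ((j : ℝ) + 1)) * P n) ^ 2
        ≤ (K * P n) / ((1 / ((j : ℝ) + 1)) * P n) ^ 2 := by
      gcongr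
    have heq : (K * P n) / ((1 / ((j : ℝ) + 1)) * P n) ^ 2 = K * ((j : ℝ) + 1) ^ 2 / P n := by
      have hPne := hPn.ne'
      have hjne : ((j : ℝ) + 1) ≠ 0 := by positivity
      field_simp
    calc ProbabilityTheory.variance (Z n) μ / ((1 / ((j : ℝ) + 1)) * P n) ^ 2
        ≤ (K * P n) / ((1 / ((j : ℝ) + 1)) * P n) ^ 2 := step1
      _ = K * ((j : ℝ) + 1) ^ 2 / P n := heq
  -- Borel–Cantelli for each j
  set c2 := c * Real.log 2 ^ (1 + ε) with hc2def
  have hc2pos : 0 < c2 := by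
    rw [hc2def]
    exact mul_pos hc (Real.rpow_pos_of_pos (Real.log_pos one_lt_two) _)
  have hBC : ∀ j : ℕ, ∀ᵐ x ∂μ, ∀ᶠ n in atTop, x ∉ D j (n + 1) := by
    intro j
    apply ae_eventually_notMem
    have hsum0 : Summable (fun n : ℕ => (1 : ℝ) / ((n : ℝ)) ^ (1 + ε)) :=
      Real.summable_one_div_nat_rpow.mpr (by linarith)
    have hsum1 : Summable (fun n : ℕ => (1 : ℝ) / ((n : ℝ) + 1) ^ (1 + ε)) := by
      have := (summable_nat_add_iff 1).mpr hsum0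
      apply this.congr
      intro n
      push_cast
      ring_nf
    have hsum2 : Summable (fun n : ℕ =>
        (K * ((j : ℝ) + 1) ^ 2 / c2) * ((1 : ℝ) / ((n : ℝ) + 1) ^ (1 + ε))) :=
      hsum1.mul_left _
    have hterm : ∀ n : ℕ, μ (D j (n + 1)) ≤ ENNReal.ofReal
        ((K * ((j : ℝ) + 1) ^ 2 / c2) * ((1 : ℝ) / ((n : ℝ) + 1) ^ (1 + ε))) := by
      intro n
      refine (hcheb j (n + 1) (by omega)).trans (ENNReal.ofReal_le_ofReal ?_)
      have hlow : c2 * ((n : ℝ) + 1) ^ (1 + ε) ≤ P (n + 1) := by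
        have h := hPlower (n + 1) (by omega)
        push_cast at h
        exact h
      have hpow : (0 : ℝ) < ((n : ℝ) + 1) ^ (1 + ε) :=
        Real.rpow_pos_of_pos (by positivity) _
      have hnum : (0 : ℝ) ≤ K * ((j : ℝ) + 1) ^ 2 := by positivity
      calc K * ((j : ℝ) + 1) ^ 2 / P (n + 1)
          ≤ K * ((j : ℝ) + 1) ^ 2 / (c2 * ((n : ℝ) + 1) ^ (1 + ε)) := by
            apply div_le_div_of_nonneg_left hnum (by positivity) hlow
        _ = (K * ((j : ℝ) + 1) ^ 2 / c2) * ((1 : ℝ) / ((n : ℝ) + 1) ^ (1 + ε)) := by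
            field_simp
    have hnn : ∀ n : ℕ, (0 : ℝ) ≤
        (K * ((j : ℝ) + 1) ^ 2 / c2) * ((1 : ℝ) / ((n : ℝ) + 1) ^ (1 + ε)) := by
      intro n
      have : (0 : ℝ) < ((n : ℝ) + 1) ^ (1 + ε) := Real.rpow_pos_of_pos (by positivity) _
      positivity
    apply ne_top_of_le_ne_top (b := ENNReal.ofReal (∑' n : ℕ,
      (K * ((j : ℝ) + 1) ^ 2 / c2) * ((1 : ℝ) / ((n : ℝ) + 1) ^ (1 + ε)))) ENNReal.ofReal_ne_top
    calc ∑' n : ℕ, μ (D j (n + 1)) ≤ ∑' n : ℕ, ENNReal.ofReal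
          ((K * ((j : ℝ) + 1) ^ 2 / c2) * ((1 : ℝ) / ((n : ℝ) + 1) ^ (1 + ε))) :=
          ENNReal.tsum_le_tsum hterm
      _ = ENNReal.ofReal (∑' n : ℕ,
          (K * ((j : ℝ) + 1) ^ 2 / c2) * ((1 : ℝ) / ((n : ℝ) + 1) ^ (1 + ε))) :=
          (ENNReal.ofReal_tsum_of_nonneg hnn hsum2).symm
  have hae : ∀ᵐ x ∂μ, ∀ j : ℕ, ∀ᶠ n in atTop, x ∉ D j (n + 1) := ae_all_iff.mpr hBC
  filter_upwards [hae] with x hx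
  -- pointwise identity between ncard and Z
  have hRZ : ∀ n : ℕ, (({k : ℕ | k < 2 ^ n ∧ T^[k] x ∈ B (2 ^ n)}.ncard : ℝ)) = Z n x := by
    intro n
    have hset : {k : ℕ | k < 2 ^ n ∧ T^[k] x ∈ B (2 ^ n)}
        = ↑((Finset.range (2 ^ n)).filter (fun k => T^[k] x ∈ B (2 ^ n))) := by
      ext k
      simp [Finset.mem_filter, Finset.mem_range]
    rw [hset, Set.ncard_coe_finset, Finset.card_filter]
    push_cast
    refine Finset.sum_congr rfl fun k _ => ?_
    simp [hinddef, Set.indicator_apply]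
  have hev : ∀ j : ℕ, ∀ᶠ n in atTop, |Z n x / P n - 1| < 1 / ((j : ℝ) + 1) ∧ 1 ≤ n := by
    intro j
    obtain ⟨a, ha⟩ := eventually_atTop.mp (hx j)
    rw [eventually_atTop]
    refine ⟨a + 1, fun n hn => ⟨?_, by omega⟩⟩
    have h1 : x ∉ D j n := by
      have h2 := ha (n - 1) (by omega)
      rwa [Nat.sub_add_cancel (by omega : 1 ≤ n)] at h2
    have hP := hPpos n (by omega)
    simp only [hDdef, Set.mem_setOf_eq, not_le] at h1
    rw [abs_sub_comm, show (1 : ℝ) - Z n x / P n = (P n - Z n x) / P n by field_simp, abs_div,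
      abs_of_pos hP, div_lt_iff₀ hP]
    rw [abs_sub_comm] at h1
    linarith
  have hPform : ∀ n : ℕ, P n = ((2 ^ n : ℕ) : ℝ) * (μ (B (2 ^ n))).toReal := fun n => rfl
  constructor
  · rw [Metric.tendsto_nhds]
    intro ε' hε'
    obtain ⟨j, hj⟩ := exists_nat_one_div_lt hε'
    filter_upwards [hev j] with n hn
    rw [Real.dist_eq, hRZ n]
    calc |Z n x / (((2 ^ n : ℕ) : ℝ) * (μ (B (2 ^ n))).toReal) - 1| = |Z n x / P n - 1| := by
          rw [hPform]
      _ < 1 / ((j : ℝ) + 1) := hn.1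
      _ < ε' := by exact_mod_cast hj
  · filter_upwards [hev 1] with n hn
    by_contra hcon
    push_neg at hcon
    have hempty : {k : ℕ | k < 2 ^ n ∧ T^[k] x ∈ B (2 ^ n)} = ∅ := by
      ext k
      simp only [Set.mem_setOf_eq, Set.mem_empty_iff_false, iff_false, not_and]
      exact fun h1 h2 => hcon k h1 h2
    have hZ0 : Z n x = 0 := by
      rw [← hRZ n, hempty]
      simp
    have := hn.1
    rw [hZ0, zero_div] at this
    rw [abs_sub_comm] at this
    simp only [sub_zero, abs_one] at this
    have : (1 : ℝ) < 1 / ((1 : ℕ) + 1) := this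
    norm_num at this
end
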